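/- arXiv:1211.6035 — 10 statements merged into one kernel-verified Lean document; each statement's English description precedes it below -/
import Mathlib

section
/- Let m, n be natural numbers and let L be a subset of [m] × [n]. If L is not of the form P × Q for some P ⊆ [m] and Q ⊆ [n], then the sum of (-1)^{|K|} over all subsets K of [m] × [n] with L ⊆ K such that both coordinate projections of K are surjective onto [m] and [n] equals 0. -/
open Finset

/-- If `L ⊆ [m] × [n]` is not a product `P × Q`, then the sum of `(-1)^|K|`
over all `K` with `L ⊆ K ⊆ [m] × [n]` having both coordinate projections surjective
vanishes. -/
theorem maze_sum_vanishes_of_not_product (m n : ℕ) (L : Finset (Fin m × Fin n))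
    (hL : ¬ ∃ (P : Finset (Fin m)) (Q : Finset (Fin n)), L = P ×ˢ Q) :
    ∑ K ∈ (univ : Finset (Fin m × Fin n)).powerset.filter
        (fun K => L ⊆ K ∧ (∀ i : Fin m, ∃ j : Fin n, (i, j) ∈ K) ∧
          (∀ j : Fin n, ∃ i : Fin m, (i, j) ∈ K)),
      (-1 : ℤ) ^ K.card = 0 := by
  classical
  -- Find a "missing corner": (a,b), (c,d) ∈ L but (a,d) ∉ L.
  obtain ⟨a, b, c, d, hab, hcd, had⟩ :
      ∃ a b c d, (a, b) ∈ L ∧ (c, d) ∈ L ∧ (a, d) ∉ L := by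
    by_contra h
    push_neg at h
    exact hL ⟨L.image Prod.fst, L.image Prod.snd, by
      ext ⟨x, y⟩
      simp only [mem_product, mem_image]
      constructor
      · intro hxy
        exact ⟨⟨(x, y), hxy, rfl⟩, ⟨(x, y), hxy, rfl⟩⟩
      · rintro ⟨⟨⟨x', y'⟩, hx', rfl⟩, ⟨⟨x'', y''⟩, hy', rfl⟩⟩
        exact h _ _ _ _ hx' hy'⟩
  -- sign-reversing involution: toggle the point (a,d).
  set p : Fin m × Fin n := (a, d) with hp
  refine Finset.sum_involution
    (fun K _ => if p ∈ K then K.erase p else insert p K) ?_ ?_ ?_ ?_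
  · intro K hK
    by_cases hpK : p ∈ K
    · simp only [hpK, if_true, Finset.card_erase_of_mem hpK]
      have hpos : 0 < K.card := Finset.card_pos.2 ⟨p, hpK⟩
      rw [← Nat.succ_pred_eq_of_pos hpos]
      simp [pow_succ]
    · simp only [hpK, if_false, Finset.card_insert_of_notMem hpK]
      ring
  · intro K hK _
    by_cases hpK : p ∈ K
    · simp only [hpK, if_true]
      intro h
      exact (h ▸ Finset.notMem_erase p K) hpK
    · simp only [hpK, if_false]
      intro h
      exact absurd (h ▸ Finset.mem_insert_self p K) hpK
  · intro K hK
    simp only [Finset.mem_filter, Finset.mem_powerset] at hK ⊢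
    obtain ⟨-, hLK, hrow, hcol⟩ := hK
    have hbd : b ≠ d := fun h => had (by rw [hp]; exact h ▸ hab)
    have hca : c ≠ a := fun h => had (by rw [hp]; exact h ▸ hcd)
    by_cases hpK : p ∈ K
    · simp only [hpK, if_true]
      refine ⟨Finset.subset_univ _, ?_, ?_, ?_⟩
      · intro x hx
        exact Finset.mem_erase.2 ⟨fun h => had (h ▸ hx), hLK hx⟩
      · intro i
        by_cases hi : i = a
        · exact ⟨b, Finset.mem_erase.2 ⟨by simp [hp, Prod.ext_iff, hbd]
            , hLK (hi ▸ hab)⟩⟩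
        · obtain ⟨j, hj⟩ := hrow i
          exact ⟨j, Finset.mem_erase.2 ⟨by simp [hp, Prod.ext_iff, hi], hj⟩⟩
      · intro j
        by_cases hj : j = d
        · exact ⟨c, Finset.mem_erase.2 ⟨by simp [hp, Prod.ext_iff, hca]
            , hLK (hj ▸ hcd)⟩⟩
        · obtain ⟨i, hi⟩ := hcol j
          exact ⟨i, Finset.mem_erase.2 ⟨by simp [hp, Prod.ext_iff, hj], hi⟩⟩
    · simp only [hpK, if_false]
      refine ⟨Finset.subset_univ _, hLK.trans (Finset.subset_insert _ _), ?_, ?_⟩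
      · intro i
        obtain ⟨j, hj⟩ := hrow i
        exact ⟨j, Finset.mem_insert_of_mem hj⟩
      · intro j
        obtain ⟨i, hi⟩ := hcol j
        exact ⟨i, Finset.mem_insert_of_mem hi⟩
  · intro K hK
    by_cases hpK : p ∈ K
    · simp [hpK, Finset.insert_erase hpK]
    · simp [hpK, Finset.erase_insert hpK]
end

section
/- Let m, n, p, q be natural numbers with p ≤ m and q ≤ n, and with p, q ≥ 1 (or p = m = 0 and q = n = 0 handled trivially). Then the sum of (-1)^{|K|} over all subsets K of [m] × [n] containing [p] × [q], whose projections onto [m] and onto [n] are both surjective, equals (-1)^{m+n+p+q+pq}. -/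
open Finset

open scoped Classical in
noncomputable def mazeFam (m n p q : ℕ) : Finset (Finset (ℕ × ℕ)) :=
  (Finset.range m ×ˢ Finset.range n).powerset.filter
    (fun K => Finset.range p ×ˢ Finset.range q ⊆ K ∧
      (∀ i < m, ∃ j, (i, j) ∈ K) ∧ (∀ j < n, ∃ i, (i, j) ∈ K))

noncomputable def mazeT (m n p q : ℕ) : ℤ := ∑ K ∈ mazeFam m n p q, (-1) ^ K.card

lemma mem_mazeFam {m n p q : ℕ} {K : Finset (ℕ × ℕ)} :
    K ∈ mazeFam m n p q ↔ K ⊆ Finset.range m ×ˢ Finset.range n ∧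
      Finset.range p ×ˢ Finset.range q ⊆ K ∧
      (∀ i < m, ∃ j, (i, j) ∈ K) ∧ (∀ j < n, ∃ i, (i, j) ∈ K) := by
  simp [mazeFam, and_assoc]

lemma mazeT_base (p q : ℕ) (hp : 1 ≤ p) (hq : 1 ≤ q) :
    mazeT p q p q = (-1) ^ (p * q) := by
  have hfam : mazeFam p q p q = {Finset.range p ×ˢ Finset.range q} := by
    ext K
    simp only [mem_mazeFam, mem_singleton]
    constructor
    · rintro ⟨h1, h2, -, -⟩
      exact le_antisymm h1 h2
    · rintro rfl
      refine ⟨le_rfl, le_rfl, fun i hi => ⟨0, ?_⟩, fun j hj => ⟨0, ?_⟩⟩ <;>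
        simp only [Finset.mem_product, Finset.mem_range] <;> omega
  rw [mazeT, hfam, sum_singleton, card_product, card_range, card_range]

lemma mazeT_step_m (m n p q : ℕ) (hp : 1 ≤ p) (hq : 1 ≤ q) (hpm : p ≤ m) (hqn : q ≤ n) :
    mazeT (m + 1) n p q = - mazeT m n p q := by
  classical
  have hzero : ((0:ℕ), (0:ℕ)) ∈ Finset.range p ×ˢ Finset.range q := by
    simp only [Finset.mem_product, Finset.mem_range]; omega
  have hm0R : ((m:ℕ), (0:ℕ)) ∉ Finset.range p ×ˢ Finset.range q := by
    simp only [Finset.mem_product, Finset.mem_range]; omega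
  have hne00 : ((0:ℕ), (0:ℕ)) ≠ ((m:ℕ), (0:ℕ)) := by
    simp only [ne_eq, Prod.mk.injEq]; omega
  set P : Finset (ℕ × ℕ) → Prop :=
    fun K => K.filter (fun c => c.1 = m) = {((m:ℕ), (0:ℕ))} with hPdef
  have hsplit := Finset.sum_filter_add_sum_filter_not (mazeFam (m+1) n p q) P
    (fun K => (-1:ℤ) ^ K.card)
  have key : ∀ k : ℕ, (-1:ℤ) ^ (k + 1) + (-1:ℤ) ^ k = 0 := by
    intro k; rw [pow_succ]; ring
  -- Part A : the non-special part sums to zero via a sign-reversing involution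
  have partA : ∑ K ∈ (mazeFam (m+1) n p q).filter (fun K => ¬ P K), (-1:ℤ) ^ K.card = 0 := by
    have g_mem : ∀ K ∈ (mazeFam (m+1) n p q).filter (fun K => ¬ P K),
        (if ((m:ℕ),(0:ℕ)) ∈ K then K.erase (m,0) else insert (m,0) K) ∈
          (mazeFam (m+1) n p q).filter (fun K => ¬ P K) := by
      intro K hK
      obtain ⟨hmemK, hnP⟩ := mem_filter.mp hK
      obtain ⟨hsub, hR, hrow, hcol⟩ := mem_mazeFam.mp hmemK
      by_cases hm : ((m:ℕ),(0:ℕ)) ∈ K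
      · rw [if_pos hm]
        -- there is another cell in row m
        have hother : ∃ c ∈ K.filter (fun c => c.1 = m), c ≠ ((m:ℕ),(0:ℕ)) := by
          by_contra h
          push_neg at h
          exact hnP (Finset.eq_singleton_iff_unique_mem.mpr
            ⟨Finset.mem_filter.mpr ⟨hm, rfl⟩, h⟩)
        obtain ⟨c, hcf, hcne⟩ := hother
        obtain ⟨hcK, hc1⟩ := Finset.mem_filter.mp hcf
        have hc2 : c.2 ≠ 0 := by
          intro h; exact hcne (Prod.ext hc1 h)
        refine Finset.mem_filter.mpr ⟨mem_mazeFam.mpr ⟨?_, ?_, ?_, ?_⟩, ?_⟩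
        · exact (Finset.erase_subset _ _).trans hsub
        · intro d hd
          exact Finset.mem_erase.mpr ⟨fun h => hm0R (h ▸ hd), hR hd⟩
        · intro i hi
          rcases eq_or_ne i m with rfl | hne
          · refine ⟨c.2, Finset.mem_erase.mpr ⟨?_, ?_⟩⟩
            · intro h
              exact hc2 (by simpa using congrArg Prod.snd h)
            · have : c = (i, c.2) := Prod.ext hc1 rfl
              exact this ▸ hcK
          · obtain ⟨j, hj⟩ := hrow i hi
            refine ⟨j, Finset.mem_erase.mpr ⟨?_, hj⟩⟩
            intro h
            exact hne (by simpa using congrArg Prod.fst h)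
        · intro j hj
          obtain ⟨i, hi⟩ := hcol j hj
          by_cases hij : ((i:ℕ), j) = ((m:ℕ), (0:ℕ))
          · have hj0 : j = 0 := by simpa using congrArg Prod.snd hij
            subst hj0
            exact ⟨0, Finset.mem_erase.mpr ⟨hne00, hR hzero⟩⟩
          · exact ⟨i, Finset.mem_erase.mpr ⟨hij, hi⟩⟩
        · intro hPe
          have : ((m:ℕ),(0:ℕ)) ∈ (K.erase ((m:ℕ),(0:ℕ))).filter (fun c => c.1 = m) := by
            rw [hPe]; exact Finset.mem_singleton_self _
          exact Finset.notMem_erase _ _ (Finset.mem_filter.mp this).1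
      · rw [if_neg hm]
        refine Finset.mem_filter.mpr ⟨mem_mazeFam.mpr ⟨?_, ?_, ?_, ?_⟩, ?_⟩
        · refine Finset.insert_subset ?_ hsub
          simp only [Finset.mem_product, Finset.mem_range]; omega
        · exact hR.trans (Finset.subset_insert _ _)
        · intro i hi
          rcases eq_or_ne i m with rfl | hne
          · exact ⟨0, Finset.mem_insert_self _ _⟩
          · obtain ⟨j, hj⟩ := hrow i hi
            exact ⟨j, Finset.mem_insert_of_mem hj⟩
        · intro j hj
          obtain ⟨i, hi⟩ := hcol j hj
          exact ⟨i, Finset.mem_insert_of_mem hi⟩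
        · obtain ⟨j, hjK⟩ := hrow m (Nat.lt_succ_self m)
          have hjne : j ≠ 0 := by rintro rfl; exact hm hjK
          intro hPi
          have : ((m:ℕ), j) ∈ (insert ((m:ℕ),(0:ℕ)) K).filter (fun c => c.1 = m) :=
            Finset.mem_filter.mpr ⟨Finset.mem_insert_of_mem hjK, rfl⟩
          rw [hPi, Finset.mem_singleton] at this
          exact hjne (by simpa using congrArg Prod.snd this)
    refine Finset.sum_involution
      (fun K _ => if ((m:ℕ),(0:ℕ)) ∈ K then K.erase (m,0) else insert (m,0) K)
      ?_ ?_ g_mem ?_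
    · intro K hK
      by_cases hm : ((m:ℕ),(0:ℕ)) ∈ K
      · rw [if_pos hm]
        have := Finset.card_erase_add_one hm
        rw [← this]
        exact key _
      · rw [if_neg hm, Finset.card_insert_of_notMem hm]
        rw [add_comm ((-1:ℤ)^K.card)]
        exact key _
    · intro K hK _
      by_cases hm : ((m:ℕ),(0:ℕ)) ∈ K
      · rw [if_pos hm]
        intro h
        have := Finset.notMem_erase ((m:ℕ),(0:ℕ)) K
        rw [h] at this
        exact this hm
      · rw [if_neg hm]
        intro h
        exact hm (h ▸ Finset.mem_insert_self _ _)
    · intro K hK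
      by_cases hm : ((m:ℕ),(0:ℕ)) ∈ K
      · simp only [if_pos hm, if_neg (Finset.notMem_erase ((m:ℕ),(0:ℕ)) K)]
        exact Finset.insert_erase hm
      · simp only [if_neg hm, if_pos (Finset.mem_insert_self ((m:ℕ),(0:ℕ)) K)]
        exact Finset.erase_insert hm
  -- Part B : the special part is in bijection with the smaller family
  have partB : ∑ K ∈ (mazeFam (m+1) n p q).filter P, (-1:ℤ) ^ K.card
      = ∑ K ∈ mazeFam m n p q, (-((-1:ℤ) ^ K.card)) := by
    refine Finset.sum_nbij' (fun K => K.erase ((m:ℕ),(0:ℕ)))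
      (fun K => insert ((m:ℕ),(0:ℕ)) K) ?_ ?_ ?_ ?_ ?_
    · intro K hK
      obtain ⟨hmemK, hP⟩ := Finset.mem_filter.mp hK
      obtain ⟨hsub, hR, hrow, hcol⟩ := mem_mazeFam.mp hmemK
      have hm : ((m:ℕ),(0:ℕ)) ∈ K := by
        have : ((m:ℕ),(0:ℕ)) ∈ K.filter (fun c => c.1 = m) := by
          rw [hP]; exact Finset.mem_singleton_self _
        exact (Finset.mem_filter.mp this).1
      refine mem_mazeFam.mpr ⟨?_, ?_, ?_, ?_⟩
      · intro c hc
        obtain ⟨hcne, hcK⟩ := Finset.mem_erase.mp hc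
        have hc' := hsub hcK
        simp only [Finset.mem_product, Finset.mem_range] at hc' ⊢
        refine ⟨?_, hc'.2⟩
        rcases Nat.lt_succ_iff_lt_or_eq.mp hc'.1 with h | h
        · exact h
        · exfalso
          have : c ∈ K.filter (fun c => c.1 = m) := Finset.mem_filter.mpr ⟨hcK, h⟩
          rw [hP, Finset.mem_singleton] at this
          exact hcne this
      · intro d hd
        exact Finset.mem_erase.mpr ⟨fun h => hm0R (h ▸ hd), hR hd⟩
      · intro i hi
        obtain ⟨j, hj⟩ := hrow i (Nat.lt_succ_of_lt hi)
        refine ⟨j, Finset.mem_erase.mpr ⟨?_, hj⟩⟩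
        intro h
        exact absurd (by simpa using congrArg Prod.fst h) (Nat.ne_of_lt hi)
      · intro j hj
        obtain ⟨i, hi⟩ := hcol j hj
        by_cases hij : ((i:ℕ), j) = ((m:ℕ), (0:ℕ))
        · have hj0 : j = 0 := by simpa using congrArg Prod.snd hij
          subst hj0
          exact ⟨0, Finset.mem_erase.mpr ⟨hne00, hR hzero⟩⟩
        · exact ⟨i, Finset.mem_erase.mpr ⟨hij, hi⟩⟩
    · intro K hK
      obtain ⟨hsub, hR, hrow, hcol⟩ := mem_mazeFam.mp hK
      have hm : ((m:ℕ),(0:ℕ)) ∉ K := by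
        intro h
        have := hsub h
        simp only [Finset.mem_product, Finset.mem_range] at this
        omega
      refine Finset.mem_filter.mpr ⟨mem_mazeFam.mpr ⟨?_, ?_, ?_, ?_⟩, ?_⟩
      · refine Finset.insert_subset ?_ (hsub.trans ?_)
        · simp only [Finset.mem_product, Finset.mem_range]; omega
        · intro c hc
          simp only [Finset.mem_product, Finset.mem_range] at hc ⊢
          omega
      · exact hR.trans (Finset.subset_insert _ _)
      · intro i hi
        rcases Nat.lt_succ_iff_lt_or_eq.mp hi with h | rfl
        · obtain ⟨j, hj⟩ := hrow i h
          exact ⟨j, Finset.mem_insert_of_mem hj⟩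
        · exact ⟨0, Finset.mem_insert_self _ _⟩
      · intro j hj
        obtain ⟨i, hi⟩ := hcol j hj
        exact ⟨i, Finset.mem_insert_of_mem hi⟩
      · show Finset.filter _ _ = _
        ext c
        simp only [Finset.mem_filter, Finset.mem_insert, Finset.mem_singleton]
        constructor
        · rintro ⟨h1 | h1, h2⟩
          · exact h1
          · exfalso
            have := hsub h1
            simp only [Finset.mem_product, Finset.mem_range] at this
            omega
        · rintro rfl
          exact ⟨Or.inl rfl, rfl⟩
    · intro K hK
      obtain ⟨hmemK, hP⟩ := Finset.mem_filter.mp hK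
      have hm : ((m:ℕ),(0:ℕ)) ∈ K := by
        have : ((m:ℕ),(0:ℕ)) ∈ K.filter (fun c => c.1 = m) := by
          rw [hP]; exact Finset.mem_singleton_self _
        exact (Finset.mem_filter.mp this).1
      exact Finset.insert_erase hm
    · intro K hK
      obtain ⟨hsub, hR, hrow, hcol⟩ := mem_mazeFam.mp hK
      have hm : ((m:ℕ),(0:ℕ)) ∉ K := by
        intro h
        have := hsub h
        simp only [Finset.mem_product, Finset.mem_range] at this
        omega
      exact Finset.erase_insert hm
    · intro K hK
      obtain ⟨hmemK, hP⟩ := Finset.mem_filter.mp hK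
      have hm : ((m:ℕ),(0:ℕ)) ∈ K := by
        have : ((m:ℕ),(0:ℕ)) ∈ K.filter (fun c => c.1 = m) := by
          rw [hP]; exact Finset.mem_singleton_self _
        exact (Finset.mem_filter.mp this).1
      rw [← Finset.card_erase_add_one hm, pow_succ]
      ring
  have : mazeT (m+1) n p q
      = ∑ K ∈ (mazeFam (m+1) n p q).filter P, (-1:ℤ) ^ K.card
        + ∑ K ∈ (mazeFam (m+1) n p q).filter (fun K => ¬ P K), (-1:ℤ) ^ K.card := by
    rw [mazeT, ← hsplit]
  rw [this, partA, partB, add_zero, mazeT]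
  exact Finset.sum_neg_distrib _

lemma mazeFam_swap {m n p q : ℕ} {K : Finset (ℕ × ℕ)} (hK : K ∈ mazeFam m n p q) :
    K.map (Equiv.prodComm ℕ ℕ).toEmbedding ∈ mazeFam n m q p := by
  obtain ⟨hsub, hR, hrow, hcol⟩ := mem_mazeFam.mp hK
  refine mem_mazeFam.mpr ⟨?_, ?_, ?_, ?_⟩
  · intro c hc
    obtain ⟨d, hd, rfl⟩ := Finset.mem_map.mp hc
    have := hsub hd
    simp only [Finset.mem_product, Finset.mem_range, Equiv.coe_toEmbedding,
      Equiv.prodComm_apply, Prod.fst_swap, Prod.snd_swap] at this ⊢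
    exact ⟨this.2, this.1⟩
  · intro c hc
    simp only [Finset.mem_product, Finset.mem_range] at hc
    refine Finset.mem_map.mpr ⟨(c.2, c.1), hR ?_, by simp⟩
    simp only [Finset.mem_product, Finset.mem_range]
    exact ⟨hc.2, hc.1⟩
  · intro i hi
    obtain ⟨w, hw⟩ := hcol i hi
    exact ⟨w, Finset.mem_map.mpr ⟨(w, i), hw, by simp⟩⟩
  · intro j hj
    obtain ⟨w, hw⟩ := hrow j hj
    exact ⟨w, Finset.mem_map.mpr ⟨(j, w), hw, by simp⟩⟩

lemma mazeT_swap (m n p q : ℕ) : mazeT m n p q = mazeT n m q p := by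
  classical
  rw [mazeT, mazeT]
  refine Finset.sum_nbij' (fun K => K.map (Equiv.prodComm ℕ ℕ).toEmbedding)
    (fun K => K.map (Equiv.prodComm ℕ ℕ).toEmbedding)
    (fun K hK => mazeFam_swap hK) (fun K hK => mazeFam_swap hK) ?_ ?_ ?_
  · intro K _
    ext c
    simp [Finset.mem_map]
  · intro K _
    ext c
    simp [Finset.mem_map]
  · intro K _
    rw [Finset.card_map]

lemma mazeT_eq (m n p q : ℕ) (hp : 1 ≤ p) (hq : 1 ≤ q) (hpm : p ≤ m) (hqn : q ≤ n) :
    mazeT m n p q = (-1) ^ ((m - p) + (n - q) + p * q) := by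
  induction m, hpm using Nat.le_induction with
  | base =>
    induction n, hqn using Nat.le_induction with
    | base => simpa using mazeT_base p q hp hq
    | succ n hn ih =>
      have hstep : mazeT p (n + 1) p q = - mazeT p n p q := by
        rw [mazeT_swap p (n+1) p q, mazeT_step_m n p q p hq hp hn le_rfl,
          mazeT_swap n p q p]
      rw [hstep, ih, show (p - p) + (n + 1 - q) + p * q
        = ((p - p) + (n - q) + p * q) + 1 by omega, pow_succ]
      ring
  | succ m hm ih =>
    rw [mazeT_step_m m n p q hp hq hm hqn, ih,
      show (m + 1 - p) + (n - q) + p * q = ((m - p) + (n - q) + p * q) + 1 by omega,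
      pow_succ]
    ring

/-- For `1 ≤ p ≤ m` and `1 ≤ q ≤ n`, the sum of `(-1)^|K|` over all
`K` with `[p] × [q] ⊆ K ⊆ [m] × [n]` having both coordinate projections surjective
equals `(-1)^(m+n+p+q+pq)`. -/
theorem maze_sum_eq_of_rectangle (m n p q : ℕ)
    (hp : 1 ≤ p) (hq : 1 ≤ q) (hpm : p ≤ m) (hqn : q ≤ n) :
    ∑ K ∈ (univ : Finset (Fin m × Fin n)).powerset.filter
        (fun K => ((univ.filter fun i : Fin m => (i : ℕ) < p) ×ˢ
            (univ.filter fun j : Fin n => (j : ℕ) < q)) ⊆ K ∧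
          (∀ i : Fin m, ∃ j : Fin n, (i, j) ∈ K) ∧
          (∀ j : Fin n, ∃ i : Fin m, (i, j) ∈ K)),
      (-1 : ℤ) ^ K.card = (-1 : ℤ) ^ (m + n + p + q + p * q) := by
  classical
  let emb : Fin m × Fin n ↪ ℕ × ℕ :=
    ⟨fun c => ((c.1 : ℕ), (c.2 : ℕ)), by
      rintro ⟨a, b⟩ ⟨c, d⟩ h
      simp only [Prod.mk.injEq] at h
      exact Prod.ext (Fin.ext h.1) (Fin.ext h.2)⟩
  have hembapp : ∀ c : Fin m × Fin n, emb c = ((c.1 : ℕ), (c.2 : ℕ)) := fun _ => rfl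
  have htrans : ∑ K ∈ (univ : Finset (Fin m × Fin n)).powerset.filter
        (fun K => ((univ.filter fun i : Fin m => (i : ℕ) < p) ×ˢ
            (univ.filter fun j : Fin n => (j : ℕ) < q)) ⊆ K ∧
          (∀ i : Fin m, ∃ j : Fin n, (i, j) ∈ K) ∧
          (∀ j : Fin n, ∃ i : Fin m, (i, j) ∈ K)),
      (-1 : ℤ) ^ K.card = mazeT m n p q := by
    rw [mazeT]
    refine Finset.sum_bij (fun K _ => K.map emb) ?_ ?_ ?_ ?_
    · intro K hK
      obtain ⟨-, hR, hrow, hcol⟩ := Finset.mem_filter.mp hK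
      refine mem_mazeFam.mpr ⟨?_, ?_, ?_, ?_⟩
      · intro c hc
        obtain ⟨d, hd, rfl⟩ := Finset.mem_map.mp hc
        rw [hembapp]
        simp only [Finset.mem_product, Finset.mem_range]
        exact ⟨d.1.isLt, d.2.isLt⟩
      · intro c hc
        simp only [Finset.mem_product, Finset.mem_range] at hc
        have ha : c.1 < m := lt_of_lt_of_le hc.1 hpm
        have hb : c.2 < n := lt_of_lt_of_le hc.2 hqn
        refine Finset.mem_map.mpr ⟨(⟨c.1, ha⟩, ⟨c.2, hb⟩), hR ?_, ?_⟩
        · simp only [Finset.mem_product, Finset.mem_filter, Finset.mem_univ, true_and]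
          exact ⟨hc.1, hc.2⟩
        · rw [hembapp]
      · intro i hi
        obtain ⟨j, hj⟩ := hrow ⟨i, hi⟩
        exact ⟨(j : ℕ), Finset.mem_map.mpr ⟨(⟨i, hi⟩, j), hj, rfl⟩⟩
      · intro j hj
        obtain ⟨i, hi⟩ := hcol ⟨j, hj⟩
        exact ⟨(i : ℕ), Finset.mem_map.mpr ⟨(i, ⟨j, hj⟩), hi, rfl⟩⟩
    · intro K1 h1 K2 h2 h
      exact Finset.map_injective emb h
    · intro K' hK'
      obtain ⟨hsub, hR, hrow, hcol⟩ := mem_mazeFam.mp hK'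
      set K : Finset (Fin m × Fin n) :=
        univ.filter (fun c => ((c.1 : ℕ), (c.2 : ℕ)) ∈ K') with hKdef
      have hKmem : ∀ c : Fin m × Fin n, c ∈ K ↔ ((c.1 : ℕ), (c.2 : ℕ)) ∈ K' := by
        intro c; simp [hKdef]
      refine ⟨K, ?_, ?_⟩
      · refine Finset.mem_filter.mpr ⟨Finset.mem_powerset.mpr (Finset.subset_univ _), ?_, ?_, ?_⟩
        · intro c hc
          simp only [Finset.mem_product, Finset.mem_filter, Finset.mem_univ, true_and] at hc
          refine (hKmem c).mpr (hR ?_)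
          simp only [Finset.mem_product, Finset.mem_range]
          exact hc
        · intro i
          obtain ⟨j, hj⟩ := hrow (i : ℕ) i.isLt
          have hjn : j < n := by
            have := hsub hj
            simp only [Finset.mem_product, Finset.mem_range] at this
            exact this.2
          exact ⟨⟨j, hjn⟩, (hKmem _).mpr hj⟩
        · intro j
          obtain ⟨i, hi⟩ := hcol (j : ℕ) j.isLt
          have him : i < m := by
            have := hsub hi
            simp only [Finset.mem_product, Finset.mem_range] at this
            exact this.1
          exact ⟨⟨i, him⟩, (hKmem _).mpr hi⟩
      · ext c
        constructor
        · intro hc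
          obtain ⟨d, hd, rfl⟩ := Finset.mem_map.mp hc
          rw [hembapp]
          exact (hKmem d).mp hd
        · intro hc
          have hcr := hsub hc
          simp only [Finset.mem_product, Finset.mem_range] at hcr
          refine Finset.mem_map.mpr ⟨(⟨c.1, hcr.1⟩, ⟨c.2, hcr.2⟩), ?_, ?_⟩
          · exact (hKmem _).mpr (by simpa using hc)
          · rw [hembapp]
    · intro K hK
      rw [Finset.card_map]
  rw [htrans, mazeT_eq m n p q hp hq hpm hqn]
  conv_rhs => rw [show m + n + p + q + p * q
    = ((m - p) + (n - q) + p * q) + 2 * (p + q) by omega, pow_add, pow_mul]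
  norm_num
end

section
/- Deviation Formula: Let F be a functor from finitely generated free B-modules to B-modules (not necessarily additive), and define the n-th deviation of F on parallel homomorphisms α₁,...,α_{m} : M → N by F(α₁ | ⋯ | α_m) = Σ_{I ⊆ [m]} (-1)^{m - |I|} F(Σ_{i∈I} α_i). Then for composable homomorphisms α₁,...,α_m : N → P and β₁,...,β_n : M → N, one has F(α₁|⋯|α_m) ∘ F(β₁|⋯|β_n) = Σ_{K ⊑ [m]×[n]} F( |_{(i,j)∈K} α_i β_j ), where the sum is over all subsets K of [m]×[n] with both projections surjective, and the right-hand deviation is taken over the family of composites α_iβ_j indexed by K. -/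
open Finset CategoryTheory

/-- The deviation of a functor `F` along a finite family of parallel morphisms:
`F(f₁ | ⋯ | f_k) = Σ_{I ⊆ [k]} (-1)^(k - |I|) F(Σ_{i∈I} f i)`. -/
noncomputable def functorDeviation {R : Type} [Ring R]
    (F : ModuleCat R ⥤ ModuleCat R) {M N : ModuleCat R}
    {ι : Type} [Fintype ι] [DecidableEq ι] (f : ι → (M ⟶ N)) :
    F.obj M ⟶ F.obj N :=
  ∑ I ∈ (univ : Finset ι).powerset,
    (-1 : ℤ) ^ (Fintype.card ι - I.card) • F.map (∑ i ∈ I, f i)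

/-- Sum of `(-1)^(|K|-|S|)` over `S ⊆ K ⊆ T` with `S` fixed is the indicator of `S = T`. -/
lemma aux_interval {ω : Type} [DecidableEq ω] (S T : Finset ω) (hST : S ⊆ T) :
    ∑ K ∈ T.powerset.filter (fun K => S ⊆ K), (-1 : ℤ) ^ (K.card - S.card)
      = if S = T then 1 else 0 := by
  have h : ∑ K ∈ T.powerset.filter (fun K => S ⊆ K), (-1 : ℤ) ^ (K.card - S.card)
      = ∑ U ∈ (T \ S).powerset, (-1 : ℤ) ^ U.card := by
    refine Finset.sum_nbij' (fun K => K \ S) (fun U => S ∪ U) ?_ ?_ ?_ ?_ ?_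
    · intro K hK
      simp only [mem_filter, mem_powerset] at hK
      exact mem_powerset.2 (sdiff_subset_sdiff hK.1 le_rfl)
    · intro U hU
      simp only [mem_powerset] at hU
      refine mem_filter.2 ⟨mem_powerset.2 ?_, subset_union_left⟩
      exact union_subset hST (hU.trans sdiff_subset)
    · intro K hK
      simp only [mem_filter, mem_powerset] at hK
      show S ∪ K \ S = K
      exact union_sdiff_of_subset hK.2
    · intro U hU
      simp only [mem_powerset] at hU
      have hd : Disjoint S U := Finset.disjoint_sdiff.mono_right hU
      show (S ∪ U) \ S = U
      exact union_sdiff_cancel_left hd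
    · intro K hK
      simp only [mem_filter, mem_powerset] at hK
      rw [card_sdiff_of_subset hK.2]
  rw [h, Finset.sum_powerset_neg_one_pow_card]
  by_cases hcase : S = T
  · subst hcase; simp
  · simp only [sdiff_eq_empty_iff_subset]
    rw [if_neg hcase, if_neg]
    intro hTS
    exact hcase (subset_antisymm hST hTS)

/-- Inclusion–exclusion indicator for surjectivity of a single projection. -/
lemma aux_rows {k : ℕ} (R : Finset (Fin k)) :
    ∑ I ∈ (univ : Finset (Fin k)).powerset,
        (-1 : ℤ) ^ (k - I.card) * (if R ⊆ I then 1 else 0)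
      = if R = univ then 1 else 0 := by
  have h1 : ∑ I ∈ (univ : Finset (Fin k)).powerset,
        (-1 : ℤ) ^ (k - I.card) * (if R ⊆ I then 1 else 0)
      = ∑ I ∈ (univ : Finset (Fin k)).powerset.filter (fun I => R ⊆ I),
          (-1 : ℤ) ^ (k - I.card) := by
    rw [Finset.sum_filter]
    refine Finset.sum_congr rfl fun I _ => ?_
    by_cases h : R ⊆ I <;> simp [h]
  have h2 : ∑ I ∈ (univ : Finset (Fin k)).powerset.filter (fun I => R ⊆ I),
        (-1 : ℤ) ^ (k - I.card)
      = ∑ U ∈ Rᶜ.powerset, (-1 : ℤ) ^ U.card := by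
    refine Finset.sum_nbij' (fun I => Iᶜ) (fun U => Uᶜ) ?_ ?_ ?_ ?_ ?_
    · intro I hI
      simp only [mem_filter, mem_powerset] at hI
      exact mem_powerset.2 (compl_subset_compl.2 hI.2)
    · intro U hU
      simp only [mem_powerset] at hU
      refine mem_filter.2 ⟨mem_powerset.2 (subset_univ _), ?_⟩
      have := compl_subset_compl.2 hU
      simpa using this
    · intro I _; simp
    · intro U _; simp
    · intro I _
      rw [card_compl, Fintype.card_fin]
  rw [h1, h2, Finset.sum_powerset_neg_one_pow_card]
  by_cases hR : R = univ <;> simp [hR, compl_eq_empty_iff]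

/-- The surjectivity indicator as a signed sum over rectangles. -/
lemma aux_surj_indicator (m n : ℕ) (K : Finset (Fin m × Fin n)) :
    (if ((∀ i : Fin m, ∃ j : Fin n, (i, j) ∈ K) ∧
          (∀ j : Fin n, ∃ i : Fin m, (i, j) ∈ K)) then (1 : ℤ) else 0)
      = ∑ I ∈ (univ : Finset (Fin m)).powerset, ∑ J ∈ (univ : Finset (Fin n)).powerset,
          ((-1 : ℤ) ^ (m - I.card) * (-1 : ℤ) ^ (n - J.card)) *
            (if K ⊆ I ×ˢ J then 1 else 0) := by
  classical
  have hsub : ∀ (I : Finset (Fin m)) (J : Finset (Fin n)),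
      K ⊆ I ×ˢ J ↔ (K.image Prod.fst ⊆ I ∧ K.image Prod.snd ⊆ J) := by
    intro I J
    constructor
    · intro h
      constructor
      · intro i hi
        obtain ⟨p, hp, rfl⟩ := mem_image.1 hi
        exact (mem_product.1 (h hp)).1
      · intro j hj
        obtain ⟨p, hp, rfl⟩ := mem_image.1 hj
        exact (mem_product.1 (h hp)).2
    · rintro ⟨h1, h2⟩ p hp
      exact mem_product.2 ⟨h1 (mem_image_of_mem _ hp), h2 (mem_image_of_mem _ hp)⟩
  have hfst : (∀ i : Fin m, ∃ j : Fin n, (i, j) ∈ K) ↔ K.image Prod.fst = univ := by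
    rw [eq_univ_iff_forall]
    constructor
    · intro h i
      obtain ⟨j, hj⟩ := h i
      exact mem_image.2 ⟨(i, j), hj, rfl⟩
    · intro h i
      obtain ⟨⟨a, b⟩, hp, rfl⟩ := mem_image.1 (h i)
      exact ⟨b, hp⟩
  have hsnd : (∀ j : Fin n, ∃ i : Fin m, (i, j) ∈ K) ↔ K.image Prod.snd = univ := by
    rw [eq_univ_iff_forall]
    constructor
    · intro h j
      obtain ⟨i, hi⟩ := h j
      exact mem_image.2 ⟨(i, j), hi, rfl⟩
    · intro h j
      obtain ⟨⟨a, b⟩, hp, rfl⟩ := mem_image.1 (h j)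
      exact ⟨a, hp⟩
  calc (if ((∀ i : Fin m, ∃ j : Fin n, (i, j) ∈ K) ∧
          (∀ j : Fin n, ∃ i : Fin m, (i, j) ∈ K)) then (1 : ℤ) else 0)
      = (if K.image Prod.fst = univ then (1 : ℤ) else 0) *
        (if K.image Prod.snd = univ then (1 : ℤ) else 0) := by
        by_cases h1 : K.image Prod.fst = univ <;> by_cases h2 : K.image Prod.snd = univ <;>
          simp [hfst, hsnd, h1, h2]
    _ = (∑ I ∈ (univ : Finset (Fin m)).powerset,
            (-1 : ℤ) ^ (m - I.card) * (if K.image Prod.fst ⊆ I then 1 else 0)) *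
        (∑ J ∈ (univ : Finset (Fin n)).powerset,
            (-1 : ℤ) ^ (n - J.card) * (if K.image Prod.snd ⊆ J then 1 else 0)) := by
        rw [aux_rows, aux_rows]
    _ = ∑ I ∈ (univ : Finset (Fin m)).powerset, ∑ J ∈ (univ : Finset (Fin n)).powerset,
          ((-1 : ℤ) ^ (m - I.card) * (-1 : ℤ) ^ (n - J.card)) *
            (if K ⊆ I ×ˢ J then 1 else 0) := by
        rw [Finset.sum_mul_sum]
        refine Finset.sum_congr rfl fun I _ => Finset.sum_congr rfl fun J _ => ?_
        by_cases h1 : K.image Prod.fst ⊆ I <;> by_cases h2 : K.image Prod.snd ⊆ J <;>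
          simp [hsub, h1, h2]

/-- Telescoping: summing all deviations over subsets of `T` recovers the value at `T`. -/
lemma aux_telescope {ω : Type} [DecidableEq ω] {A : Type*} [AddCommGroup A]
    (φ : Finset ω → A) (T : Finset ω) :
    ∑ K ∈ T.powerset, ∑ S ∈ K.powerset, (-1 : ℤ) ^ (K.card - S.card) • φ S = φ T := by
  have hswap : (∑ K ∈ T.powerset, ∑ S ∈ K.powerset, (-1 : ℤ) ^ (K.card - S.card) • φ S)
      = ∑ S ∈ T.powerset, ∑ K ∈ T.powerset.filter (fun K => S ⊆ K),
          (-1 : ℤ) ^ (K.card - S.card) • φ S :=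
    Finset.sum_comm' (s := T.powerset) (t := fun K => K.powerset) (t' := T.powerset)
      (s' := fun S => T.powerset.filter (fun K => S ⊆ K))
      (f := fun K S => (-1 : ℤ) ^ (K.card - S.card) • φ S) (fun K S => by
      simp only [mem_powerset, mem_filter]
      constructor
      · rintro ⟨h1, h2⟩; exact ⟨⟨h1, h2⟩, h2.trans h1⟩
      · rintro ⟨⟨h1, h2⟩, _⟩; exact ⟨h1, h2⟩)
  rw [hswap]
  have h : ∀ S ∈ T.powerset, ∑ K ∈ T.powerset.filter (fun K => S ⊆ K),
      (-1 : ℤ) ^ (K.card - S.card) • φ S = (if S = T then 1 else 0 : ℤ) • φ S := by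
    intro S hS
    rw [← Finset.sum_smul, aux_interval S T (mem_powerset.1 hS)]
  rw [Finset.sum_congr rfl h, Finset.sum_eq_single T]
  · simp
  · intro S _ hST; simp [hST]
  · intro h; exact absurd (mem_powerset.2 le_rfl) h

/-- The main combinatorial identity, for an arbitrary abelian-group-valued function. -/
lemma aux_main (m n : ℕ) {A : Type*} [AddCommGroup A]
    (φ : Finset (Fin m × Fin n) → A) :
    ∑ I ∈ (univ : Finset (Fin m)).powerset, ∑ J ∈ (univ : Finset (Fin n)).powerset,
        ((-1 : ℤ) ^ (m - I.card) * (-1 : ℤ) ^ (n - J.card)) • φ (I ×ˢ J)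
      = ∑ K ∈ (univ : Finset (Fin m × Fin n)).powerset,
          (if ((∀ i : Fin m, ∃ j : Fin n, (i, j) ∈ K) ∧
            (∀ j : Fin n, ∃ i : Fin m, (i, j) ∈ K)) then (1 : ℤ) else 0) •
          ∑ S ∈ K.powerset, (-1 : ℤ) ^ (K.card - S.card) • φ S := by
  classical
  have key : ∀ K : Finset (Fin m × Fin n),
      (if ((∀ i : Fin m, ∃ j : Fin n, (i, j) ∈ K) ∧
            (∀ j : Fin n, ∃ i : Fin m, (i, j) ∈ K)) then (1 : ℤ) else 0) •
          (∑ S ∈ K.powerset, (-1 : ℤ) ^ (K.card - S.card) • φ S)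
      = ∑ I ∈ (univ : Finset (Fin m)).powerset, ∑ J ∈ (univ : Finset (Fin n)).powerset,
          (((-1 : ℤ) ^ (m - I.card) * (-1 : ℤ) ^ (n - J.card)) *
            (if K ⊆ I ×ˢ J then 1 else 0)) •
          (∑ S ∈ K.powerset, (-1 : ℤ) ^ (K.card - S.card) • φ S) := by
    intro K
    rw [aux_surj_indicator m n K, Finset.sum_smul]
    exact Finset.sum_congr rfl fun I _ => by rw [Finset.sum_smul]
  have per : ∀ I ∈ (univ : Finset (Fin m)).powerset, ∀ J ∈ (univ : Finset (Fin n)).powerset,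
      ((-1 : ℤ) ^ (m - I.card) * (-1 : ℤ) ^ (n - J.card)) • φ (I ×ˢ J)
      = ∑ K ∈ (univ : Finset (Fin m × Fin n)).powerset,
          (((-1 : ℤ) ^ (m - I.card) * (-1 : ℤ) ^ (n - J.card)) *
            (if K ⊆ I ×ˢ J then 1 else 0)) •
          (∑ S ∈ K.powerset, (-1 : ℤ) ^ (K.card - S.card) • φ S) := by
    intro I _ J _
    have step : ∀ K ∈ (univ : Finset (Fin m × Fin n)).powerset,
        (((-1 : ℤ) ^ (m - I.card) * (-1 : ℤ) ^ (n - J.card)) *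
            (if K ⊆ I ×ˢ J then 1 else 0)) •
          (∑ S ∈ K.powerset, (-1 : ℤ) ^ (K.card - S.card) • φ S)
        = ((-1 : ℤ) ^ (m - I.card) * (-1 : ℤ) ^ (n - J.card)) •
          (if K ⊆ I ×ˢ J then (∑ S ∈ K.powerset, (-1 : ℤ) ^ (K.card - S.card) • φ S)
            else 0) := by
      intro K _
      by_cases h : K ⊆ I ×ˢ J <;> simp [h, mul_smul]
    have filt : ∑ K ∈ (univ : Finset (Fin m × Fin n)).powerset,
        (if K ⊆ I ×ˢ J then (∑ S ∈ K.powerset, (-1 : ℤ) ^ (K.card - S.card) • φ S) else 0)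
        = ∑ K ∈ (I ×ˢ J).powerset, ∑ S ∈ K.powerset, (-1 : ℤ) ^ (K.card - S.card) • φ S := by
      rw [← Finset.sum_filter]
      congr 1
      ext K
      simp [mem_filter, mem_powerset]
    rw [Finset.sum_congr rfl step, ← Finset.smul_sum, filt, aux_telescope φ (I ×ˢ J)]
  calc ∑ I ∈ (univ : Finset (Fin m)).powerset, ∑ J ∈ (univ : Finset (Fin n)).powerset,
        ((-1 : ℤ) ^ (m - I.card) * (-1 : ℤ) ^ (n - J.card)) • φ (I ×ˢ J)
      = ∑ I ∈ (univ : Finset (Fin m)).powerset, ∑ J ∈ (univ : Finset (Fin n)).powerset,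
          ∑ K ∈ (univ : Finset (Fin m × Fin n)).powerset,
            (((-1 : ℤ) ^ (m - I.card) * (-1 : ℤ) ^ (n - J.card)) *
              (if K ⊆ I ×ˢ J then 1 else 0)) •
            (∑ S ∈ K.powerset, (-1 : ℤ) ^ (K.card - S.card) • φ S) := by
        exact Finset.sum_congr rfl fun I hI => Finset.sum_congr rfl fun J hJ => per I hI J hJ
    _ = ∑ I ∈ (univ : Finset (Fin m)).powerset,
          ∑ K ∈ (univ : Finset (Fin m × Fin n)).powerset,
            ∑ J ∈ (univ : Finset (Fin n)).powerset,
            (((-1 : ℤ) ^ (m - I.card) * (-1 : ℤ) ^ (n - J.card)) *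
              (if K ⊆ I ×ˢ J then 1 else 0)) •
            (∑ S ∈ K.powerset, (-1 : ℤ) ^ (K.card - S.card) • φ S) :=
        Finset.sum_congr rfl fun I _ => Finset.sum_comm
    _ = ∑ K ∈ (univ : Finset (Fin m × Fin n)).powerset,
          ∑ I ∈ (univ : Finset (Fin m)).powerset,
            ∑ J ∈ (univ : Finset (Fin n)).powerset,
            (((-1 : ℤ) ^ (m - I.card) * (-1 : ℤ) ^ (n - J.card)) *
              (if K ⊆ I ×ˢ J then 1 else 0)) •
            (∑ S ∈ K.powerset, (-1 : ℤ) ^ (K.card - S.card) • φ S) := Finset.sum_comm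
    _ = ∑ K ∈ (univ : Finset (Fin m × Fin n)).powerset,
          (if ((∀ i : Fin m, ∃ j : Fin n, (i, j) ∈ K) ∧
            (∀ j : Fin n, ∃ i : Fin m, (i, j) ∈ K)) then (1 : ℤ) else 0) •
          ∑ S ∈ K.powerset, (-1 : ℤ) ^ (K.card - S.card) • φ S :=
        Finset.sum_congr rfl fun K _ => (key K).symm

/-- Rewriting a deviation indexed by the coercion of a finset as a sum over its powerset. -/
lemma dev_subtype {R : Type} [Ring R] (F : ModuleCat R ⥤ ModuleCat R) {M P : ModuleCat R}
    {ω : Type} [Fintype ω] [DecidableEq ω] (g : ω → (M ⟶ P)) (K : Finset ω) :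
    functorDeviation F (fun k : K => g k.1) =
      ∑ S ∈ K.powerset, (-1 : ℤ) ^ (K.card - S.card) • F.map (∑ p ∈ S, g p) := by
  classical
  unfold functorDeviation
  rw [Fintype.card_coe]
  refine Finset.sum_nbij' (fun I => I.map (Function.Embedding.subtype _))
      (fun S => S.subtype (· ∈ K)) ?_ ?_ ?_ ?_ ?_
  · intro I _
    refine mem_powerset.2 fun a ha => ?_
    exact Finset.property_of_mem_map_subtype I ha
  · intro S _
    exact mem_powerset.2 (subset_univ _)
  · intro I _
    ext x
    simp [Finset.mem_subtype, Finset.mem_map, Function.Embedding.coe_subtype]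
  · intro S hS
    exact Finset.subtype_map_of_mem (fun x hx => mem_powerset.1 hS hx)
  · intro I _
    rw [Finset.card_map, Finset.sum_map]
    rfl

/-- Deviation Formula: for any functor `F` on finitely generated free
modules and composable families `α i : N ⟶ P`, `β j : M ⟶ N`,
`F(α₁|⋯|α_m) ∘ F(β₁|⋯|β_n) = Σ_{K ⊑ [m]×[n]} F( |_{(i,j)∈K} α_i β_j )`,
the sum running over subsets `K` of `[m]×[n]` with both projections surjective. -/
theorem deviation_formula {R : Type} [Ring R] (F : ModuleCat R ⥤ ModuleCat R)
    {M N P : ModuleCat R}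
    [Module.Free R M] [Module.Finite R M] [Module.Free R N] [Module.Finite R N]
    [Module.Free R P] [Module.Finite R P]
    (m n : ℕ) (α : Fin m → (N ⟶ P)) (β : Fin n → (M ⟶ N)) :
    functorDeviation F β ≫ functorDeviation F α =
      ∑ K ∈ (univ : Finset (Fin m × Fin n)).powerset.filter
          (fun K => (∀ i : Fin m, ∃ j : Fin n, (i, j) ∈ K) ∧
            (∀ j : Fin n, ∃ i : Fin m, (i, j) ∈ K)),
        functorDeviation F (fun k : K => β k.1.2 ≫ α k.1.1) := by
  classical
  -- rewrite the right-hand side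
  have hRHS : ∑ K ∈ (univ : Finset (Fin m × Fin n)).powerset.filter
          (fun K => (∀ i : Fin m, ∃ j : Fin n, (i, j) ∈ K) ∧
            (∀ j : Fin n, ∃ i : Fin m, (i, j) ∈ K)),
        functorDeviation F (fun k : K => β k.1.2 ≫ α k.1.1)
      = ∑ K ∈ (univ : Finset (Fin m × Fin n)).powerset,
          (if ((∀ i : Fin m, ∃ j : Fin n, (i, j) ∈ K) ∧
            (∀ j : Fin n, ∃ i : Fin m, (i, j) ∈ K)) then (1 : ℤ) else 0) •
          ∑ S ∈ K.powerset, (-1 : ℤ) ^ (K.card - S.card) •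
            F.map (∑ p ∈ S, β p.2 ≫ α p.1) := by
    rw [Finset.sum_filter]
    refine Finset.sum_congr rfl fun K _ => ?_
    by_cases h : ((∀ i : Fin m, ∃ j : Fin n, (i, j) ∈ K) ∧
            (∀ j : Fin n, ∃ i : Fin m, (i, j) ∈ K))
    · rw [if_pos h, if_pos h, one_smul, dev_subtype F (fun p => β p.2 ≫ α p.1) K]
    · rw [if_neg h, if_neg h, zero_smul]
  rw [hRHS, ← aux_main m n (fun S => F.map (∑ p ∈ S, β p.2 ≫ α p.1))]
  -- now compute the left-hand side
  unfold functorDeviation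
  rw [Preadditive.sum_comp, Finset.sum_comm]
  refine Finset.sum_congr rfl fun I _ => ?_
  rw [Preadditive.comp_sum]
  refine Finset.sum_congr rfl fun J _ => ?_
  rw [Preadditive.zsmul_comp, Preadditive.comp_zsmul, smul_smul, ← Functor.map_comp,
    Fintype.card_fin, Fintype.card_fin, mul_comm ((-1 : ℤ) ^ (n - I.card))]
  congr 2
  rw [Finset.sum_product, Preadditive.sum_comp]
  simp only [Preadditive.comp_sum]
  exact Finset.sum_comm
end

section
/- Let B be a binomial ring (a torsion-free commutative ring closed under the operations r ↦ binom(r,k)). For any element x of a divided power algebra over B, any a ∈ B, and any m ≥ 1: a^m x^{[m]} = Σ_{k=1}^{m} binom(a,k) Σ_{g₁+⋯+g_k = m, g_i ≥ 1} x^{[g₁]} ⋯ x^{[g_k]}. -/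
open Finset PowerSeries

/-- Sum over `antidiagonalTuple (k+1) m` decomposed via `Fin.cons`. -/
lemma sum_antidiagonalTuple_succ {M : Type*} [AddCommMonoid M] {k m : ℕ}
    (F : (Fin (k + 1) → ℕ) → M) :
    ∑ g ∈ Finset.Nat.antidiagonalTuple (k + 1) m, F g =
      ∑ ab ∈ Finset.HasAntidiagonal.antidiagonal m, ∑ g ∈ Finset.Nat.antidiagonalTuple k ab.2,
        F (Fin.cons ab.1 g) := by
  rw [Finset.sum_sigma']
  apply Finset.sum_nbij' (i := fun g => (⟨(g 0, ∑ i : Fin k, g i.succ), fun i => g i.succ⟩ :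
      (_ : ℕ × ℕ) × (Fin k → ℕ))) (j := fun p => Fin.cons p.1.1 p.2)
  · intro g hg
    simp only [Finset.Nat.mem_antidiagonalTuple, Fin.sum_univ_succ] at hg
    simp [Finset.mem_sigma, Finset.mem_antidiagonal, Finset.Nat.mem_antidiagonalTuple, hg]
  · intro p hp
    simp only [Finset.mem_sigma, Finset.HasAntidiagonal.mem_antidiagonal,
      Finset.Nat.mem_antidiagonalTuple] at hp
    simp [Finset.Nat.mem_antidiagonalTuple, Fin.sum_univ_succ, hp.2, hp.1]
  · intro g hg
    simp [Fin.cons_self_tail]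
    exact funext fun i => Fin.cases rfl (fun j => rfl) i
  · intro p hp
    simp only [Finset.mem_sigma, Finset.HasAntidiagonal.mem_antidiagonal,
      Finset.Nat.mem_antidiagonalTuple] at hp
    ext <;> simp [hp.2]
  · intro g hg
    congr 1
    exact (funext fun i => Fin.cases rfl (fun j => rfl) i).symm

/-- Coefficients of powers of a power series, indexed by `antidiagonalTuple`. -/
lemma coeff_pow_tuple {R : Type*} [CommSemiring R] (f : PowerSeries R) (k m : ℕ) :
    PowerSeries.coeff m (f ^ k) =
      ∑ g ∈ Finset.Nat.antidiagonalTuple k m, ∏ i, PowerSeries.coeff (g i) f := by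
  induction k generalizing m with
  | zero =>
    cases m with
    | zero => simp [Finset.Nat.antidiagonalTuple_zero_zero]
    | succ m => simp [Finset.Nat.antidiagonalTuple_zero_succ]
  | succ k ih =>
    rw [pow_succ, mul_comm, PowerSeries.coeff_mul, sum_antidiagonalTuple_succ]
    refine Finset.sum_congr rfl fun ab hab => ?_
    rw [ih, Finset.mul_sum]
    refine Finset.sum_congr rfl fun g hg => ?_
    rw [Fin.prod_univ_succ]
    simp [mul_comm]

open Finset PowerSeries

/-- number of surjections-type coefficient -/
private def NN (m k : ℕ) : ℕ :=
  ∑ g ∈ (Finset.Nat.antidiagonalTuple k m).filter (fun g => ∀ i, g i ≠ 0),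
    Nat.multinomial Finset.univ g

private lemma coeff_exp_sub_one (j : ℕ) :
    PowerSeries.coeff j (PowerSeries.exp ℚ - 1) = if j = 0 then 0 else 1 / (j.factorial : ℚ) := by
  rw [map_sub, PowerSeries.coeff_exp]
  cases j with
  | zero => simp
  | succ j => simp [PowerSeries.coeff_one, algebraMap]

private lemma coeff_exp_sub_one_pow (k m : ℕ) :
    PowerSeries.coeff m ((PowerSeries.exp ℚ - 1) ^ k) = (NN m k : ℚ) / m.factorial := by
  rw [coeff_pow_tuple]
  rw [← Finset.sum_filter_add_sum_filter_not (Finset.Nat.antidiagonalTuple k m)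
    (fun g => ∀ i, g i ≠ 0)]
  have h2 : ∑ g ∈ (Finset.Nat.antidiagonalTuple k m).filter (fun g => ¬ ∀ i, g i ≠ 0),
      ∏ i, PowerSeries.coeff (g i) (PowerSeries.exp ℚ - 1) = 0 := by
    apply Finset.sum_eq_zero
    intro g hg
    simp only [Finset.mem_filter, not_forall, not_not] at hg
    obtain ⟨i, hi⟩ := hg.2
    exact Finset.prod_eq_zero (Finset.mem_univ i) (by simp [coeff_exp_sub_one, hi])
  rw [h2, add_zero, NN, Nat.cast_sum, Finset.sum_div]
  apply Finset.sum_congr rfl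
  intro g hg
  simp only [Finset.mem_filter, Finset.Nat.mem_antidiagonalTuple] at hg
  have hne : ((∏ i, (g i).factorial : ℕ) : ℚ) ≠ 0 :=
    Nat.cast_ne_zero.mpr (Finset.prod_ne_zero_iff.mpr fun i _ => Nat.factorial_ne_zero _)
  have hfac : ((∏ i, (g i).factorial : ℕ) : ℚ) * (Nat.multinomial Finset.univ g : ℚ)
      = (m.factorial : ℚ) := by
    rw [← Nat.cast_mul, Nat.multinomial_spec, hg.1]
  calc ∏ i, PowerSeries.coeff (g i) (PowerSeries.exp ℚ - 1)
      = ∏ i, (1 / ((g i).factorial : ℚ)) := by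
        refine Finset.prod_congr rfl fun i _ => ?_
        rw [coeff_exp_sub_one, if_neg (hg.2 i)]
    _ = 1 / ((∏ i, (g i).factorial : ℕ) : ℚ) := by
        rw [Nat.cast_prod, one_div, ← Finset.prod_inv_distrib]
        simp [one_div]
    _ = (Nat.multinomial Finset.univ g : ℚ) / (m.factorial : ℚ) := by
        rw [div_eq_div_iff hne (Nat.cast_ne_zero.mpr m.factorial_ne_zero), one_mul,
          mul_comm, hfac]
private lemma NN_zero_of_lt {m k : ℕ} (h : m < k) : NN m k = 0 := by
  rw [NN]
  convert Finset.sum_empty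
  rw [Finset.filter_eq_empty_iff]
  intro g hg hall
  rw [Finset.Nat.mem_antidiagonalTuple] at hg
  have : k ≤ m := by
    calc k = ∑ _i : Fin k, 1 := by simp
    _ ≤ ∑ i, g i := Finset.sum_le_sum fun i _ => Nat.one_le_iff_ne_zero.mpr (hall i)
    _ = m := hg
  omega

private lemma NN_zero_left {m : ℕ} (hm : 1 ≤ m) : NN m 0 = 0 := by
  cases m with
  | zero => omega
  | succ m => simp [NN, Finset.Nat.antidiagonalTuple_zero_succ]

private lemma nat_identity {n m : ℕ} (hm : 1 ≤ m) :
    (n : ℚ) ^ m = ∑ k ∈ Finset.Icc 1 m, (n.choose k : ℚ) * (NN m k : ℚ) := by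
  have hfac : (m.factorial : ℚ) ≠ 0 := Nat.cast_ne_zero.mpr m.factorial_ne_zero
  have e1 : PowerSeries.coeff m (PowerSeries.exp ℚ ^ n) = (n : ℚ) ^ m / m.factorial := by
    rw [PowerSeries.exp_pow_eq_rescale_exp, PowerSeries.coeff_rescale, PowerSeries.coeff_exp]
    simp [div_eq_mul_inv, algebraMap]
  have e2 : PowerSeries.coeff m (PowerSeries.exp ℚ ^ n)
      = ∑ k ∈ Finset.range (n + 1), (n.choose k : ℚ) * ((NN m k : ℚ) / m.factorial) := by
    have hrw : PowerSeries.exp ℚ ^ n = (PowerSeries.exp ℚ - 1 + 1) ^ n := by ring_nf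
    rw [hrw, add_pow, map_sum]
    refine Finset.sum_congr rfl fun k hk => ?_
    rw [one_pow, mul_one, ← map_natCast (PowerSeries.C (R := ℚ)), PowerSeries.coeff_mul_C,
      coeff_exp_sub_one_pow, mul_comm]
  have e3 : ∑ k ∈ Finset.range (n + 1), (n.choose k : ℚ) * ((NN m k : ℚ) / m.factorial)
      = ∑ k ∈ Finset.Icc 1 m, (n.choose k : ℚ) * ((NN m k : ℚ) / m.factorial) := by
    have hA : ∑ k ∈ Finset.range (n + 1), (n.choose k : ℚ) * ((NN m k : ℚ) / m.factorial)
        = ∑ k ∈ Finset.Icc 1 m ∩ Finset.range (n + 1),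
            (n.choose k : ℚ) * ((NN m k : ℚ) / m.factorial) := by
      refine (Finset.sum_subset Finset.inter_subset_right fun k hk hk' => ?_).symm
      have hk2 : ¬ k ∈ Finset.Icc 1 m := fun h => hk' (Finset.mem_inter.mpr ⟨h, hk⟩)
      rw [Finset.mem_Icc, not_and_or, not_le, not_le, Nat.lt_one_iff] at hk2
      rcases hk2 with rfl | h
      · rw [NN_zero_left hm, Nat.cast_zero, zero_div, mul_zero]
      · rw [NN_zero_of_lt h, Nat.cast_zero, zero_div, mul_zero]
    have hB : ∑ k ∈ Finset.Icc 1 m, (n.choose k : ℚ) * ((NN m k : ℚ) / m.factorial)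
        = ∑ k ∈ Finset.Icc 1 m ∩ Finset.range (n + 1),
            (n.choose k : ℚ) * ((NN m k : ℚ) / m.factorial) := by
      refine (Finset.sum_subset Finset.inter_subset_left fun k hk hk' => ?_).symm
      have hk2 : ¬ k ∈ Finset.range (n + 1) := fun h => hk' (Finset.mem_inter.mpr ⟨hk, h⟩)
      rw [Finset.mem_range, not_lt] at hk2
      rw [Nat.choose_eq_zero_of_lt (by omega), Nat.cast_zero, zero_mul]
    rw [hA, hB]
  rw [e2, e3] at e1
  simp_rw [← mul_div_assoc] at e1
  rw [← Finset.sum_div, div_eq_div_iff hfac hfac] at e1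
  exact mul_right_cancel₀ hfac e1.symm
private lemma nat_identity' {n m : ℕ} (hm : 1 ≤ m) :
    n ^ m = ∑ k ∈ Finset.Icc 1 m, n.choose k * NN m k := by
  have := nat_identity (n := n) hm
  exact_mod_cast this

private lemma scalar_identity {B : Type*} [CommRing B] [BinomialRing B] (a : B) {m : ℕ}
    (hm : 1 ≤ m) :
    a ^ m = ∑ k ∈ Finset.Icc 1 m, NN m k • Ring.choose a k := by
  set P : Polynomial ℤ := m.factorial • Polynomial.X ^ m
    - ∑ k ∈ Finset.Icc 1 m, (NN m k * (m.factorial / k.factorial)) • descPochhammer ℤ k with hP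
  have hroot : ∀ n : ℕ, P.eval (n : ℤ) = 0 := by
    intro n
    rw [hP]
    simp only [Polynomial.eval_sub, Polynomial.eval_smul, Polynomial.eval_pow, Polynomial.eval_X,
      Polynomial.eval_finset_sum, smul_eq_mul, nsmul_eq_mul, Polynomial.eval_mul,
      Polynomial.eval_natCast]
    rw [sub_eq_zero]
    have hd : ∀ k ∈ Finset.Icc 1 m, ((NN m k * (m.factorial / k.factorial) : ℕ) : ℤ) *
        (descPochhammer ℤ k).eval (n : ℤ) = (m.factorial : ℤ) * ((n.choose k * NN m k : ℕ) : ℤ) := by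
      intro k hk
      rw [Finset.mem_Icc] at hk
      rw [Polynomial.eval_eq_smeval, Polynomial.descPochhammer_smeval_eq_descFactorial (R := ℤ),
        Nat.descFactorial_eq_factorial_mul_choose, ← Nat.cast_mul, ← Nat.cast_mul]
      congr 1
      have hdvd : k.factorial ∣ m.factorial := Nat.factorial_dvd_factorial hk.2
      calc NN m k * (m.factorial / k.factorial) * (k.factorial * n.choose k)
          = NN m k * n.choose k * (m.factorial / k.factorial * k.factorial) := by ring
        _ = m.factorial * (n.choose k * NN m k) := by
            rw [Nat.div_mul_cancel hdvd]; ring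
    rw [Finset.sum_congr rfl hd, ← Finset.mul_sum, ← Nat.cast_sum, ← Nat.cast_pow,
      ← Nat.cast_mul, ← Nat.cast_mul, nat_identity' (n := n) hm]
  have hP0 : P = 0 := by
    apply Polynomial.eq_zero_of_infinite_isRoot
    apply Set.Infinite.mono (s := Set.range (Nat.cast : ℕ → ℤ))
    · rintro x ⟨n, rfl⟩
      exact hroot n
    · exact Set.infinite_range_of_injective Nat.cast_injective
  have haeval := congrArg (Polynomial.aeval (R := ℤ) a) hP0
  rw [hP] at haeval
  simp only [map_sub, map_sum, map_nsmul, map_pow, Polynomial.aeval_X, map_zero] at haeval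
  rw [sub_eq_zero] at haeval
  apply (BinomialRing.toIsAddTorsionFree (R := B)).nsmul_right_injective m.factorial_ne_zero
  show m.factorial • a ^ m = m.factorial • ∑ k ∈ Finset.Icc 1 m, NN m k • Ring.choose a k
  rw [haeval, Finset.smul_sum]
  refine Finset.sum_congr rfl fun k hk => ?_
  rw [Finset.mem_Icc] at hk
  rw [Polynomial.aeval_eq_smeval, Ring.descPochhammer_eq_factorial_smul_choose,
    smul_smul, smul_smul]
  congr 1
  rw [Nat.mul_assoc, Nat.div_mul_cancel (Nat.factorial_dvd_factorial hk.2), Nat.mul_comm]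



/-- over a binomial ring `B`, in a divided power algebra over `B`, for any
`a ∈ B` and `m ≥ 1`:
`a^m x^{[m]} = Σ_{k=1}^{m} binom(a,k) Σ_{g₁+⋯+g_k = m, g_i ≥ 1} x^{[g₁]} ⋯ x^{[g_k]}`. -/
theorem pow_smul_dpow_eq_sum_choose {B A : Type*} [CommRing B] [BinomialRing B]
    [CommRing A] [Algebra B A] {I : Ideal A} (hI : DividedPowers I)
    (a : B) {x : A} (hx : x ∈ I) {m : ℕ} (hm : 1 ≤ m) :
    algebraMap B A a ^ m * hI.dpow m x =
      ∑ k ∈ Finset.Icc 1 m, algebraMap B A (Ring.choose a k) *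
        ∑ g ∈ (Finset.Nat.antidiagonalTuple k m).filter (fun g => ∀ i, g i ≠ 0),
          ∏ i, hI.dpow (g i) x := by
  have key : ∀ k, ∑ g ∈ (Finset.Nat.antidiagonalTuple k m).filter (fun g => ∀ i, g i ≠ 0),
      ∏ i, hI.dpow (g i) x = (NN m k : A) * hI.dpow m x := by
    intro k
    rw [NN, Nat.cast_sum, Finset.sum_mul]
    refine Finset.sum_congr rfl fun g hg => ?_
    rw [Finset.mem_filter, Finset.Nat.mem_antidiagonalTuple] at hg
    rw [hI.prod_dpow hx, hg.1]
  calc algebraMap B A a ^ m * hI.dpow m x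
      = algebraMap B A (∑ k ∈ Finset.Icc 1 m, NN m k • Ring.choose a k) * hI.dpow m x := by
        rw [← map_pow, scalar_identity a hm]
    _ = ∑ k ∈ Finset.Icc 1 m, algebraMap B A (Ring.choose a k) *
          ((NN m k : A) * hI.dpow m x) := by
        rw [map_sum, Finset.sum_mul]
        refine Finset.sum_congr rfl fun k _ => ?_
        rw [map_nsmul, nsmul_eq_mul]
        ring
    _ = _ := by
        refine Finset.sum_congr rfl fun k _ => ?_
        rw [key k]
end

section
/- Let r be an element of a binomial ring B (or an integer), and let w₁,...,w_q be natural numbers. Then Π_{j=1}^q binom(r, w_j) = Σ_{m=0}^{∞} binom(r,m) Σ_{k=0}^{m} (-1)^{m-k} binom(m,k) Π_{j=1}^q binom(k, w_j), where the outer sum has finitely many nonzero terms (m ≤ w₁+⋯+w_q suffices). -/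
open Finset Polynomial

namespace ProdChooseAux


lemma degree_comp_sub_lt (P : ℤ[X]) {m : ℕ} (h : P.degree < (m + 1 : ℕ)) :
    (P.comp (X + 1) - P).degree < (m : ℕ) := by
  rcases eq_or_ne (P.comp (X + 1) - P) 0 with h0 | h0
  · rw [h0, degree_zero]
    exact WithBot.bot_lt_coe m
  · have hP : P ≠ 0 := by
      intro hp; apply h0; simp [hp]
  -- natDegree P ≠ 0
    have hnd : P.natDegree ≠ 0 := by
      intro hnd
      obtain ⟨c, hc⟩ := natDegree_eq_zero.mp hnd
      rw [← hc] at h0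
      simp at h0
    have hX1 : (X + 1 : ℤ[X]) = X + C 1 := by simp
    have hndX : (X + 1 : ℤ[X]).natDegree = 1 := by
      rw [hX1]; exact natDegree_X_add_C 1
    have hlc : (P.comp (X + 1)).leadingCoeff = P.leadingCoeff := by
      rw [leadingCoeff_comp (by rw [hndX]; exact one_ne_zero)]
      rw [hX1, leadingCoeff_X_add_C]
      simp
    have hcomp0 : P.comp (X + 1) ≠ 0 := by
      intro hc
      have := hlc
      rw [hc, leadingCoeff_zero] at this
      exact hP (leadingCoeff_eq_zero.mp this.symm)
    have hdeg : (P.comp (X + 1)).degree = P.degree := by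
      rw [degree_eq_natDegree hcomp0, degree_eq_natDegree hP, natDegree_comp, hndX, mul_one]
    have hlt := degree_sub_lt hdeg hcomp0 hlc
    have hle : P.degree ≤ (m : ℕ) := by
      rw [degree_eq_natDegree hP] at h ⊢
      exact_mod_cast Nat.lt_succ_iff.mp (by exact_mod_cast h)
    rw [hdeg] at hlt
    exact lt_of_lt_of_le hlt hle

lemma alt_sum_eval_eq_zero : ∀ (m : ℕ) (P : ℤ[X]), P.degree < (m : ℕ) → ∀ a : ℕ,
    ∑ k ∈ range (m + 1), (-1 : ℤ) ^ k * (m.choose k : ℤ) * P.eval ((a + k : ℕ) : ℤ) = 0 := by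
  intro m
  induction m with
  | zero =>
    intro P hP a
    have : P = 0 := by
      rw [← degree_eq_bot, ← Nat.WithBot.lt_zero_iff]
      exact_mod_cast hP
    simp [this]
  | succ m ih =>
    intro P hP a
    set Q : ℤ[X] := P.comp (X + 1) - P with hQdef
    have hQ : Q.degree < (m : ℕ) := degree_comp_sub_lt P hP
    have hQeval : ∀ x : ℤ, Q.eval x = P.eval (x + 1) - P.eval x := by
      intro x; simp [hQdef, eval_comp]
    set u : ℕ → ℤ := fun k => (-1 : ℤ) ^ k * (m.choose k : ℤ) * P.eval ((a + k : ℕ) : ℤ) with hu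
    calc ∑ k ∈ range (m + 1 + 1), (-1 : ℤ) ^ k * ((m+1).choose k : ℤ) * P.eval ((a + k : ℕ) : ℤ)
        = ∑ k ∈ range (m + 1),
            (-1 : ℤ) ^ (k+1) * ((m+1).choose (k+1) : ℤ) * P.eval ((a + (k+1) : ℕ) : ℤ)
          + (-1 : ℤ) ^ 0 * ((m+1).choose 0 : ℤ) * P.eval ((a + 0 : ℕ) : ℤ) :=
          Finset.sum_range_succ' _ (m + 1)
      _ = ∑ k ∈ range (m + 1),
            ((-((-1 : ℤ) ^ k * (m.choose k : ℤ) * Q.eval ((a + k : ℕ) : ℤ))) - (u k - u (k+1)))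
          + P.eval (a : ℤ) := by
          congr 1
          · refine Finset.sum_congr rfl fun k _ => ?_
            rw [hQeval]
            have h1 : ((a + (k+1) : ℕ) : ℤ) = ((a + k : ℕ) : ℤ) + 1 := by push_cast; ring
            rw [h1, Nat.choose_succ_succ]
            simp only [hu, Nat.succ_eq_add_one]
            push_cast
            ring
          · simp
      _ = 0 := by
          rw [Finset.sum_sub_distrib, Finset.sum_neg_distrib]
          rw [ih Q hQ a, Finset.sum_range_sub' u (m+1)]
          simp only [hu, Nat.choose_succ_self, Nat.choose_zero_right]
          push_cast
          ring



lemma inner_sum (n k : ℕ) (hk : k ≤ n) :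
    ∑ m ∈ range (n + 1), (-1 : ℤ) ^ m * ((n.choose m : ℤ) * (m.choose k : ℤ))
      = (-1 : ℤ) ^ k * (n.choose k : ℤ) * (if n = k then 1 else 0) := by
  have hsub : Finset.Ico k (n + 1) ⊆ range (n + 1) := by
    intro x hx
    simp only [Finset.mem_Ico] at hx
    exact Finset.mem_range.mpr hx.2
  have h1 : ∑ m ∈ range (n + 1), (-1 : ℤ) ^ m * ((n.choose m : ℤ) * (m.choose k : ℤ))
      = ∑ m ∈ Finset.Ico k (n + 1), (-1 : ℤ) ^ m * ((n.choose m : ℤ) * (m.choose k : ℤ)) := by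
    refine (Finset.sum_subset hsub fun x _ hx => ?_).symm
    have : x < k := by
      simp only [Finset.mem_range] at *
      simp only [Finset.mem_Ico, not_and, not_lt] at hx
      omega
    rw [Nat.choose_eq_zero_of_lt this]
    simp
  rw [h1, Finset.sum_Ico_eq_sum_range]
  have h2 : n + 1 - k = (n - k) + 1 := by omega
  rw [h2]
  have h3 : ∀ i ∈ range ((n - k) + 1),
      (-1 : ℤ) ^ (k + i) * ((n.choose (k + i) : ℤ) * ((k + i).choose k : ℤ))
        = (-1 : ℤ) ^ k * (n.choose k : ℤ) * ((-1 : ℤ) ^ i * ((n - k).choose i : ℤ)) := by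
    intro i hi
    have hin : k + i ≤ n := by
      simp only [Finset.mem_range] at hi
      omega
    have := Nat.choose_mul (n := n) (Nat.le_add_right k i)
    rw [Nat.add_sub_cancel_left] at this
    have hcast : ((n.choose (k + i) : ℤ) * ((k + i).choose k : ℤ))
        = (n.choose k : ℤ) * ((n - k).choose i : ℤ) := by exact_mod_cast congrArg Nat.cast this
    rw [pow_add, hcast]
    ring
  rw [Finset.sum_congr rfl h3, ← Finset.mul_sum, Int.alternating_sum_range_choose]
  have h4 : (n - k = 0) ↔ (n = k) := by omega
  simp only [h4]

lemma newton (f : ℕ → ℤ) (n : ℕ) :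
    ∑ m ∈ range (n + 1), (n.choose m : ℤ) *
      ((-1 : ℤ) ^ m * ∑ k ∈ range (m + 1), (-1 : ℤ) ^ k * (m.choose k : ℤ) * f k) = f n := by
  calc ∑ m ∈ range (n + 1), (n.choose m : ℤ) *
      ((-1 : ℤ) ^ m * ∑ k ∈ range (m + 1), (-1 : ℤ) ^ k * (m.choose k : ℤ) * f k)
      = ∑ m ∈ range (n + 1), ∑ k ∈ range (n + 1),
          (-1 : ℤ) ^ m * ((n.choose m : ℤ) * (m.choose k : ℤ)) * ((-1 : ℤ) ^ k * f k) := by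
        refine Finset.sum_congr rfl fun m hm => ?_
        have hmn : m + 1 ≤ n + 1 := by
          simp only [Finset.mem_range] at hm
          omega
        have hext : ∑ k ∈ range (m + 1), (-1 : ℤ) ^ k * (m.choose k : ℤ) * f k
            = ∑ k ∈ range (n + 1), (-1 : ℤ) ^ k * (m.choose k : ℤ) * f k := by
          refine Finset.sum_subset (Finset.range_subset_range.mpr hmn) fun x _ hx => ?_
          have : m < x := by
            simp only [Finset.mem_range, not_lt] at hx
            omega
          rw [Nat.choose_eq_zero_of_lt this]
          simp
        rw [hext, Finset.mul_sum, Finset.mul_sum]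
        refine Finset.sum_congr rfl fun k _ => ?_
        ring
    _ = ∑ k ∈ range (n + 1), ((-1 : ℤ) ^ k * f k) *
          ∑ m ∈ range (n + 1), (-1 : ℤ) ^ m * ((n.choose m : ℤ) * (m.choose k : ℤ)) := by
        rw [Finset.sum_comm]
        refine Finset.sum_congr rfl fun k _ => ?_
        rw [Finset.mul_sum]
        refine Finset.sum_congr rfl fun m _ => ?_
        ring
    _ = f n := by
        have hcong : ∀ k ∈ range (n + 1), ((-1 : ℤ) ^ k * f k) *
            (∑ m ∈ range (n + 1), (-1 : ℤ) ^ m * ((n.choose m : ℤ) * (m.choose k : ℤ)))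
            = ((-1 : ℤ) ^ k * f k) * ((-1 : ℤ) ^ k * (n.choose k : ℤ) * (if n = k then 1 else 0)) := by
          intro k hk
          rw [inner_sum n k (by simp only [Finset.mem_range] at hk; omega)]
        rw [Finset.sum_congr rfl hcong]
        rw [Finset.sum_eq_single_of_mem n (Finset.self_mem_range_succ n)
          (fun k _ hkn => by rw [if_neg (fun h => hkn h.symm)]; ring)]
        rw [if_pos rfl, Nat.choose_self]
        have : (-1 : ℤ) ^ n * (-1 : ℤ) ^ n = 1 := by
          rw [← pow_add, ← two_mul, pow_mul]
          norm_num
        push_cast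
        linear_combination f n * this



lemma d_eq_zero (q : ℕ) (w : Fin q → ℕ) (m : ℕ) (h : ∑ j, w j < m) :
    ∑ k ∈ range (m + 1), (-1 : ℤ) ^ k * (m.choose k : ℤ) * ∏ j, (k.choose (w j) : ℤ) = 0 := by
  set P : ℤ[X] := ∏ j, descPochhammer ℤ (w j) with hPdef
  have hmono : P.Monic := monic_prod_of_monic _ _ fun j _ => monic_descPochhammer ℤ (w j)
  have hP0 : P ≠ 0 := hmono.ne_zero
  have hnd : P.natDegree = ∑ j, w j := by
    rw [hPdef, natDegree_prod _ _ fun j _ => (monic_descPochhammer ℤ (w j)).ne_zero]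
    exact Finset.sum_congr rfl fun j _ => descPochhammer_natDegree ℤ (w j)
  have hdeg : P.degree < (m : ℕ) := by
    rw [degree_eq_natDegree hP0, hnd]
    exact_mod_cast h
  have key := alt_sum_eval_eq_zero m P hdeg 0
  have heval : ∀ k : ℕ, P.eval ((k : ℕ) : ℤ)
      = ((∏ j, (w j).factorial : ℕ) : ℤ) * ∏ j, (k.choose (w j) : ℤ) := by
    intro k
    rw [hPdef, eval_prod]
    have h1 : ∀ j : Fin q, (descPochhammer ℤ (w j)).eval ((k : ℕ) : ℤ)
        = ((w j).factorial : ℤ) * (k.choose (w j) : ℤ) := by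
      intro j
      rw [eval_eq_smeval, descPochhammer_smeval_eq_descFactorial,
        Nat.descFactorial_eq_factorial_mul_choose]
      push_cast
      ring
    rw [Finset.prod_congr rfl fun j _ => h1 j, Finset.prod_mul_distrib]
    push_cast
    ring
  have key2 : ((∏ j, (w j).factorial : ℕ) : ℤ) *
      (∑ k ∈ range (m + 1), (-1 : ℤ) ^ k * (m.choose k : ℤ) * ∏ j, (k.choose (w j) : ℤ)) = 0 := by
    rw [Finset.mul_sum, ← key]
    refine Finset.sum_congr rfl fun k _ => ?_
    rw [Nat.zero_add, heval k]
    ring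
  have hW : ((∏ j, (w j).factorial : ℕ) : ℤ) ≠ 0 := by
    simp only [ne_eq, Nat.cast_eq_zero]
    exact Finset.prod_ne_zero_iff.mpr fun j _ => (w j).factorial_ne_zero
  exact (mul_eq_zero.mp key2).resolve_left hW

lemma int_identity (q : ℕ) (w : Fin q → ℕ) (n : ℕ) :
    ∑ m ∈ range (∑ j, w j + 1), (n.choose m : ℤ) *
      ((-1 : ℤ) ^ m * ∑ k ∈ range (m + 1), (-1 : ℤ) ^ k * (m.choose k : ℤ) *
        ∏ j, (k.choose (w j) : ℤ))
      = ∏ j, (n.choose (w j) : ℤ) := by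
  set f : ℕ → ℤ := fun k => ∏ j, (k.choose (w j) : ℤ) with hf
  set g : ℕ → ℤ := fun m => (n.choose m : ℤ) *
      ((-1 : ℤ) ^ m * ∑ k ∈ range (m + 1), (-1 : ℤ) ^ k * (m.choose k : ℤ) * f k) with hg
  set N := ∑ j, w j with hN
  have hzero : ∀ m, N < m ∨ n < m → g m = 0 := by
    intro m hm
    rcases hm with hm | hm
    · simp only [hg, hf, d_eq_zero q w m hm]
      ring
    · simp only [hg, Nat.choose_eq_zero_of_lt hm]
      push_cast
      ring
  have hmax : ∀ M : ℕ, N ≤ M → n ≤ M → ∑ m ∈ range (N + 1), g m = ∑ m ∈ range (M + 1), g m := by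
    intro M h1 h2
    refine Finset.sum_subset (Finset.range_subset_range.mpr (by omega)) fun x _ hx => ?_
    refine hzero x (Or.inl ?_)
    simp only [Finset.mem_range, not_lt] at hx
    omega
  have hmax' : ∑ m ∈ range (n + 1), g m = ∑ m ∈ range (max n N + 1), g m := by
    refine Finset.sum_subset (Finset.range_subset_range.mpr (by omega)) fun x _ hx => ?_
    refine hzero x (Or.inr ?_)
    simp only [Finset.mem_range, not_lt] at hx
    omega
  rw [hmax (max n N) (le_max_right n N) (le_max_left n N), ← hmax']
  exact newton f n



variable (q : ℕ) (w : Fin q → ℕ)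

/-- the integer `(-1)^m Δ^m f(0)` for `f(k) = ∏_j C(k, w_j)` -/
noncomputable def dd (m : ℕ) : ℤ :=
  (-1 : ℤ) ^ m * ∑ k ∈ range (m + 1), (-1 : ℤ) ^ k * (m.choose k : ℤ) * ∏ j, (k.choose (w j) : ℤ)

lemma poly_eq :
    C (((∑ j, w j).factorial : ℕ) : ℤ) * ∏ j, descPochhammer ℤ (w j)
      = ∑ m ∈ range (∑ j, w j + 1),
          C ((((∑ j, w j).factorial / m.factorial * ∏ j, (w j).factorial : ℕ) : ℤ) * dd q w m) *
            descPochhammer ℤ m := by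
  set N := ∑ j, w j with hN
  rw [← sub_eq_zero]
  apply eq_zero_of_infinite_isRoot
  apply Set.infinite_of_injective_forall_mem (f := (Nat.cast : ℕ → ℤ)) Nat.cast_injective
  intro n
  simp only [Set.mem_setOf_eq, IsRoot.def, eval_sub, eval_mul, eval_C, eval_prod,
    eval_finset_sum, sub_eq_zero]
  have hdp : ∀ s : ℕ, (descPochhammer ℤ s).eval ((n : ℕ) : ℤ)
      = (s.factorial : ℤ) * (n.choose s : ℤ) := by
    intro s
    rw [eval_eq_smeval, descPochhammer_smeval_eq_descFactorial,
      Nat.descFactorial_eq_factorial_mul_choose]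
    push_cast
    ring
  have hL : ∀ j : Fin q, (descPochhammer ℤ (w j)).eval ((n : ℕ) : ℤ)
      = ((w j).factorial : ℤ) * (n.choose (w j) : ℤ) := fun j => hdp (w j)
  rw [Finset.prod_congr rfl fun j _ => hL j, Finset.prod_mul_distrib]
  have hR : ∀ m ∈ range (N + 1),
      (((N.factorial / m.factorial * ∏ j, (w j).factorial : ℕ) : ℤ) * dd q w m) *
        (descPochhammer ℤ m).eval ((n : ℕ) : ℤ)
      = ((N.factorial : ℤ) * ∏ j, ((w j).factorial : ℤ)) *
          ((n.choose m : ℤ) * dd q w m) := by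
    intro m hm
    rw [hdp m]
    have hdiv : (N.factorial / m.factorial) * m.factorial = N.factorial := by
      refine Nat.div_mul_cancel (Nat.factorial_dvd_factorial ?_)
      simp only [Finset.mem_range] at hm
      omega
    have h2 : (N.factorial / m.factorial * ∏ j, (w j).factorial) * m.factorial
        = N.factorial * ∏ j, (w j).factorial := by
      rw [mul_right_comm, hdiv]
    calc ((N.factorial / m.factorial * ∏ j, (w j).factorial : ℕ) : ℤ) * dd q w m *
          ((m.factorial : ℤ) * (n.choose m : ℤ))
        = (((N.factorial / m.factorial * ∏ j, (w j).factorial) * m.factorial : ℕ) : ℤ) *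
            ((n.choose m : ℤ) * dd q w m) := by push_cast; ring
      _ = ((N.factorial * ∏ j, (w j).factorial : ℕ) : ℤ) *
            ((n.choose m : ℤ) * dd q w m) := by rw [h2]
      _ = ((N.factorial : ℤ) * ∏ j, ((w j).factorial : ℤ)) *
            ((n.choose m : ℤ) * dd q w m) := by push_cast; ring
  rw [Finset.sum_congr rfl hR, ← Finset.mul_sum]
  have this2 : ∑ m ∈ range (N + 1), (n.choose m : ℤ) * dd q w m
      = ∏ j, (n.choose (w j) : ℤ) := by
    rw [← int_identity q w n]
    exact Finset.sum_congr rfl fun m _ => by rw [dd]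
  rw [this2]
  ring


end ProdChooseAux

open ProdChooseAux Finset in
/-- in a binomial ring `B`, for `r ∈ B` and natural numbers `w₁,…,w_q`,
`Π_j binom(r, w_j) = Σ_{m} binom(r,m) Σ_{k=0}^{m} (-1)^{m-k} binom(m,k) Π_j binom(k, w_j)`,
where the outer sum may be truncated at `m = w₁ + ⋯ + w_q`. -/
theorem prod_choose_eq_sum_choose {B : Type*} [CommRing B] [BinomialRing B]
    (r : B) (q : ℕ) (w : Fin q → ℕ) :
    ∏ j, Ring.choose r (w j) =
      ∑ m ∈ Finset.range (∑ j, w j + 1), Ring.choose r m *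
        ∑ k ∈ Finset.range (m + 1),
          (-1 : B) ^ (m - k) * (m.choose k : B) * ∏ j, Ring.choose (k : B) (w j) := by
  classical
  set N := ∑ j, w j with hN
  have hinner : ∀ m : ℕ,
      (∑ k ∈ Finset.range (m + 1),
        (-1 : B) ^ (m - k) * (m.choose k : B) * ∏ j, Ring.choose ((k : ℕ) : B) (w j))
      = ((dd q w m : ℤ) : B) := by
    intro m
    rw [dd, Int.cast_mul, Int.cast_sum, Finset.mul_sum]
    refine Finset.sum_congr rfl fun k hk => ?_
    have hk' : k ≤ m := by
      simp only [Finset.mem_range] at hk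
      omega
    have hsign : (-1 : B) ^ (m - k) = (-1 : B) ^ m * (-1 : B) ^ k := by
      rw [← pow_add]
      have hmk : m + k = (m - k) + 2 * k := by omega
      rw [hmk, pow_add, pow_mul]
      norm_num
    have hch : ∀ j : Fin q, Ring.choose ((k : ℕ) : B) (w j) = ((k.choose (w j) : ℕ) : B) :=
      fun j => Ring.choose_natCast k (w j)
    rw [Finset.prod_congr rfl fun j _ => hch j, hsign]
    push_cast
    ring
  have hdp : ∀ s : ℕ, Polynomial.aeval (R := ℤ) r (descPochhammer ℤ s)
      = (s.factorial : B) * Ring.choose r s := by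
    intro s
    rw [Polynomial.aeval_eq_smeval, Ring.descPochhammer_eq_factorial_smul_choose, nsmul_eq_mul]
  have hpoly := congrArg (Polynomial.aeval (R := ℤ) r) (poly_eq q w)
  rw [← hN] at hpoly
  have hL : (Polynomial.aeval (R := ℤ) r)
        (C ((N.factorial : ℕ) : ℤ) * ∏ j, descPochhammer ℤ (w j))
      = ((N.factorial * ∏ j, (w j).factorial : ℕ) : B) * ∏ j, Ring.choose r (w j) := by
    rw [map_mul, aeval_C, map_prod, Finset.prod_congr rfl fun j _ => hdp (w j),
      Finset.prod_mul_distrib]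
    simp only [algebraMap_int_eq, eq_intCast]
    push_cast
    ring
  have hR : (Polynomial.aeval (R := ℤ) r)
        (∑ m ∈ Finset.range (N + 1),
          C (((N.factorial / m.factorial * ∏ j, (w j).factorial : ℕ) : ℤ) * dd q w m) *
            descPochhammer ℤ m)
      = ((N.factorial * ∏ j, (w j).factorial : ℕ) : B) *
          ∑ m ∈ Finset.range (N + 1), Ring.choose r m * ((dd q w m : ℤ) : B) := by
    rw [map_sum, Finset.mul_sum]
    refine Finset.sum_congr rfl fun m hm => ?_
    rw [map_mul, aeval_C, hdp m]
    simp only [algebraMap_int_eq, eq_intCast]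
    have hdiv : (N.factorial / m.factorial) * m.factorial = N.factorial := by
      refine Nat.div_mul_cancel (Nat.factorial_dvd_factorial ?_)
      simp only [Finset.mem_range] at hm
      omega
    have h2 : (N.factorial / m.factorial * ∏ j, (w j).factorial) * m.factorial
        = N.factorial * ∏ j, (w j).factorial := by
      rw [mul_right_comm, hdiv]
    have h3 : ((N.factorial / m.factorial : ℕ) : B) * (m.factorial : B) = (N.factorial : B) := by
      rw [← Nat.cast_mul, hdiv]
    simp only [Int.cast_mul, Int.cast_prod, Int.cast_natCast, Nat.cast_mul, Nat.cast_prod]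
    linear_combination (∏ j, ((w j).factorial : B)) * ((dd q w m : ℤ) : B) *
      Ring.choose r m * h3
  rw [hL, hR] at hpoly
  have hK : (N.factorial * ∏ j, (w j).factorial) ≠ 0 := by
    refine Nat.mul_ne_zero N.factorial_ne_zero ?_
    exact Finset.prod_ne_zero_iff.mpr fun j _ => (w j).factorial_ne_zero
  haveI : IsAddTorsionFree B := BinomialRing.toIsAddTorsionFree
  have := nsmul_right_injective (M := B) hK
    (by simpa only [nsmul_eq_mul, Nat.cast_mul, Nat.cast_prod] using hpoly)
  rw [this]
  exact Finset.sum_congr rfl fun m _ => by rw [hinner m]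
end

section
/- Cross-effect decomposition: For any functor F from finitely generated free B-modules to B-modules with F(0) = 0, and modules M₁,...,M_k, one has F(M₁ ⊕ ⋯ ⊕ M_k) ≅ ⊕_{I ⊆ [k]} cr_I F((M_i)_{i∈I}), where cr_I F(M_i : i ∈ I) = Im F(π_{i₁} | ⋯ | π_{i_r}) is the image of the deviation of the canonical projections π_i : ⊕M_j → ⊕M_j indexed by I = {i₁,...,i_r}. -/
open Finset CategoryTheory ZeroObject DirectSum

/-- Decomposition of a module along a complete family of orthogonal idempotents. -/
noncomputable def decompOfOrthIdem {R : Type} {N : Type*} {ι : Type*} [Ring R] [AddCommGroup N] [Module R N]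
    [Fintype ι] [DecidableEq ι] (e : ι → Module.End R N)
    (hmul : ∀ i j, e i * e j = if i = j then e i else 0)
    (hsum : ∑ i, e i = 1) :
    N ≃ₗ[R] DirectSum ι (fun i => LinearMap.range (e i)) := by
  refine LinearEquiv.ofLinear
    (∑ i, (DirectSum.lof R ι (fun i => ↥(LinearMap.range (e i))) i).comp
      ((e i).codRestrict _ (fun x => LinearMap.mem_range_self _ x)))
    (DirectSum.coeLinearMap _) ?_ ?_
  · apply DirectSum.linearMap_ext
    intro i
    ext ⟨y, hy⟩
    obtain ⟨z, hz⟩ := hy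
    have hiy : e i y = y := by
      rw [← hz, ← Module.End.mul_apply, hmul]; simp
    have hjy : ∀ j, j ≠ i → e j y = 0 := by
      intro j hj
      rw [← hz, ← Module.End.mul_apply, hmul, if_neg hj, LinearMap.zero_apply]
    simp only [LinearMap.comp_apply, DirectSum.lof_eq_of, DirectSum.coeLinearMap_of,
      LinearMap.id_comp, LinearMap.sum_apply]
    rw [Finset.sum_eq_single i]
    · rw [show (e i).codRestrict (LinearMap.range (e i)) (fun x => LinearMap.mem_range_self _ x) y
          = ⟨y, ⟨z, hz⟩⟩ from Subtype.ext hiy]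
    · intro j _ hj
      have : (e j).codRestrict (LinearMap.range (e j))
          (fun x => LinearMap.mem_range_self _ x) y = 0 := by
        ext; simpa using hjy j hj
      simp [this]
    · simp
  · ext x
    simp only [LinearMap.comp_apply, LinearMap.sum_apply, map_sum, DirectSum.lof_eq_of,
      DirectSum.coeLinearMap_of, LinearMap.id_apply]
    calc ∑ i, ((e i).codRestrict (LinearMap.range (e i))
          (fun x => LinearMap.mem_range_self _ x) x : N) = ∑ i, e i x := rfl
    _ = x := by rw [← LinearMap.sum_apply, hsum, Module.End.one_apply]

/-- `(-1)^(a-b) = (-1)^a * (-1)^b` when `b ≤ a`. -/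
lemma neg_one_pow_sub_eq (a b : ℕ) (h : b ≤ a) :
    ((-1 : ℤ)) ^ (a - b) = (-1) ^ a * (-1) ^ b := by
  have h1 : ((-1 : ℤ)) ^ (a - b) * (-1) ^ b = (-1) ^ a := by
    rw [← pow_add, Nat.sub_add_cancel h]
  have h2 : ((-1 : ℤ)) ^ b * (-1) ^ b = 1 := by
    rw [← pow_add]
    exact Even.neg_one_pow ⟨b, rfl⟩
  calc ((-1 : ℤ)) ^ (a - b) = (-1) ^ (a - b) * ((-1) ^ b * (-1) ^ b) := by rw [h2, mul_one]
  _ = (-1) ^ a * (-1) ^ b := by rw [← mul_assoc, h1]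

/-- Sum of signs over an interval `[v, u]` in the Boolean lattice. -/
lemma sum_sign_interval {α : Type*} [DecidableEq α] (u v : Finset α) (h : v ⊆ u) :
    ∑ J ∈ u.powerset.filter (fun J => v ⊆ J), ((-1 : ℤ)) ^ J.card
      = if u = v then (-1) ^ v.card else 0 := by
  have key : ∑ J ∈ u.powerset.filter (fun J => v ⊆ J), ((-1 : ℤ)) ^ J.card
      = ∑ K ∈ (u \ v).powerset, (-1) ^ v.card * (-1) ^ K.card := by
    refine Finset.sum_nbij' (fun J => J \ v) (fun K => K ∪ v) ?_ ?_ ?_ ?_ ?_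
    · intro J hJ
      simp only [mem_filter, mem_powerset] at hJ
      exact Finset.mem_powerset.mpr (Finset.sdiff_subset_sdiff hJ.1 (le_refl v))
    · intro K hK
      simp only [mem_powerset] at hK
      refine Finset.mem_filter.mpr ⟨Finset.mem_powerset.mpr ?_, Finset.subset_union_right⟩
      exact Finset.union_subset (hK.trans (Finset.sdiff_subset)) h
    · intro J hJ
      simp only [mem_filter, mem_powerset] at hJ
      exact Finset.sdiff_union_of_subset hJ.2
    · intro K hK
      simp only [mem_powerset] at hK
      exact Finset.union_sdiff_cancel_right
        (Finset.disjoint_of_subset_left hK (Finset.sdiff_disjoint))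
    · intro J hJ
      simp only [mem_filter, mem_powerset] at hJ
      have hcard : (J \ v).card + v.card = J.card :=
        Finset.card_sdiff_add_card_eq_card hJ.2
      rw [← hcard, pow_add, mul_comm]
  rw [key, ← Finset.mul_sum, Finset.sum_powerset_neg_one_pow_card]
  have : u \ v = ∅ ↔ u = v := by
    rw [Finset.sdiff_eq_empty_iff_subset]
    exact ⟨fun h' => le_antisymm h' h, fun h' => h'.le⟩
  by_cases hu : u = v
  · rw [if_pos (this.mpr hu), if_pos hu, mul_one]
  · rw [if_neg (fun he => hu (this.mp he)), if_neg hu, mul_zero]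

/-- Cross-effect decomposition: for a functor `F` on finitely generated
free modules with `F(0) = 0`, and modules `M₁,…,M_k`, one has
`F(M₁ ⊕ ⋯ ⊕ M_k) ≅ ⊕_{I ⊆ [k]} cr_I F`, where `cr_I F` is the image of the deviation
of the canonical projections indexed by `I`. -/
theorem cross_effect_decomposition {R : Type} [Ring R]
    (F : ModuleCat R ⥤ ModuleCat R) (hF : CategoryTheory.Limits.IsZero (F.obj 0))
    (k : ℕ) (M : Fin k → ModuleCat R)
    [∀ i, Module.Free R (M i)] [∀ i, Module.Finite R (M i)] :
    let T : ModuleCat R := ModuleCat.of R (∀ i, M i)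
    let π : Fin k → (T ⟶ T) := fun i =>
      ModuleCat.ofHom ((LinearMap.single R (fun i => M i) i).comp (LinearMap.proj i))
    Nonempty ((F.obj T) ≃ₗ[R]
      DirectSum (Finset (Fin k)) (fun I =>
        LinearMap.range (functorDeviation F (fun i : ↥I => π ↑i)).hom)) := by
  intro T π
  classical
  -- the projections as module endomorphisms
  set P : Fin k → Module.End R T := (fun i => (π i).hom) with hP_def
  -- `F.map` as a map between endomorphism monoids
  set Φ : Module.End R T → Module.End R (F.obj T) := (fun f => (F.map (ModuleCat.ofHom f)).hom) with hΦ_def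
  have hFmul : ∀ f g : Module.End R T, Φ (f * g) = Φ f * Φ g := fun f g =>
    congrArg ModuleCat.Hom.hom (F.map_comp (ModuleCat.ofHom g) (ModuleCat.ofHom f))
  -- `e S = F (π_S)` where `π_S = ∑_{i ∈ S} π i`
  set e : Finset (Fin k) → Module.End R (F.obj T) :=
    (fun S => Φ (∑ i ∈ S, P i)) with he_def
  have hπval : ∀ (i : Fin k) (x : T), P i x = Pi.single i (x i) := fun i x => rfl
  -- the projections are orthogonal idempotents
  have hπ : ∀ i j, P i * P j = if i = j then P i else 0 := by
    intro i j
    refine LinearMap.ext fun x => ?_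
    rw [Module.End.mul_apply, hπval, hπval]
    by_cases hij : i = j
    · subst hij
      rw [if_pos rfl, hπval, Pi.single_eq_same]
    · rw [if_neg hij, Pi.single_eq_of_ne hij, Pi.single_zero, LinearMap.zero_apply]
  have hsum' : ∀ S S' : Finset (Fin k),
      (∑ i ∈ S, P i) * (∑ j ∈ S', P j) = ∑ i ∈ S ∩ S', P i := by
    intro S S'
    rw [Finset.sum_mul_sum]
    have h1 : ∀ i ∈ S, ∑ j ∈ S', P i * P j = if i ∈ S' then P i else 0 := by
      intro i _
      have h2 : ∀ j ∈ S', P i * P j = if j = i then P i else 0 := by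
        intro j _; rw [hπ i j]; simp [eq_comm]
      rw [Finset.sum_congr rfl h2, Finset.sum_ite_eq' S' i (fun _ => P i)]
    rw [Finset.sum_congr rfl h1, ← Finset.sum_filter, Finset.filter_mem_eq_inter]
  have he : ∀ S S', e S * e S' = e (S ∩ S') := by
    intro S S'
    rw [he_def]
    dsimp only
    rw [← hFmul, hsum']
  -- `e ∅ = 0` since `F` kills the zero object
  have he0 : e ∅ = 0 := by
    rw [he_def]
    dsimp only
    rw [Finset.sum_empty]
    show (F.map (ModuleCat.ofHom 0 : T ⟶ T)).hom = 0
    rw [ModuleCat.ofHom_zero]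
    have hfac : (0 : T ⟶ T) = (0 : T ⟶ (0 : ModuleCat R)) ≫ (0 : (0 : ModuleCat R) ⟶ T) := by
      rw [Limits.zero_comp]
    rw [hfac, F.map_comp, hF.eq_zero_of_src (F.map (0 : (0 : ModuleCat R) ⟶ T)),
      Limits.comp_zero]
    exact ModuleCat.hom_zero
  -- `e univ = 1` since the projections sum to the identity
  have heuniv : e univ = 1 := by
    rw [he_def]
    dsimp only
    have h1 : (∑ i ∈ (univ : Finset (Fin k)), P i) = 1 := by
      refine LinearMap.ext fun x => ?_
      rw [LinearMap.sum_apply]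
      calc ∑ i, P i x = ∑ i, Pi.single i (x i) := by
            exact Finset.sum_congr rfl (fun i _ => hπval i x)
      _ = x := Finset.univ_sum_single x
      _ = (1 : Module.End R T) x := rfl
    rw [h1]
    exact congrArg ModuleCat.Hom.hom (F.map_id T)
  -- the deviations, rewritten as sums over powersets of `Fin k`
  set D : Finset (Fin k) → Module.End R (F.obj T) :=
    (fun I => (functorDeviation F (fun i : ↥I => π ↑i)).hom) with hD_def
  have hD : ∀ I, D I = ∑ J ∈ I.powerset, (((-1 : ℤ)) ^ I.card * (-1) ^ J.card) • e J := by
    intro I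
    rw [hD_def]
    show (∑ J ∈ (univ : Finset ↥I).powerset,
        (-1 : ℤ) ^ (Fintype.card ↥I - J.card) • F.map (∑ i ∈ J, π ↑i)).hom = _
    simp only [ModuleCat.hom_sum, ModuleCat.hom_zsmul]
    refine Finset.sum_nbij' (fun J => J.map (Function.Embedding.subtype _))
      (fun J => J.subtype (· ∈ I)) ?_ ?_ ?_ ?_ ?_
    · intro J _
      refine Finset.mem_powerset.mpr (fun x hx => ?_)
      obtain ⟨⟨y, hy⟩, _, rfl⟩ := Finset.mem_map.mp hx
      exact hy
    · intro J _
      exact Finset.mem_powerset.mpr (Finset.subset_univ _)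
    · intro J _
      ext ⟨x, hx⟩
      simp only [Finset.mem_subtype, Finset.mem_map, Function.Embedding.coe_subtype]
      constructor
      · rintro ⟨⟨y, hy⟩, hmem, h⟩
        obtain rfl : y = x := h
        exact hmem
      · intro h
        exact ⟨⟨x, hx⟩, h, rfl⟩
    · intro J hJ
      have hJI := Finset.mem_powerset.mp hJ
      ext x
      simp only [Finset.mem_map, Finset.mem_subtype, Function.Embedding.coe_subtype]
      constructor
      · rintro ⟨⟨y, hy⟩, hmem, rfl⟩; exact hmem
      · intro hx; exact ⟨⟨x, hJI hx⟩, hx, rfl⟩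
    · intro J _
      have hcard : (J.map (Function.Embedding.subtype _)).card = J.card := Finset.card_map _
      have hle : J.card ≤ I.card := by
        rw [← Fintype.card_coe I]
        exact Finset.card_le_univ J
      rw [he_def]
      dsimp only
      rw [hcard, Fintype.card_coe, neg_one_pow_sub_eq I.card J.card hle]
      congr 1
      show (F.map (∑ i ∈ J, π ↑i)).hom
          = (F.map (ModuleCat.ofHom (∑ i ∈ J.map (Function.Embedding.subtype _), (π i).hom))).hom
      rw [Finset.sum_map]
      refine congrArg (fun f => (F.map f).hom) ?_
      ext1
      simp [ModuleCat.hom_sum]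
  -- `e S * D I = D I` if `I ⊆ S`, `0` otherwise
  have hA : ∀ S I : Finset (Fin k), e S * D I = if I ⊆ S then D I else 0 := by
    intro S I
    rw [hD, Finset.mul_sum]
    have hterm : ∀ J ∈ I.powerset,
        e S * ((((-1 : ℤ)) ^ I.card * (-1) ^ J.card) • e J)
          = (((-1 : ℤ)) ^ I.card * (-1) ^ J.card) • e (S ∩ J) := by
      intro J _
      rw [mul_smul_comm, he]
    rw [Finset.sum_congr rfl hterm]
    by_cases hIS : I ⊆ S
    · rw [if_pos hIS]
      refine Finset.sum_congr rfl (fun J hJ => ?_)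
      have h1 : S ∩ J = J :=
        Finset.inter_eq_right.mpr ((Finset.mem_powerset.mp hJ).trans hIS)
      rw [h1]
    · rw [if_neg hIS]
      obtain ⟨i₀, hi₀I, hi₀S⟩ := Finset.not_subset.mp hIS
      refine Finset.sum_involution
        (fun J _ => if i₀ ∈ J then J.erase i₀ else insert i₀ J) ?_ ?_ ?_ ?_
      · intro J hJ
        by_cases hmem : i₀ ∈ J
        · rw [if_pos hmem]
          have hinter : S ∩ J.erase i₀ = S ∩ J := by
            ext a
            simp only [Finset.mem_inter, Finset.mem_erase]
            constructor
            · rintro ⟨ha, _, ha'⟩; exact ⟨ha, ha'⟩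
            · rintro ⟨ha, ha'⟩
              exact ⟨ha, fun h => hi₀S (h ▸ ha), ha'⟩
          have hpos : 0 < J.card := Finset.card_pos.mpr ⟨i₀, hmem⟩
          have hcard : J.card = (J.erase i₀).card + 1 := by
            rw [Finset.card_erase_of_mem hmem]
            omega
          have hsign : ((-1 : ℤ)) ^ J.card = -((-1 : ℤ)) ^ (J.erase i₀).card := by
            rw [hcard, pow_succ]
            ring
          rw [hinter, hsign,
            show ((-1 : ℤ)) ^ I.card * -(-1 : ℤ) ^ (J.erase i₀).card
              = -(((-1 : ℤ)) ^ I.card * (-1 : ℤ) ^ (J.erase i₀).card) by ring,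
            neg_smul]
          exact neg_add_cancel _
        · rw [if_neg hmem]
          have hinter : S ∩ insert i₀ J = S ∩ J := by
            ext a
            simp only [Finset.mem_inter, Finset.mem_insert]
            constructor
            · rintro ⟨ha, h | ha'⟩
              · exact absurd (h ▸ ha) hi₀S
              · exact ⟨ha, ha'⟩
            · rintro ⟨ha, ha'⟩; exact ⟨ha, Or.inr ha'⟩
          have hsign : ((-1 : ℤ)) ^ (insert i₀ J).card = -((-1 : ℤ)) ^ J.card := by
            rw [Finset.card_insert_of_notMem hmem, pow_succ]
            ring
          rw [hinter, hsign,
            show ((-1 : ℤ)) ^ I.card * -(-1 : ℤ) ^ J.card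
              = -(((-1 : ℤ)) ^ I.card * (-1 : ℤ) ^ J.card) by ring,
            neg_smul]
          exact add_neg_cancel _
      · intro J hJ _
        by_cases hmem : i₀ ∈ J
        · rw [if_pos hmem]
          exact Finset.erase_ne_self.mpr hmem
        · rw [if_neg hmem]
          exact Finset.insert_ne_self.mpr hmem
      · intro J hJ
        have hJI := Finset.mem_powerset.mp hJ
        by_cases hmem : i₀ ∈ J
        · rw [if_pos hmem]
          exact Finset.mem_powerset.mpr ((Finset.erase_subset _ _).trans hJI)
        · rw [if_neg hmem]
          exact Finset.mem_powerset.mpr (Finset.insert_subset hi₀I hJI)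
      · intro J hJ
        by_cases hmem : i₀ ∈ J
        · rw [if_pos hmem, if_neg (Finset.notMem_erase i₀ J),
            Finset.insert_erase hmem]
        · rw [if_neg hmem, if_pos (Finset.mem_insert_self i₀ J),
            Finset.erase_insert hmem]
  -- orthogonality and idempotency of the deviations
  have hDD : ∀ I I', D I * D I' = if I = I' then D I else 0 := by
    intro I I'
    conv_lhs => rw [hD I]
    rw [Finset.sum_mul]
    have hterm : ∀ J ∈ I.powerset,
        ((((-1 : ℤ)) ^ I.card * (-1) ^ J.card) • e J) * D I'
          = if I' ⊆ J then (((-1 : ℤ)) ^ I.card * (-1) ^ J.card) • D I' else 0 := by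
      intro J _
      rw [smul_mul_assoc, hA]
      by_cases h : I' ⊆ J
      · rw [if_pos h, if_pos h]
      · rw [if_neg h, if_neg h, smul_zero]
    rw [Finset.sum_congr rfl hterm, ← Finset.sum_filter, ← Finset.sum_smul,
      ← Finset.mul_sum]
    by_cases hII : I' ⊆ I
    · rw [sum_sign_interval I I' hII]
      by_cases hEq : I = I'
      · subst hEq
        rw [if_pos rfl, if_pos rfl, ← pow_add,
          Even.neg_one_pow ⟨I.card, rfl⟩, one_smul]
      · rw [if_neg hEq, if_neg hEq, mul_zero, zero_smul]
    · have hne : I ≠ I' := fun h => hII (h ▸ le_refl I)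
      rw [if_neg hne]
      have hemp : I.powerset.filter (fun J => I' ⊆ J) = ∅ := by
        refine Finset.filter_eq_empty_iff.mpr ?_
        intro J hJ h
        exact hII (h.trans (Finset.mem_powerset.mp hJ))
      rw [hemp, Finset.sum_empty, mul_zero, zero_smul]
  -- completeness : the deviations sum to the identity
  have hpow : ∀ I : Finset (Fin k),
      (univ : Finset (Fin k)).powerset.filter (fun J => J ⊆ I) = I.powerset := by
    intro I
    ext J
    simp only [Finset.mem_filter, Finset.mem_powerset]
    exact ⟨fun h => h.2, fun h => ⟨Finset.subset_univ J, h⟩⟩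
  have hsumD : ∑ I, D I = 1 := by
    have step1 : ∑ I : Finset (Fin k), D I
        = ∑ I ∈ (univ : Finset (Fin k)).powerset,
            ∑ J ∈ (univ : Finset (Fin k)).powerset,
              (if J ⊆ I then (((-1 : ℤ)) ^ I.card * (-1) ^ J.card) • e J else 0) := by
      refine Finset.sum_congr Finset.powerset_univ.symm (fun I _ => ?_)
      rw [hD, ← hpow I, Finset.sum_filter]
    rw [step1, Finset.sum_comm]
    have step2 : ∀ J ∈ (univ : Finset (Fin k)).powerset,
        (∑ I ∈ (univ : Finset (Fin k)).powerset,
          if J ⊆ I then (((-1 : ℤ)) ^ I.card * (-1) ^ J.card) • e J else 0)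
        = ((if (univ : Finset (Fin k)) = J then ((-1 : ℤ)) ^ J.card else 0)
            * (-1) ^ J.card) • e J := by
      intro J _
      rw [← Finset.sum_filter, ← Finset.sum_smul, ← Finset.sum_mul,
        sum_sign_interval univ J (Finset.subset_univ J)]
    rw [Finset.sum_congr rfl step2,
      Finset.sum_eq_single_of_mem (univ : Finset (Fin k))
        (Finset.mem_powerset.mpr (le_refl _))
        (fun J _ hne => by rw [if_neg (fun h => hne h.symm), zero_mul, zero_smul]),
      if_pos rfl, ← pow_add,
      Even.neg_one_pow ⟨(univ : Finset (Fin k)).card, rfl⟩, one_smul, heuniv]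
  exact ⟨decompOfOrthIdem (R := R) (N := ↥(F.obj T)) (ι := Finset (Fin k)) D hDD hsumD⟩
end

section
/- The deviation of the canonical projections is idempotent: if π₁,...,π_k are the canonical projection idempotents of M₁ ⊕ ⋯ ⊕ M_k and F is any functor on modules, then F(π₁|⋯|π_k) is an idempotent endomorphism of F(M₁ ⊕ ⋯ ⊕ M_k). -/
open Finset CategoryTheory

private lemma aux_pow_sub {k n : ℕ} (h : n ≤ k) :
    ((-1 : ℤ)) ^ (k - n) = (-1) ^ k * (-1) ^ n := by
  have h1 : ((-1 : ℤ)) ^ (k - n) * (-1) ^ n = (-1) ^ k := by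
    rw [← pow_add, Nat.sub_add_cancel h]
  have h2 : ((-1 : ℤ)) ^ n * (-1) ^ n = 1 := by
    rw [← pow_add, Even.neg_one_pow ⟨n, rfl⟩]
  calc ((-1 : ℤ)) ^ (k - n) = (-1) ^ (k - n) * ((-1) ^ n * (-1) ^ n) := by rw [h2, mul_one]
    _ = ((-1) ^ (k - n) * (-1) ^ n) * (-1) ^ n := by ring
    _ = (-1) ^ k * (-1) ^ n := by rw [h1]

/-- for the canonical projection idempotents `π₁,…,π_k` of
`M₁ ⊕ ⋯ ⊕ M_k` and any functor `F`, the deviation `F(π₁|⋯|π_k)` is an idempotent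
endomorphism of `F(M₁ ⊕ ⋯ ⊕ M_k)`. -/
theorem functorDeviation_proj_idempotent {R : Type} [Ring R]
    (F : ModuleCat R ⥤ ModuleCat R) (k : ℕ) (M : Fin k → ModuleCat R) :
    let T : ModuleCat R := ModuleCat.of R (∀ i, M i)
    let π : Fin k → (T ⟶ T) := fun i =>
      ModuleCat.ofHom ((LinearMap.single R (fun i => M i) i).comp (LinearMap.proj i))
    functorDeviation F π ≫ functorDeviation F π = functorDeviation F π := by
  intro T π
  classical
  -- composition of projections
  have hππ : ∀ i j : Fin k, π i ≫ π j = if j = i then π i else 0 := by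
    intro i j
    refine ModuleCat.hom_ext (LinearMap.ext fun x => ?_)
    show ((LinearMap.single R (fun i => M i) j).comp (LinearMap.proj j))
        (((LinearMap.single R (fun i => M i) i).comp (LinearMap.proj i)) x) = _
    by_cases h : j = i
    · subst h
      simp [LinearMap.single_apply, Pi.single_apply, π, ModuleCat.ofHom]
      rfl
    · simp [LinearMap.single_apply, Pi.single_apply, h, π, ModuleCat.ofHom]
  -- partial sums of projections
  have he : ∀ I J : Finset (Fin k),
      (∑ i ∈ I, π i) ≫ (∑ j ∈ J, π j) = ∑ i ∈ I ∩ J, π i := by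
    intro I J
    rw [Preadditive.sum_comp]
    have : ∀ i ∈ I, π i ≫ (∑ j ∈ J, π j) = if i ∈ J then π i else 0 := by
      intro i _
      rw [Preadditive.comp_sum]
      simp only [hππ]
      rw [Finset.sum_ite_eq' J i (fun _ => π i)]
    rw [Finset.sum_congr rfl this, Finset.sum_ite_mem]
  set g : Finset (Fin k) → (F.obj T ⟶ F.obj T) := fun S => F.map (∑ i ∈ S, π i) with hgdef
  have hg : ∀ I J : Finset (Fin k), g I ≫ g J = g (I ∩ J) := by
    intro I J
    rw [hgdef]
    dsimp only
    rw [← F.map_comp, he]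
  set c : ℕ := Fintype.card (Fin k) with hc
  set S : F.obj T ⟶ F.obj T := ∑ I ∈ (univ : Finset (Fin k)).powerset, (-1 : ℤ) ^ I.card • g I
    with hSdef
  -- rewrite the deviation
  have hD : functorDeviation F π = (-1 : ℤ) ^ c • S := by
    rw [hSdef, smul_sum]
    unfold functorDeviation
    refine Finset.sum_congr rfl fun I _ => ?_
    rw [smul_smul, ← aux_pow_sub (le_trans (Finset.card_le_univ I) (le_of_eq rfl))]
  -- the inner collapse
  have hinner : ∀ I : Finset (Fin k),
      (∑ J ∈ (univ : Finset (Fin k)).powerset, (-1 : ℤ) ^ J.card • g (I ∩ J))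
      = (∑ B ∈ Iᶜ.powerset, (-1 : ℤ) ^ B.card) •
          ∑ A ∈ I.powerset, (-1 : ℤ) ^ A.card • g A := by
    intro I
    have step : (∑ J ∈ (univ : Finset (Fin k)).powerset, (-1 : ℤ) ^ J.card • g (I ∩ J))
        = ∑ p ∈ I.powerset ×ˢ Iᶜ.powerset,
            ((-1 : ℤ) ^ p.1.card * (-1 : ℤ) ^ p.2.card) • g p.1 := by
      refine Finset.sum_bij' (fun J _ => (J ∩ I, J \ I)) (fun p _ => p.1 ∪ p.2) ?_ ?_ ?_ ?_ ?_
      · intro J _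
        rw [Finset.mem_product]
        constructor
        · exact Finset.mem_powerset.2 Finset.inter_subset_right
        · refine Finset.mem_powerset.2 fun x hx => ?_
          rw [Finset.mem_compl]
          exact (Finset.mem_sdiff.1 hx).2
      · intro p _
        exact Finset.mem_powerset.2 (Finset.subset_univ _)
      · intro J _
        ext x
        simp only [Finset.mem_union, Finset.mem_inter, Finset.mem_sdiff]
        tauto
      · intro p hp
        rw [Finset.mem_product] at hp
        have h1 : p.1 ⊆ I := Finset.mem_powerset.1 hp.1
        have h2 : p.2 ⊆ Iᶜ := Finset.mem_powerset.1 hp.2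
        have e1 : (p.1 ∪ p.2) ∩ I = p.1 := by
          ext x
          simp only [Finset.mem_inter, Finset.mem_union]
          constructor
          · rintro ⟨hx | hx, hxI⟩
            · exact hx
            · exact absurd hxI (Finset.mem_compl.1 (h2 hx))
          · intro hx
            exact ⟨Or.inl hx, h1 hx⟩
        have e2 : (p.1 ∪ p.2) \ I = p.2 := by
          ext x
          simp only [Finset.mem_sdiff, Finset.mem_union]
          constructor
          · rintro ⟨hx | hx, hxI⟩
            · exact absurd (h1 hx) hxI
            · exact hx
          · intro hx
            exact ⟨Or.inr hx, Finset.mem_compl.1 (h2 hx)⟩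
        exact Prod.ext e1 e2
      · intro J _
        have hcard : (J ∩ I).card + (J \ I).card = J.card :=
          Finset.card_inter_add_card_sdiff J I
        rw [Finset.inter_comm I J, ← hcard, pow_add]
    rw [step, Finset.sum_product]
    rw [Finset.sum_smul]
    rw [Finset.sum_comm]
    refine Finset.sum_congr rfl fun B _ => ?_
    rw [smul_sum]
    refine Finset.sum_congr rfl fun A _ => ?_
    rw [smul_smul, mul_comm]
  -- S is almost idempotent
  have hSS : S ≫ S = (-1 : ℤ) ^ c • S := by
    rw [hSdef]
    rw [Preadditive.sum_comp]
    have expand : ∀ I ∈ (univ : Finset (Fin k)).powerset,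
        ((-1 : ℤ) ^ I.card • g I) ≫ (∑ J ∈ (univ : Finset (Fin k)).powerset,
            (-1 : ℤ) ^ J.card • g J)
        = (-1 : ℤ) ^ I.card •
            ∑ J ∈ (univ : Finset (Fin k)).powerset, (-1 : ℤ) ^ J.card • g (I ∩ J) := by
      intro I _
      rw [Preadditive.zsmul_comp, Preadditive.comp_sum]
      congr 1
      refine Finset.sum_congr rfl fun J _ => ?_
      rw [Preadditive.comp_zsmul, hg]
    rw [Finset.sum_congr rfl expand]
    have collapse : ∀ I ∈ (univ : Finset (Fin k)).powerset,
        ((-1 : ℤ) ^ I.card •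
          ∑ J ∈ (univ : Finset (Fin k)).powerset, (-1 : ℤ) ^ J.card • g (I ∩ J))
        = if I = univ then (-1 : ℤ) ^ c • S else 0 := by
      intro I _
      rw [hinner I, Finset.sum_powerset_neg_one_pow_card]
      by_cases h : I = (univ : Finset (Fin k))
      · subst h
        rw [if_pos Finset.compl_univ, if_pos rfl, one_smul, Finset.card_univ]
      · have hne : ¬(Iᶜ = (∅ : Finset (Fin k))) := by
          intro hcompl
          exact h (by simpa using congrArg compl hcompl)
        rw [if_neg hne, zero_smul, smul_zero, if_neg h]
    rw [Finset.sum_congr rfl collapse, Finset.sum_ite_eq'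
      ((univ : Finset (Fin k)).powerset) (univ : Finset (Fin k))
      (fun _ => (-1 : ℤ) ^ c • S), if_pos (Finset.mem_powerset.2 (Finset.subset_univ _))]
  rw [hD, Preadditive.zsmul_comp, Preadditive.comp_zsmul, hSS]
  rw [smul_smul, smul_smul, ← pow_add, ← pow_add]
  congr 1
  have h3 : c + c + c = 2 * c + c := by ring
  rw [h3, pow_add, pow_mul]
  norm_num
end

section
/- Divided power composition is multiplicative: if A is the (possibly non-unital) algebra on the free module spanned by columns [a//b] with product [b'//c]∘[a//b] = δ_{b,b'}[a//c], then the rule u^{[n]} ∘ v^{[n]} = (u ∘ v)^{[n]} for u, v ∈ A defines an associative bilinear composition on the degree-n divided power module Γ^n(A). -/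
open Finset

namespace DPComp

/-- The multiset (as `Sym`) of a tuple. -/
def mOf {α : Type*} {n : ℕ} (f : Fin n → α) : Sym α n :=
  ⟨↑(List.ofFn f), by simp⟩

lemma mOf_comp_perm {α : Type*} {n : ℕ} (f : Fin n → α) (π : Equiv.Perm (Fin n)) :
    mOf (f ∘ π) = mOf f :=
  Subtype.ext (Multiset.coe_eq_coe.mpr (π.ofFn_comp_perm f))

lemma card_fiber_eq {α : Type*} [DecidableEq α] {n : ℕ} (f : Fin n → α) (a : α) :
    Fintype.card {k // f k = a} = Multiset.count a ↑(List.ofFn f) := by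
  rw [Fintype.card_subtype]
  have h1 : (↑(List.ofFn f) : Multiset α) = Multiset.map f Finset.univ.val := by
    rw [List.ofFn_eq_map]
    rfl
  rw [h1, Multiset.count_map]
  rw [Finset.card_filter]
  simp [Finset.card, Multiset.countP_eq_card_filter, eq_comm]

lemma exists_comp_perm_eq {α : Type*} [DecidableEq α] {n : ℕ} {f g : Fin n → α}
    (h : mOf f = mOf g) : ∃ π : Equiv.Perm (Fin n), f ∘ π = g := by
  have hm : (↑(List.ofFn f) : Multiset α) = ↑(List.ofFn g) := congrArg Subtype.val h
  have hcard : ∀ a : α, Fintype.card {k // g k = a} = Fintype.card {k // f k = a} := by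
    intro a; rw [card_fiber_eq, card_fiber_eq, hm]
  refine ⟨Equiv.ofFiberEquiv (f := g) (g := f)
      (fun a => Fintype.equivOfCardEq (hcard a)), funext fun k => ?_⟩
  exact Equiv.ofFiberEquiv_map (fun a => Fintype.equivOfCardEq (hcard a)) k

lemma ofFn_get_of_length {α : Type*} {n : ℕ} (l : List α) (h : l.length = n) :
    List.ofFn (fun k : Fin n => l.get ⟨k, h ▸ k.2⟩) = l := by
  subst h; exact List.ofFn_get l

/-- A canonical tuple representing a `Sym`. -/
noncomputable def tRepr {α : Type*} {n : ℕ} (m : Sym α n) : Fin n → α :=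
  fun k => m.1.toList.get ⟨k, by rw [Multiset.length_toList, m.2]; exact k.2⟩

lemma mOf_tRepr {α : Type*} {n : ℕ} (m : Sym α n) : mOf (tRepr m) = m := by
  refine Subtype.ext ?_
  show (↑(List.ofFn (tRepr m)) : Multiset α) = m.1
  have h : m.1.toList.length = n := by rw [Multiset.length_toList, m.2]
  have : List.ofFn (tRepr m) = m.1.toList := ofFn_get_of_length m.1.toList h
  rw [this, Multiset.coe_toList]

end DPComp

/-- The degree-`n` divided power module of the free module `ι →₀ B`: free on multisets
of basis elements of cardinality `n`. -/
abbrev DividedPowerModule (B : Type*) [CommRing B] (ι : Type*) (n : ℕ) :=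
  Sym ι n →₀ B

/-- The divided `n`-th power `u^{[n]}` of an element `u` of the free module `ι →₀ B`,
expanded in the multiset basis: `u^{[n]} = Σ_{|m| = n} (Π_i u_i^{m(i)}) e_m`. -/
noncomputable def dividedPower {B : Type*} [CommRing B] {ι : Type*} [DecidableEq ι]
    (n : ℕ) (u : ι →₀ B) : DividedPowerModule B ι n :=
  ∑ m ∈ u.support.sym n,
    Finsupp.single m (∏ i ∈ (m : Multiset ι).toFinset, u i ^ (m : Multiset ι).count i)

/-- The column algebra on a set `S`: the free module on columns `[a // b]`, `a b ∈ S`,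
with product `[b' // c] ∘ [a // b] = δ_{b,b'} [a // c]`; here `u` is the outer factor. -/
noncomputable def colMul {B : Type*} [CommRing B] {S : Type*} [DecidableEq S]
    (u v : S × S →₀ B) : S × S →₀ B :=
  u.sum fun p x => v.sum fun q y =>
    if q.2 = p.1 then Finsupp.single (q.1, p.2) (x * y) else 0

namespace DPComp

set_option linter.unusedSectionVars false

variable {B : Type*} [CommRing B] {S : Type*} [Fintype S] [DecidableEq S] {n : ℕ}

noncomputable def phiM : (Sym (S × S) n →₀ B) →ₗ[B] ((Fin n → S × S) →₀ B) where
  toFun x := ∑ f : Fin n → S × S, Finsupp.single f (x (mOf f))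
  map_add' x y := by
    simp only [Finsupp.add_apply, Finsupp.single_add, Finset.sum_add_distrib]
  map_smul' c x := by
    simp only [Finsupp.smul_apply, Finsupp.smul_single, RingHom.id_apply, Finset.smul_sum]

lemma phiM_apply (x : Sym (S × S) n →₀ B) (f : Fin n → S × S) :
    phiM x f = x (mOf f) := by
  classical
  simp only [phiM, LinearMap.coe_mk, AddHom.coe_mk]
  show (∑ f' : Fin n → S × S, Finsupp.single f' (x (mOf f'))) f = x (mOf f)
  rw [Finset.sum_apply']
  simp [Finsupp.single_apply]

noncomputable def psiM : ((Fin n → S × S) →₀ B) →ₗ[B] (Sym (S × S) n →₀ B) where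
  toFun t := ∑ f : Fin n → S × S,
    Finsupp.single (mOf f) (if f = tRepr (mOf f) then t f else 0)
  map_add' t s := by
    rw [← Finset.sum_add_distrib]
    refine Finset.sum_congr rfl fun f _ => ?_
    rw [← Finsupp.single_add]
    congr 1
    simp only [Finsupp.add_apply]
    split_ifs <;> simp
  map_smul' c t := by
    rw [RingHom.id_apply, Finset.smul_sum]
    refine Finset.sum_congr rfl fun f _ => ?_
    rw [Finsupp.smul_single]
    congr 1
    simp only [Finsupp.smul_apply]
    split_ifs <;> simp

lemma psiM_apply (t : (Fin n → S × S) →₀ B) (m : Sym (S × S) n) :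
    psiM t m = t (tRepr m) := by
  classical
  simp only [psiM, LinearMap.coe_mk, AddHom.coe_mk]
  rw [Finset.sum_apply']
  rw [Finset.sum_eq_single (tRepr m)]
  · simp [mOf_tRepr, Finsupp.single_apply]
  · intro f _ hf
    rw [Finsupp.single_apply]
    split_ifs with h1 h2
    · exact absurd (h2.trans (by rw [h1])) hf
    · rfl
    · rfl
  · intro h; exact absurd (Finset.mem_univ _) h

lemma psiM_phiM (x : Sym (S × S) n →₀ B) : psiM (phiM x) = x := by
  ext m
  rw [psiM_apply, phiM_apply, mOf_tRepr]

/-- Symmetric elements of the tensor power. -/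
def IsSymF (t : (Fin n → S × S) →₀ B) : Prop :=
  ∀ f g : Fin n → S × S, mOf f = mOf g → t f = t g

lemma phiM_isSymF (x : Sym (S × S) n →₀ B) : IsSymF (phiM x) := by
  intro f g hfg
  rw [phiM_apply, phiM_apply, hfg]

lemma phiM_psiM_of_isSymF {t : (Fin n → S × S) →₀ B} (ht : IsSymF t) :
    phiM (psiM t) = t := by
  ext f
  rw [phiM_apply, psiM_apply]
  exact ht _ _ (by rw [mOf_tRepr])

noncomputable def tmulFun (x y : (Fin n → S × S) →₀ B) : (Fin n → S × S) →₀ B :=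
  ∑ f : Fin n → S × S, ∑ g : Fin n → S × S,
    if ∀ k, (g k).2 = (f k).1 then
      Finsupp.single (fun k => ((g k).1, (f k).2)) (x f * y g) else 0

lemma tmulFun_apply (x y : (Fin n → S × S) →₀ B) (h : Fin n → S × S) :
    tmulFun x y h =
      ∑ e : Fin n → S, x (fun k => (e k, (h k).2)) * y (fun k => ((h k).1, e k)) := by
  classical
  rw [tmulFun, Finset.sum_apply']
  simp only [Finset.sum_apply']
  have key : ∀ f g : Fin n → S × S,
      ((if ∀ k, (g k).2 = (f k).1 then
          Finsupp.single (fun k => ((g k).1, (f k).2)) (x f * y g) else 0) :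
        (Fin n → S × S) →₀ B) h
      = if ((∀ k, (g k).2 = (f k).1) ∧ (fun k => ((g k).1, (f k).2)) = h) then
          x f * y g else 0 := by
    intro f g
    by_cases h1 : ∀ k, (g k).2 = (f k).1
    · rw [if_pos h1, Finsupp.single_apply]
      by_cases h2 : (fun k => ((g k).1, (f k).2)) = h
      · rw [if_pos h2, if_pos ⟨h1, h2⟩]
      · rw [if_neg h2, if_neg (fun hc => h2 hc.2)]
    · rw [if_neg h1, if_neg (fun hc => h1 hc.1), Finsupp.zero_apply]
  simp only [key]
  rw [← Fintype.sum_prod_type']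
  rw [← Finset.sum_filter]
  refine Finset.sum_nbij' (i := fun p k => (p.1 k).1)
    (j := fun e => (fun k => (e k, (h k).2), fun k => ((h k).1, e k))) ?_ ?_ ?_ ?_ ?_
  · intro p _; exact Finset.mem_univ _
  · intro e _
    simp [Finset.mem_filter]
  · rintro ⟨pf, pg⟩ hp
    simp only [Finset.mem_filter, Finset.mem_univ, true_and] at hp
    obtain ⟨h1, h2⟩ := hp
    have h2' : ∀ k, ((pg k).1, (pf k).2) = h k := fun k => congrFun h2 k
    have e1 : (fun k => ((pf k).1, (h k).2)) = pf := by
      funext k; exact Prod.ext rfl (congrArg Prod.snd (h2' k)).symm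
    have e2 : (fun k => ((h k).1, (pf k).1)) = pg := by
      funext k; exact Prod.ext (congrArg Prod.fst (h2' k)).symm (h1 k).symm
    exact Prod.ext e1 e2
  · intro e _; rfl
  · rintro ⟨pf, pg⟩ hp
    simp only [Finset.mem_filter, Finset.mem_univ, true_and] at hp
    obtain ⟨h1, h2⟩ := hp
    have h2' : ∀ k, ((pg k).1, (pf k).2) = h k := fun k => congrFun h2 k
    have e1 : (fun k => ((pf k).1, (h k).2)) = pf := by
      funext k; exact Prod.ext rfl (congrArg Prod.snd (h2' k)).symm
    have e2 : (fun k => ((h k).1, (pf k).1)) = pg := by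
      funext k; exact Prod.ext (congrArg Prod.fst (h2' k)).symm (h1 k).symm
    show x pf * y pg = x (fun k => ((pf k).1, (h k).2)) * y (fun k => ((h k).1, (pf k).1))
    rw [e1, e2]

lemma colMul_apply (u v : S × S →₀ B) (r : S × S) :
    colMul u v r = ∑ s : S, u (s, r.2) * v (r.1, s) := by
  classical
  have h1 : colMul u v = ∑ p : S × S, ∑ q : S × S,
      (if q.2 = p.1 then Finsupp.single (q.1, p.2) (u p * v q) else 0 :
        S × S →₀ B) := by
    rw [colMul, Finsupp.sum_fintype]
    · refine Finset.sum_congr rfl fun p _ => ?_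
      rw [Finsupp.sum_fintype]
      intro q; split_ifs <;> simp
    · intro p
      rw [Finsupp.sum_fintype]
      · refine Finset.sum_eq_zero fun q _ => ?_
        split_ifs <;> simp
      · intro q; split_ifs <;> simp
  rw [h1, Finset.sum_apply']
  simp only [Finset.sum_apply']
  have key : ∀ p q : S × S,
      ((if q.2 = p.1 then Finsupp.single (q.1, p.2) (u p * v q) else 0 :
        S × S →₀ B)) r
      = if (q.2 = p.1 ∧ ((q.1 : S), p.2) = r) then u p * v q else 0 := by
    intro p q
    by_cases h1 : q.2 = p.1
    · rw [if_pos h1, Finsupp.single_apply]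
      by_cases h2 : ((q.1 : S), p.2) = r
      · rw [if_pos h2, if_pos ⟨h1, h2⟩]
      · rw [if_neg h2, if_neg (fun hc => h2 hc.2)]
    · rw [if_neg h1, if_neg (fun hc => h1 hc.1), Finsupp.zero_apply]
  simp only [key]
  rw [← Fintype.sum_prod_type']
  rw [← Finset.sum_filter]
  refine Finset.sum_nbij' (i := fun p => p.1.1)
    (j := fun s => ((s, r.2), (r.1, s))) ?_ ?_ ?_ ?_ ?_
  · intro p _; exact Finset.mem_univ _
  · intro s _
    simp [Finset.mem_filter]
  · rintro ⟨⟨a, b⟩, ⟨c, d⟩⟩ hp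
    simp only [Finset.mem_filter, Finset.mem_univ, true_and] at hp
    obtain ⟨h1, h2⟩ := hp
    subst h2
    simp only at h1 ⊢
    simp [h1]
  · intro s _; rfl
  · rintro ⟨⟨a, b⟩, ⟨c, d⟩⟩ hp
    simp only [Finset.mem_filter, Finset.mem_univ, true_and] at hp
    obtain ⟨h1, h2⟩ := hp
    subst h2
    simp only at h1 ⊢
    rw [h1]

lemma dividedPower_apply' (u : S × S →₀ B) (m : Sym (S × S) n) :
    dividedPower n u m
      = ∏ i ∈ (m : Multiset (S × S)).toFinset, u i ^ (m : Multiset (S × S)).count i := by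
  classical
  rw [dividedPower, Finset.sum_apply']
  simp only [Finsupp.single_apply]
  rw [Finset.sum_ite_eq' (u.support.sym n) m]
  split_ifs with hm
  · rfl
  · symm
    rw [Finset.mem_sym_iff] at hm
    push_neg at hm
    obtain ⟨a, ham, ha⟩ := hm
    refine Finset.prod_eq_zero (Multiset.mem_toFinset.mpr ham) ?_
    rw [Finsupp.notMem_support_iff] at ha
    rw [ha]
    exact zero_pow (Multiset.count_pos.mpr ham).ne'

lemma dividedPower_mOf (u : S × S →₀ B) (f : Fin n → S × S) :
    dividedPower n u (mOf f) = ∏ k, u (f k) := by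
  rw [dividedPower_apply']
  have hc : ((mOf f : Sym (S × S) n) : Multiset (S × S)) = ↑(List.ofFn f) := rfl
  rw [hc, ← Finset.prod_multiset_map_count]
  rw [Multiset.map_coe, Multiset.prod_coe, List.map_ofFn, List.prod_ofFn]
  rfl

/-- Multiplicativity on divided powers, at the tensor level. -/
lemma tmulFun_dividedPower (u v : S × S →₀ B) :
    tmulFun (phiM (dividedPower n u)) (phiM (dividedPower n v))
      = phiM (dividedPower n (colMul u v)) := by
  ext h
  rw [tmulFun_apply, phiM_apply, dividedPower_mOf]
  simp only [phiM_apply, dividedPower_mOf]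
  have hr : ∀ k : Fin n, colMul u v (h k) = ∑ s : S, u (s, (h k).2) * v ((h k).1, s) :=
    fun k => colMul_apply u v (h k)
  calc
    ∑ e : Fin n → S, (∏ k, u (e k, (h k).2)) * ∏ k, v ((h k).1, e k)
        = ∑ e : Fin n → S, ∏ k, (u (e k, (h k).2) * v ((h k).1, e k)) := by
          refine Finset.sum_congr rfl fun e _ => ?_
          rw [← Finset.prod_mul_distrib]
    _ = ∏ k, ∑ s : S, u (s, (h k).2) * v ((h k).1, s) := by
          rw [Finset.prod_univ_sum]
          rw [Fintype.piFinset_univ]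
    _ = ∏ k, colMul u v (h k) := by
          refine Finset.prod_congr rfl fun k _ => (hr k).symm

lemma isSymF_tmulFun {x y : (Fin n → S × S) →₀ B} (hx : IsSymF x) (hy : IsSymF y) :
    IsSymF (tmulFun x y) := by
  intro f g hfg
  obtain ⟨π, hπ⟩ := exists_comp_perm_eq hfg
  subst hπ
  rw [tmulFun_apply, tmulFun_apply]
  refine Fintype.sum_equiv (Equiv.arrowCongr π.symm (Equiv.refl S)) _ _ fun e => ?_
  have hE : ∀ k, (Equiv.arrowCongr π.symm (Equiv.refl S)) e k = e (π k) := by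
    intro k; simp [Equiv.arrowCongr]
  have hx' : x (fun k => (e k, (f k).2))
      = x (fun k => (e (π k), (f (π k)).2)) := by
    refine hx _ _ ?_
    exact (mOf_comp_perm (fun k => (e k, (f k).2)) π).symm
  have hy' : y (fun k => ((f k).1, e k))
      = y (fun k => ((f (π k)).1, e (π k))) := by
    refine hy _ _ ?_
    exact (mOf_comp_perm (fun k => ((f k).1, e k)) π).symm
  have hEe : ((Equiv.arrowCongr π.symm (Equiv.refl S)) e : Fin n → S)
      = fun k => e (π k) := by
    funext k; exact hE k
  rw [hEe]
  exact congrArg₂ (· * ·) hx' hy'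

lemma tmulFun_assoc (x y z : (Fin n → S × S) →₀ B) :
    tmulFun (tmulFun x y) z = tmulFun x (tmulFun y z) := by
  ext h
  rw [tmulFun_apply, tmulFun_apply]
  simp only [tmulFun_apply]
  simp only [Finset.sum_mul, Finset.mul_sum]
  rw [Finset.sum_comm]
  refine Finset.sum_congr rfl fun e _ => ?_
  refine Finset.sum_congr rfl fun e' _ => ?_
  rw [mul_assoc]

lemma tmulFun_add_left (x x' y : (Fin n → S × S) →₀ B) :
    tmulFun (x + x') y = tmulFun x y + tmulFun x' y := by
  ext h
  simp only [tmulFun_apply, Finsupp.add_apply]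
  rw [← Finset.sum_add_distrib]
  refine Finset.sum_congr rfl fun e _ => ?_
  rw [add_mul]

lemma tmulFun_add_right (x y y' : (Fin n → S × S) →₀ B) :
    tmulFun x (y + y') = tmulFun x y + tmulFun x y' := by
  ext h
  simp only [tmulFun_apply, Finsupp.add_apply]
  rw [← Finset.sum_add_distrib]
  refine Finset.sum_congr rfl fun e _ => ?_
  rw [mul_add]

lemma tmulFun_smul_left (c : B) (x y : (Fin n → S × S) →₀ B) :
    tmulFun (c • x) y = c • tmulFun x y := by
  ext h
  simp only [tmulFun_apply, Finsupp.smul_apply, smul_eq_mul, Finset.mul_sum]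
  refine Finset.sum_congr rfl fun e _ => ?_
  ring

lemma tmulFun_smul_right (c : B) (x y : (Fin n → S × S) →₀ B) :
    tmulFun x (c • y) = c • tmulFun x y := by
  ext h
  simp only [tmulFun_apply, Finsupp.smul_apply, smul_eq_mul, Finset.mul_sum]
  refine Finset.sum_congr rfl fun e _ => ?_
  ring

/-- The composition on the divided power module. -/
noncomputable def compL :
    (Sym (S × S) n →₀ B) →ₗ[B] (Sym (S × S) n →₀ B) →ₗ[B] (Sym (S × S) n →₀ B) :=
  LinearMap.mk₂ B (fun x y => psiM (tmulFun (phiM x) (phiM y)))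
    (fun x x' y => by
      show psiM (tmulFun (phiM (x + x')) (phiM y)) = _
      rw [map_add, tmulFun_add_left, map_add])
    (fun c x y => by
      show psiM (tmulFun (phiM (c • x)) (phiM y)) = _
      rw [map_smul, tmulFun_smul_left, map_smul])
    (fun x y y' => by
      show psiM (tmulFun (phiM x) (phiM (y + y'))) = _
      rw [map_add, tmulFun_add_right, map_add])
    (fun c x y => by
      show psiM (tmulFun (phiM x) (phiM (c • y))) = _
      rw [map_smul, tmulFun_smul_right, map_smul])

lemma compL_apply (x y : Sym (S × S) n →₀ B) :
    compL x y = psiM (tmulFun (phiM x) (phiM y)) := rfl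

end DPComp

/-- the rule `u^{[n]} ∘ v^{[n]} = (u ∘ v)^{[n]}` on pure divided powers
extends to a well-defined bilinear associative composition on `Γ^n(A)`, `A` the column
algebra. -/
theorem dividedPower_composition_exists {B : Type*} [CommRing B]
    {S : Type*} [Fintype S] [DecidableEq S] (n : ℕ) :
    ∃ comp : DividedPowerModule B (S × S) n →ₗ[B]
        DividedPowerModule B (S × S) n →ₗ[B] DividedPowerModule B (S × S) n,
      (∀ u v : S × S →₀ B,
        comp (dividedPower n u) (dividedPower n v) = dividedPower n (colMul u v)) ∧
      (∀ x y z : DividedPowerModule B (S × S) n,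
        comp (comp x y) z = comp x (comp y z)) := by
  classical
  refine ⟨DPComp.compL, fun u v => ?_, fun x y z => ?_⟩
  · rw [DPComp.compL_apply, DPComp.tmulFun_dividedPower, DPComp.psiM_phiM]
  · rw [DPComp.compL_apply, DPComp.compL_apply, DPComp.compL_apply, DPComp.compL_apply]
    rw [DPComp.phiM_psiM_of_isSymF
      (DPComp.isSymF_tmulFun (DPComp.phiM_isSymF x) (DPComp.phiM_isSymF y))]
    rw [DPComp.phiM_psiM_of_isSymF
      (DPComp.isSymF_tmulFun (DPComp.phiM_isSymF y) (DPComp.phiM_isSymF z))]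
    rw [DPComp.tmulFun_assoc]
end

section
/- Let A_n map a maze P (a multi-set of labelled passages) to Σ over multi-sets A with support P and |A| = n of Π_{p: x→y in P} (label p)^{deg_A p} · [x//y]^{[deg_A p]} in the multi-set category MSet_n. Then A_n respects the labyrinth relation: A_n(P ∪ {passage a+b from u to v}) = A_n(P ∪ {passage a}) + A_n(P ∪ {passage b}) + A_n(P ∪ {passages a and b}). -/
open Finset

section Aux
variable {Γ : Type*} [CommRing Γ]

lemma aux_filter_sum {k : ℕ} (S : Finset (Fin k → ℕ)) (F G : (Fin k → ℕ) → Γ)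
    (h1 : ∀ g, (∀ i, g i ≠ 0) → F g = G g)
    (h2 : ∀ g, ¬ (∀ i, g i ≠ 0) → G g = 0) :
    ∑ g ∈ S.filter (fun g => ∀ i, g i ≠ 0), F g = ∑ g ∈ S, G g := by
  rw [Finset.sum_filter]
  refine Finset.sum_congr rfl fun g _ => ?_
  by_cases h : ∀ i, g i ≠ 0
  · rw [if_pos h, h1 g h]
  · rw [if_neg h, h2 g h]

lemma aux_cons_sum {k n : ℕ} (F : (Fin (k+1) → ℕ) → Γ) :
    ∑ g ∈ Finset.Nat.antidiagonalTuple (k+1) n, F g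
      = ∑ p ∈ Finset.HasAntidiagonal.antidiagonal n,
          ∑ g ∈ Finset.Nat.antidiagonalTuple k p.2, F (Fin.cons p.1 g) := by
  rw [Finset.sum_sigma']
  refine (Finset.sum_nbij' (fun x => Fin.cons x.1.1 x.2)
    (fun g => ⟨(g 0, ∑ i, g (Fin.succ i)), Fin.tail g⟩) ?_ ?_ ?_ ?_ ?_).symm
  · rintro ⟨⟨m, r⟩, g⟩ hx
    simp only [Finset.mem_sigma, Finset.HasAntidiagonal.mem_antidiagonal,
      Finset.Nat.mem_antidiagonalTuple] at hx ⊢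
    rw [Fin.sum_cons, hx.2, hx.1]
  · intro g hg
    simp only [Finset.Nat.mem_antidiagonalTuple] at hg
    simp only [Finset.mem_sigma, Finset.HasAntidiagonal.mem_antidiagonal,
      Finset.Nat.mem_antidiagonalTuple]
    exact ⟨by rw [← hg, Fin.sum_univ_succ], rfl⟩
  · rintro ⟨⟨m, r⟩, g⟩ hx
    simp only [Finset.mem_sigma, Finset.HasAntidiagonal.mem_antidiagonal,
      Finset.Nat.mem_antidiagonalTuple] at hx
    simp [Fin.tail_cons, hx.2]
  · intro g hg
    exact Fin.cons_self_tail g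
  · rintro ⟨⟨m, r⟩, g⟩ hx
    rfl

lemma aux_assoc (n : ℕ) (F G H : ℕ → Γ) :
    ∑ p ∈ Finset.HasAntidiagonal.antidiagonal n,
        (∑ q ∈ Finset.HasAntidiagonal.antidiagonal p.1, F q.1 * G q.2) * H p.2
      = ∑ p ∈ Finset.HasAntidiagonal.antidiagonal n,
          F p.1 * ∑ q ∈ Finset.HasAntidiagonal.antidiagonal p.2, G q.1 * H q.2 := by
  simp_rw [Finset.sum_mul, Finset.mul_sum]
  rw [Finset.sum_sigma', Finset.sum_sigma']
  refine Finset.sum_nbij' (fun x => ⟨(x.2.1, x.2.2 + x.1.2), (x.2.2, x.1.2)⟩)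
    (fun x => ⟨(x.1.1 + x.2.1, x.2.2), (x.1.1, x.2.1)⟩) ?_ ?_ ?_ ?_ ?_
  · rintro ⟨⟨m, r⟩, ⟨i, j⟩⟩ hx
    simp only [Finset.mem_sigma, Finset.HasAntidiagonal.mem_antidiagonal, and_true] at hx ⊢
    omega
  · rintro ⟨⟨i, s⟩, ⟨j, r⟩⟩ hx
    simp only [Finset.mem_sigma, Finset.HasAntidiagonal.mem_antidiagonal, and_true] at hx ⊢
    omega
  · rintro ⟨⟨m, r⟩, ⟨i, j⟩⟩ hx
    simp only [Finset.mem_sigma, Finset.HasAntidiagonal.mem_antidiagonal] at hx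
    simp only [Sigma.mk.inj_iff, Prod.mk.injEq, heq_eq_eq, and_true]
    obtain ⟨h1, h2⟩ := hx
    omega
  · rintro ⟨⟨i, s⟩, ⟨j, r⟩⟩ hx
    simp only [Finset.mem_sigma, Finset.HasAntidiagonal.mem_antidiagonal] at hx
    simp only [Sigma.mk.inj_iff, Prod.mk.injEq, heq_eq_eq, and_true, true_and]
    obtain ⟨h1, h2⟩ := hx
    omega
  · rintro ⟨⟨m, r⟩, ⟨i, j⟩⟩ hx
    simp [mul_assoc]

variable {B X Y : Type*} [CommRing B] [Algebra B Γ]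

/-- the summand column `[x//y]^{[m]}` weighted by label, zero at multiplicity 0 -/
def colF (col : X × Y → ℕ → Γ) (xy : X × Y) (c : B) (m : ℕ) : Γ :=
  if m = 0 then 0 else c ^ m • col xy m

/-- the unfiltered Ariadne sum -/
def mazeSum (col : X × Y → ℕ → Γ) (L : List ((X × Y) × B)) (r : ℕ) : Γ :=
  ∑ g ∈ Finset.Nat.antidiagonalTuple L.length r,
    ∏ i, (if g i = 0 then 0 else (L.get i).2 ^ g i • col (L.get i).1 (g i))

lemma prod_smul_fin {ι : Type*} (s : Finset ι) (c : ι → B) (f : ι → Γ) :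
    ∏ i ∈ s, c i • f i = (∏ i ∈ s, c i) • ∏ i ∈ s, f i := by
  induction s using Finset.cons_induction with
  | empty => simp
  | cons j s hj ih =>
      rw [Finset.prod_cons, Finset.prod_cons, Finset.prod_cons, ih, smul_mul_smul_comm]

lemma mazeSum_cons (col : X × Y → ℕ → Γ) (xy : X × Y) (c : B)
    (L : List ((X × Y) × B)) (r : ℕ) :
    mazeSum col ((xy, c) :: L) r
      = ∑ p ∈ Finset.HasAntidiagonal.antidiagonal r, colF col xy c p.1 * mazeSum col L p.2 := by
  unfold mazeSum
  simp only [List.length_cons]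
  rw [aux_cons_sum]
  refine Finset.sum_congr rfl fun p hp => ?_
  rw [Finset.mul_sum]
  refine Finset.sum_congr rfl fun g hg => ?_
  rw [Fin.prod_univ_succ]
  rfl

end Aux

/-- the Ariadne assignment
`A_n(P) = Σ_{#A = P, |A| = n} Π_{p : x→y ∈ P} (label p)^{deg_A p} [x//y]^{[deg_A p]}`
(here a maze is a list of labelled passages and a multi-set `A` supported on `P` is a
positive multiplicity tuple summing to `n`, the columns `[x//y]^{[m]}` living in a
commutative algebra satisfying the divided-power relation
`[c]^{[i]}·[c]^{[j]} = binom(i+j,i)·[c]^{[i+j]}`) respects the labyrinth relation: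
`A_n(P ∪ {a+b}) = A_n(P ∪ {a}) + A_n(P ∪ {b}) + A_n(P ∪ {a, b})`. -/
theorem ariadne_respects_additivity {B Γ X Y : Type*} [CommRing B] [CommRing Γ]
    [Algebra B Γ]
    (col : X × Y → ℕ → Γ)
    (hcol : ∀ (c : X × Y) (i j : ℕ),
      col c i * col c j = (Nat.choose (i + j) i : Γ) * col c (i + j))
    (n : ℕ) (An : List ((X × Y) × B) → Γ)
    (hAn : ∀ ℓ : List ((X × Y) × B), An ℓ =
      ∑ g ∈ (Finset.Nat.antidiagonalTuple ℓ.length n).filter (fun g => ∀ i, g i ≠ 0),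
        (∏ i, (ℓ.get i).2 ^ g i) • ∏ i, col (ℓ.get i).1 (g i))
    (u : X) (v : Y) (a b : B) (ℓ : List ((X × Y) × B)) :
    An (((u, v), a + b) :: ℓ) =
      An (((u, v), a) :: ℓ) + An (((u, v), b) :: ℓ) +
        An (((u, v), a) :: ((u, v), b) :: ℓ) := by
  classical
  have hS : ∀ L : List ((X × Y) × B), An L = mazeSum col L n := by
    intro L
    rw [hAn]
    refine aux_filter_sum _ _ _ ?_ ?_
    · intro g hg
      rw [← prod_smul_fin]
      exact Finset.prod_congr rfl fun i _ => (if_neg (hg i)).symm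
    · intro g hg
      push_neg at hg
      obtain ⟨i, hi⟩ := hg
      exact Finset.prod_eq_zero (Finset.mem_univ i) (if_pos hi)
  -- splitting of the divided power of a sum
  have hsplit : ∀ m : ℕ,
      colF col (u, v) (a + b) m
        = colF col (u, v) a m + colF col (u, v) b m
            + ∑ q ∈ Finset.HasAntidiagonal.antidiagonal m,
                colF col (u, v) a q.1 * colF col (u, v) b q.2 := by
    intro m
    by_cases hm : m = 0
    · subst hm
      simp [colF]
    · have h0m : ((0 : ℕ), m) ∈ Finset.HasAntidiagonal.antidiagonal m := by simp
      have hm0' : (m, (0 : ℕ)) ∈ (Finset.HasAntidiagonal.antidiagonal m).erase (0, m) := by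
        simp [Prod.ext_iff, hm]
      have key : ∀ q ∈ ((Finset.HasAntidiagonal.antidiagonal m).erase (0, m)).erase (m, 0),
          ((m.choose q.1 • (a ^ q.1 * b ^ q.2)) • col (u, v) m : Γ)
            = colF col (u, v) a q.1 * colF col (u, v) b q.2 := by
        rintro ⟨i, j⟩ hq
        simp only [Finset.mem_erase, Finset.HasAntidiagonal.mem_antidiagonal, Prod.mk.injEq,
          ne_eq, not_and] at hq
        obtain ⟨hq1, hq2, hq3⟩ := hq
        have hi : i ≠ 0 := fun h => hq2 (by omega) (by omega)
        have hj : j ≠ 0 := fun h => hq1 (by omega) (by omega)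
        rw [colF, colF, if_neg hi, if_neg hj, smul_mul_smul_comm, hcol, hq3,
          ← nsmul_eq_mul, smul_comm (a ^ i * b ^ j) (m.choose i), smul_assoc]
      rw [colF, colF, colF, if_neg hm, if_neg hm, if_neg hm,
        Commute.add_pow' (Commute.all a b), Finset.sum_smul]
      rw [← Finset.add_sum_erase _ _ h0m, ← Finset.add_sum_erase _ _ hm0',
        Finset.sum_congr rfl key]
      rw [← Finset.add_sum_erase _
          (fun q => colF col (u, v) a q.1 * colF col (u, v) b q.2) h0m,
        ← Finset.add_sum_erase _
          (fun q => colF col (u, v) a q.1 * colF col (u, v) b q.2) hm0']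
      simp only [colF, hm, if_true, if_false, ite_true, ite_false,
        Nat.choose_zero_right, Nat.choose_self, pow_zero, one_mul, mul_one,
        one_smul, zero_mul, mul_zero, zero_add, if_pos, reduceIte]
      abel
  rw [hS, hS, hS, hS]
  simp only [mazeSum_cons]
  rw [← aux_assoc n (colF col (u, v) a) (colF col (u, v) b) (mazeSum col ℓ),
    ← Finset.sum_add_distrib, ← Finset.sum_add_distrib]
  refine Finset.sum_congr rfl fun p _ => ?_
  rw [hsplit p.1, add_mul, add_mul]
end

section
/- In the rational labyrinth category ℚ ⊗ Laby^n, the identity maze on a finite set X decomposes as I_X = Σ_{S : #S = I_X, |S| = n} (1/deg S) · S, where the sum is over multi-sets S of cardinality n supported on the identity passages of X, and the summands (1/deg S)·S are orthogonal idempotents: (1/deg S)S ∘ (1/deg T)T = 0 if S ≠ T and = (1/deg S)S if S = T. -/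
open Finset

namespace LabySplit

variable {X B E : Type*}

/-- The binomial coefficient `binom(r, k)` in a `ℚ`-algebra `B`. -/
noncomputable def bc [CommRing B] [Algebra ℚ B] (r : B) (k : ℕ) : B :=
  ((k.factorial : ℚ)⁻¹) • ∏ i ∈ Finset.range k, (r - (i : B))

/-- A maze on the finite set `X` (an endomaze `X → X`), given as a list of labelled
passages; a passage `((x, y), b)` runs from `x` to `y` and carries the label `b`. -/
abbrev Maze (X B : Type*) := List ((X × X) × B)

variable [Fintype X] [DecidableEq X] [CommRing B] [Algebra ℚ B]

/-- The identity maze `I_X`: one passage `x → x` labelled `1` for each `x ∈ X`. -/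
noncomputable def idMaze (X B : Type*) [Fintype X] [CommRing B] : Maze X B :=
  (Finset.univ : Finset X).toList.map fun x => ((x, x), (1 : B))

/-- The maze associated to a multi-set `S` of cardinality `n` supported in the identity
passages of `X`: each `x ∈ S` contributes a passage `x → x` labelled `1`, with
multiplicity. -/
noncomputable def symMaze {n : ℕ} (S : Sym X n) : Maze X B :=
  (S : Multiset X).toList.map fun x => ((x, x), (1 : B))

/-- The degree `deg S = Π (multiplicities)!` of a multi-set supported in `I_X`. -/
def symDeg {n : ℕ} (S : Sym X n) : ℕ :=
  ∏ x : X, ((S : Multiset X).count x).factorial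


section Aux
set_option linter.unusedSectionVars false
open Polynomial


lemma vand_zero {E : Type*} [Ring E] (ψ : ℚ →+* E) (N : ℕ) (v : Fin N → E)
    (h : ∀ q : ℚ, ∑ k : Fin N, ψ (q ^ (k : ℕ)) * v k = 0) : ∀ k, v k = 0 := by
  intro k
  set V : Matrix (Fin N) (Fin N) ℚ := Matrix.vandermonde (fun i => (i : ℚ)) with hV
  have hdet : IsUnit V.det := by
    rw [hV, Matrix.det_vandermonde]
    refine (Finset.prod_ne_zero_iff.2 fun i _ => Finset.prod_ne_zero_iff.2 fun j hj => ?_).isUnit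
    have h1 : i < j := Finset.mem_Ioi.1 hj
    have h2 : ((i : ℕ) : ℚ) < ((j : ℕ) : ℚ) := by exact_mod_cast Fin.lt_iff_val_lt_val.1 h1
    exact sub_ne_zero.2 (ne_of_gt h2)
  have hWV : V⁻¹ * V = 1 := Matrix.nonsing_inv_mul V hdet
  have key : ∀ j, ∑ i : Fin N, ψ (V⁻¹ k i * V i j) * v j = (if k = j then v j else 0) := by
    intro j
    rw [← Finset.sum_mul, ← map_sum]
    have h3 : ∑ i : Fin N, V⁻¹ k i * V i j = (1 : Matrix (Fin N) (Fin N) ℚ) k j := by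
      rw [← hWV]; rfl
    rw [h3, Matrix.one_apply]
    split <;> simp
  calc v k = ∑ j : Fin N, (if k = j then v j else 0) := by simp
    _ = ∑ j : Fin N, ∑ i : Fin N, ψ (V⁻¹ k i * V i j) * v j :=
        Finset.sum_congr rfl fun j _ => (key j).symm
    _ = ∑ i : Fin N, ψ (V⁻¹ k i) * ∑ j : Fin N, ψ (((i : ℚ)) ^ (j : ℕ)) * v j := by
        rw [Finset.sum_comm]
        refine Finset.sum_congr rfl fun i _ => ?_
        rw [Finset.mul_sum]
        refine Finset.sum_congr rfl fun j _ => ?_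
        rw [map_mul, mul_assoc, hV, Matrix.vandermonde_apply]
    _ = 0 := by
        refine Finset.sum_eq_zero fun i _ => ?_
        rw [h (i : ℚ), mul_zero]



variable {α β γ : Type*}

/-- Equivalences intertwining `f` and `g` correspond to families of fiberwise bijections. -/
def compFiberEquiv (f : α → γ) (g : β → γ) :
    {e : α ≃ β // ∀ i, g (e i) = f i} ≃ ∀ x : γ, ({i // f i = x} ≃ {j // g j = x}) where
  toFun e x :=
    { toFun := fun i => ⟨e.1 i.1, by rw [e.2]; exact i.2⟩
      invFun := fun j => ⟨e.1.symm j.1, by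
        have := e.2 (e.1.symm j.1); rw [e.1.apply_symm_apply] at this; rw [← this]; exact j.2⟩
      left_inv := fun i => Subtype.ext (e.1.symm_apply_apply i.1)
      right_inv := fun j => Subtype.ext (e.1.apply_symm_apply j.1) }
  invFun F :=
    ⟨{ toFun := fun i => (F (f i) ⟨i, rfl⟩).1
       invFun := fun j => ((F (g j)).symm ⟨j, rfl⟩).1
       left_inv := by
         have helper : ∀ (x : γ) (j : {k : β // g k = x}),
             (((F (g j.1)).symm ⟨j.1, rfl⟩) : α) = (((F x).symm j : {i // f i = x}) : α) := by
           rintro x ⟨j, hj⟩; subst hj; rfl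
         intro i
         have h2 := helper (f i) (F (f i) ⟨i, rfl⟩)
         simp only [h2, Equiv.symm_apply_apply]
       right_inv := by
         have helper : ∀ (x : γ) (i : {k : α // f k = x}),
             ((F (f i.1) ⟨i.1, rfl⟩ : {j // g j = f i.1}) : β) = ((F x i : {j // g j = x}) : β) := by
           rintro x ⟨i, hi⟩; subst hi; rfl
         intro j
         have h2 := helper (g j) ((F (g j)).symm ⟨j, rfl⟩)
         simp only [h2, Equiv.apply_symm_apply] },
     fun i => (F (f i) ⟨i, rfl⟩).2⟩
  left_inv e := Subtype.ext (Equiv.ext fun i => rfl)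
  right_inv F := by
    funext x
    refine Equiv.ext fun i => ?_
    obtain ⟨i, hi⟩ := i
    subst hi
    rfl

lemma card_fiber [Fintype α] [DecidableEq γ] (h : α → γ) (x : γ) :
    Fintype.card {i // h i = x} = Multiset.count x (Multiset.map h Finset.univ.val) := by
  rw [Fintype.card_subtype, Multiset.count_map, Finset.card, Finset.filter_val]
  congr 1
  exact Multiset.filter_congr fun i _ => by constructor <;> exact Eq.symm

variable [Fintype α] [Fintype β] [DecidableEq α] [DecidableEq β] [DecidableEq γ] [Fintype γ]

lemma card_interEquiv (f : α → γ) (g : β → γ) :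
    Fintype.card {e : α ≃ β // ∀ i, g (e i) = f i} =
      if Multiset.map f Finset.univ.val = Multiset.map g Finset.univ.val then
        ∏ x : γ, (Fintype.card {i // f i = x}).factorial else 0 := by
  split_ifs with hm
  · rw [Fintype.card_congr (compFiberEquiv f g), Fintype.card_pi]
    refine Finset.prod_congr rfl fun x _ => ?_
    have hcard : Fintype.card {i // f i = x} = Fintype.card {j // g j = x} := by
      rw [card_fiber f, card_fiber g, hm]
    exact Fintype.card_equiv (Fintype.equivOfCardEq hcard)
  · rw [Fintype.card_eq_zero_iff]
    constructor
    rintro ⟨e, he⟩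
    apply hm
    have h2 : Multiset.map (⇑e) Finset.univ.val = Finset.univ.val := by
      simpa using congrArg Finset.val (Finset.map_univ_equiv e)
    calc Multiset.map f Finset.univ.val
        = Multiset.map (g ∘ ⇑e) Finset.univ.val := by
          congr 1; funext i; exact (he i).symm
      _ = Multiset.map g (Multiset.map (⇑e) Finset.univ.val) := (Multiset.map_map g ⇑e _).symm
      _ = Multiset.map g Finset.univ.val := by rw [h2]



lemma card_graphs (f : α → γ) (g : β → γ) (hc : Fintype.card α = Fintype.card β) :
    (((Finset.univ : Finset (Finset (α × β))).filter fun K =>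
        ((∀ ij ∈ K, g ij.2 = f ij.1) ∧ (∀ i, ∃ j, (i, j) ∈ K) ∧ (∀ j, ∃ i, (i, j) ∈ K)) ∧
          K.card = Fintype.card α)).card
      = Fintype.card {e : α ≃ β // ∀ i, g (e i) = f i} := by
  classical
  set Φ : {e : α ≃ β // ∀ i, g (e i) = f i} → Finset (α × β) :=
    fun e => Finset.univ.image fun i => (i, e.1 i) with hΦ
  have hΦinj : Function.Injective Φ := by
    intro e e' h
    apply Subtype.ext; apply Equiv.ext; intro i
    have h1 : (i, e.1 i) ∈ Φ e' := by
      rw [← h]; exact Finset.mem_image_of_mem _ (Finset.mem_univ i)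
    simp only [hΦ, Finset.mem_image, Prod.mk.injEq] at h1
    obtain ⟨i', _, rfl, h3⟩ := h1
    exact h3.symm
  have himg : ((Finset.univ : Finset (Finset (α × β))).filter fun K =>
        ((∀ ij ∈ K, g ij.2 = f ij.1) ∧ (∀ i, ∃ j, (i, j) ∈ K) ∧ (∀ j, ∃ i, (i, j) ∈ K)) ∧
          K.card = Fintype.card α) = Finset.univ.image Φ := by
    ext K
    simp only [Finset.mem_filter, Finset.mem_univ, true_and, Finset.mem_image]
    constructor
    · rintro ⟨⟨hmatch, hs1, hs2⟩, hcard⟩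
      -- fst is injective on K
      have him1 : K.image Prod.fst = Finset.univ :=
        Finset.eq_univ_of_forall fun i => (hs1 i).elim fun j hj =>
          Finset.mem_image.2 ⟨(i, j), hj, rfl⟩
      have him2 : K.image Prod.snd = Finset.univ :=
        Finset.eq_univ_of_forall fun j => (hs2 j).elim fun i hi =>
          Finset.mem_image.2 ⟨(i, j), hi, rfl⟩
      have hinj1 : Set.InjOn Prod.fst (K : Set (α × β)) := by
        rw [← Finset.card_image_iff, him1, Finset.card_univ, hcard]
      have hinj2 : Set.InjOn Prod.snd (K : Set (α × β)) := by
        rw [← Finset.card_image_iff, him2, Finset.card_univ, hcard, hc]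
      have hexu : ∀ i : α, ∃! p, p ∈ K ∧ (p : α × β).1 = i := by
        intro i
        obtain ⟨j, hj⟩ := hs1 i
        exact ⟨(i, j), ⟨hj, rfl⟩, fun p ⟨hp, hp1⟩ => hinj1 hp hj (by rw [hp1])⟩
      set e0 : α → β := fun i => (K.choose (fun p => p.1 = i) (hexu i)).2 with he0
      have hmem : ∀ i, (i, e0 i) ∈ K := by
        intro i
        have h1 := K.choose_mem (fun p => p.1 = i) (hexu i)
        have h2 := K.choose_property (fun p => p.1 = i) (hexu i)
        have : K.choose (fun p => p.1 = i) (hexu i) = (i, e0 i) := by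
          rw [he0]; exact Prod.ext h2 rfl
        rwa [this] at h1
      have hinj : Function.Injective e0 := by
        intro i i' hii
        have h3 : ((i, e0 i) : α × β) = (i', e0 i') :=
          hinj2 (hmem i) (hmem i') (by simpa using hii)
        simpa using congrArg Prod.fst h3
      have hbij : Function.Bijective e0 :=
        (Fintype.bijective_iff_injective_and_card e0).2 ⟨hinj, hc⟩
      refine ⟨⟨Equiv.ofBijective e0 hbij, fun i => hmatch _ (hmem i)⟩, ?_⟩
      · simp only [hΦ]
        refine Finset.eq_of_subset_of_card_le ?_ ?_
        · intro p hp
          rw [Finset.mem_image] at hp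
          obtain ⟨i, _, rfl⟩ := hp
          exact hmem i
        · rw [Finset.card_image_of_injective _ (fun i i' h => by
            simpa using congrArg Prod.fst h : Function.Injective fun i =>
              (i, (Equiv.ofBijective e0 hbij) i)), Finset.card_univ, hcard]
    · rintro ⟨e, rfl⟩
      refine ⟨⟨?_, ?_, ?_⟩, ?_⟩
      · rintro ij hij
        simp only [hΦ, Finset.mem_image, Prod.mk.injEq] at hij
        obtain ⟨i, _, rfl, rfl⟩ := hij
        exact e.2 i
      · intro i
        exact ⟨e.1 i, Finset.mem_image_of_mem _ (Finset.mem_univ i)⟩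
      · intro j
        refine ⟨e.1.symm j, ?_⟩
        have : (fun i => (i, e.1 i)) (e.1.symm j) = (e.1.symm j, j) := by
          simp
        rw [← this]
        exact Finset.mem_image_of_mem _ (Finset.mem_univ _)
      · simp only [hΦ]
        rw [Finset.card_image_of_injective _ (fun i i' h => by
          simpa using congrArg Prod.fst h), Finset.card_univ]
  rw [himg, Finset.card_image_of_injective _ hΦinj, Finset.card_univ]



/-- The rational "choose" polynomial. -/
noncomputable def pc (k : ℕ) : Polynomial ℚ :=
  Polynomial.C ((k.factorial : ℚ)⁻¹) * ∏ j ∈ Finset.range k, (Polynomial.X - Polynomial.C (j : ℚ))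

lemma pc_prod_monic (k : ℕ) :
    (∏ j ∈ Finset.range k, (Polynomial.X - Polynomial.C (j : ℚ))).Monic :=
  monic_prod_of_monic _ _ fun _ _ => monic_X_sub_C _

lemma factinv_ne (k : ℕ) : ((k.factorial : ℚ))⁻¹ ≠ 0 := by
  simp [Nat.factorial_ne_zero]

lemma pc_natDegree (k : ℕ) : (pc k).natDegree = k := by
  rw [pc, natDegree_C_mul (factinv_ne k),
    natDegree_prod_of_monic (Finset.range k) (fun j => Polynomial.X - Polynomial.C (j : ℚ)) (fun _ _ => monic_X_sub_C _)]
  have h1 : ∀ x : ℕ, (Polynomial.X - Polynomial.C (x : ℚ)).natDegree = 1 :=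
    fun x => natDegree_X_sub_C _
  rw [Finset.sum_congr rfl fun x _ => h1 x]
  simp

lemma pc_ne_zero (k : ℕ) : pc k ≠ 0 :=
  mul_ne_zero (by simpa using factinv_ne k) (pc_prod_monic k).ne_zero

lemma pc_leadingCoeff (k : ℕ) : (pc k).leadingCoeff = (k.factorial : ℚ)⁻¹ := by
  rw [pc, leadingCoeff_mul, leadingCoeff_C, (pc_prod_monic k).leadingCoeff, mul_one]

lemma bc_apply {B : Type*} [CommRing B] [Algebra ℚ B] (q : ℚ) (k : ℕ) :
    bc (algebraMap ℚ B q) k = algebraMap ℚ B ((pc k).eval q) := by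
  simp [bc, pc, Algebra.smul_def, map_prod, Polynomial.eval_prod]


lemma card_graphs' (f : α → γ) (g : β → γ) (hc : Fintype.card α = Fintype.card β)
    (A : Finset (Finset (α × β)))
    (hA : ∀ K, K ∈ A ↔ (((∀ ij ∈ K, g ij.2 = f ij.1) ∧ (∀ i, ∃ j, (i, j) ∈ K) ∧
      (∀ j, ∃ i, (i, j) ∈ K)) ∧ K.card = Fintype.card α)) :
    A.card = Fintype.card {e : α ≃ β // ∀ i, g (e i) = f i} := by
  have hAeq : A = ((Finset.univ : Finset (Finset (α × β))).filter fun K =>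
      ((∀ ij ∈ K, g ij.2 = f ij.1) ∧ (∀ i, ∃ j, (i, j) ∈ K) ∧ (∀ j, ∃ i, (i, j) ∈ K)) ∧
        K.card = Fintype.card α) := by
    ext K
    rw [hA, Finset.mem_filter]
    simp
  rw [hAeq]
  exact card_graphs f g hc

lemma map_get_univ {δ : Type*} (u : List δ) :
    Multiset.map u.get Finset.univ.val = (u : Multiset δ) := by
  rw [Fin.univ_def]
  change Multiset.map u.get ↑(List.finRange u.length) = _
  rw [Multiset.map_coe, List.map_get_finRange]

end Aux

set_option maxHeartbeats 1000000

/-- in `ℚ ⊗ Laby^n`, i.e. in any model `H` of its defining relations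
(passages labelled `0` kill a maze; additivity of labels; mazes with more than `n`
passages vanish; the numerical relation IV; the homogeneity relation `a ⊡ P = a^n P`;
composition of mazes given by the sum over sub-multi-sets of the cartesian product
with surjective projections; invariance under reordering of passages), the identity
maze decomposes as `I_X = Σ_{#S = I_X, |S| = n} (1/deg S)·S`, and the summands
`(1/deg S)·S` are orthogonal idempotents. -/
theorem idMaze_decomposition [Ring E] [Algebra B E] (n : ℕ)
    (H : Maze X B → E)
    (hperm : ∀ {l l' : Maze X B}, l.Perm l' → H l = H l')
    (h0 : ∀ (u v : X) (l : Maze X B), H (((u, v), (0 : B)) :: l) = 0)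
    (hadd : ∀ (u v : X) (x y : B) (l : Maze X B),
      H (((u, v), x + y) :: l) =
        H (((u, v), x) :: l) + H (((u, v), y) :: l) +
          H (((u, v), x) :: ((u, v), y) :: l))
    (hIII : ∀ l : Maze X B, n < l.length → H l = 0)
    (hIV : ∀ l : Maze X B, H l =
      ∑ g ∈ (((Finset.range (n + 1)).biUnion fun m =>
              Finset.Nat.antidiagonalTuple l.length m).filter fun g => ∀ i, g i ≠ 0),
        (∏ i, bc (l.get i).2 (g i)) •
          H ((List.finRange l.length).flatMap fun i =>
              List.replicate (g i) ((l.get i).1, (1 : B))))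
    (hV : ∀ (a : B) (l : Maze X B),
      H (l.map fun p => (p.1, a * p.2)) = a ^ n • H l)
    (hcomp : ∀ P Q : Maze X B, H P * H Q =
      ∑ K ∈ (Finset.univ : Finset (Finset (Fin P.length × Fin Q.length))).filter
          (fun K => (∀ ij ∈ K, (Q.get ij.2).1.2 = (P.get ij.1).1.1) ∧
            (∀ i, ∃ j, (i, j) ∈ K) ∧ (∀ j, ∃ i, (i, j) ∈ K)),
        H (K.toList.map fun ij =>
          (((Q.get ij.2).1.1, (P.get ij.1).1.2), (P.get ij.1).2 * (Q.get ij.2).2))) :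
    H (idMaze X B) =
      (∑ S ∈ (Finset.univ : Finset (Sym X n)).filter
          (fun S : Sym X n => (S : Multiset X).toFinset = Finset.univ),
        algebraMap ℚ B ((symDeg S : ℚ)⁻¹) • H (symMaze S)) ∧
    (∀ S ∈ (Finset.univ : Finset (Sym X n)).filter
          (fun S : Sym X n => (S : Multiset X).toFinset = Finset.univ),
      ∀ T ∈ (Finset.univ : Finset (Sym X n)).filter
          (fun S : Sym X n => (S : Multiset X).toFinset = Finset.univ),
      (algebraMap ℚ B ((symDeg S : ℚ)⁻¹) • H (symMaze S)) *
          (algebraMap ℚ B ((symDeg T : ℚ)⁻¹) • H (symMaze T)) =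
        if S = T then algebraMap ℚ B ((symDeg S : ℚ)⁻¹) • H (symMaze S) else 0) := by
  classical
  set ψ : ℚ →+* E := (algebraMap B E).comp (algebraMap ℚ B) with hψdef
  have hsmul : ∀ (r : ℚ) (w : E), algebraMap ℚ B r • w = ψ r * w := fun r w => by
    rw [Algebra.smul_def]; rfl
  have hcentral : ∀ (r : ℚ) (w : E), w * ψ r = ψ r * w := fun r w =>
    (Algebra.commutes (algebraMap ℚ B r) w).symm
  have Hlist : ∀ {l l' : List X}, (l : Multiset X) = (l' : Multiset X) →
      H (l.map fun x => ((x, x), (1 : B))) = H (l'.map fun x => ((x, x), (1 : B))) :=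
    fun h => hperm ((Multiset.coe_eq_coe.1 h).map _)
  -- ### Part 2 core computation
  have part2core : ∀ S T : Sym X n, H (symMaze S) * H (symMaze (B := B) T) =
      (if (S : Multiset X) = (T : Multiset X) then symDeg S else 0) • H (symMaze S) := by
    intro S T
    set P : Maze X B := symMaze S with hPdef
    set Q : Maze X B := symMaze T with hQdef
    have hPlen : P.length = n := by
      rw [hPdef, symMaze, List.length_map, Multiset.length_toList]; exact S.prop
    have hQlen : Q.length = n := by
      rw [hQdef, symMaze, List.length_map, Multiset.length_toList]; exact T.prop
    set Xf : Fin P.length → X := fun i => (P.get i).1.1 with hXfdef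
    set Yf : Fin Q.length → X := fun j => (Q.get j).1.1 with hYfdef
    have hPget : ∀ i : Fin P.length, P.get i = ((Xf i, Xf i), (1 : B)) := by
      intro i
      simp only [hXfdef, hPdef, symMaze, List.get_eq_getElem, List.getElem_map]
    have hQget : ∀ j : Fin Q.length, Q.get j = ((Yf j, Yf j), (1 : B)) := by
      intro j
      simp only [hYfdef, hQdef, symMaze, List.get_eq_getElem, List.getElem_map]
    have hXmap : Multiset.map Xf Finset.univ.val = (S : Multiset X) := by
      set e : Fin P.length ≃ Fin (S : Multiset X).toList.length :=
        finCongr (by rw [hPdef, symMaze, List.length_map]) with hedef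
      have h2 : Multiset.map Xf Finset.univ.val
          = Multiset.map (fun j => (S : Multiset X).toList.get j)
              (Multiset.map (⇑e) Finset.univ.val) := by
        rw [Multiset.map_map]
        apply Multiset.map_congr rfl
        intro i _
        simp [hXfdef, hPdef, symMaze, List.get_eq_getElem, List.getElem_map, hedef]
      have h3 : Multiset.map (⇑e) Finset.univ.val = Finset.univ.val := by
        simpa using congrArg Finset.val (Finset.map_univ_equiv e)
      rw [h2, h3]
      rw [show (fun j => (S : Multiset X).toList.get j) = (S : Multiset X).toList.get from rfl]
      rw [map_get_univ, Multiset.coe_toList]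
    have hYmap : Multiset.map Yf Finset.univ.val = (T : Multiset X) := by
      set e : Fin Q.length ≃ Fin (T : Multiset X).toList.length :=
        finCongr (by rw [hQdef, symMaze, List.length_map]) with hedef
      have h2 : Multiset.map Yf Finset.univ.val
          = Multiset.map (fun j => (T : Multiset X).toList.get j)
              (Multiset.map (⇑e) Finset.univ.val) := by
        rw [Multiset.map_map]
        apply Multiset.map_congr rfl
        intro i _
        simp [hYfdef, hQdef, symMaze, List.get_eq_getElem, List.getElem_map, hedef]
      have h3 : Multiset.map (⇑e) Finset.univ.val = Finset.univ.val := by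
        simpa using congrArg Finset.val (Finset.map_univ_equiv e)
      rw [h2, h3]
      rw [show (fun j => (T : Multiset X).toList.get j) = (T : Multiset X).toList.get from rfl]
      rw [map_get_univ, Multiset.coe_toList]
    have hcond_card : ∀ K : Finset (Fin P.length × Fin Q.length),
        (∀ i, ∃ j, (i, j) ∈ K) → n ≤ K.card := by
      intro K hK
      have him : K.image Prod.fst = Finset.univ :=
        Finset.eq_univ_of_forall fun i =>
          (hK i).elim fun j hj => Finset.mem_image.2 ⟨(i, j), hj, rfl⟩
      calc n = (Finset.univ : Finset (Fin P.length)).card := by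
            rw [Finset.card_univ, Fintype.card_fin, hPlen]
        _ = (K.image Prod.fst).card := by rw [him]
        _ ≤ K.card := Finset.card_image_le
    rw [hcomp P Q]
    have hsub : (Finset.univ : Finset (Finset (Fin P.length × Fin Q.length))).filter
          (fun K => ((∀ ij ∈ K, (Q.get ij.2).1.2 = (P.get ij.1).1.1) ∧
            (∀ i, ∃ j, (i, j) ∈ K) ∧ (∀ j, ∃ i, (i, j) ∈ K)) ∧ K.card = n) ⊆
        (Finset.univ : Finset (Finset (Fin P.length × Fin Q.length))).filter
          (fun K => (∀ ij ∈ K, (Q.get ij.2).1.2 = (P.get ij.1).1.1) ∧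
            (∀ i, ∃ j, (i, j) ∈ K) ∧ (∀ j, ∃ i, (i, j) ∈ K)) :=
      by
        intro K hK
        rw [Finset.mem_filter] at hK ⊢
        exact ⟨hK.1, hK.2.1⟩
    rw [← Finset.sum_subset hsub (by
      intro K hK hKn
      simp only [Finset.mem_filter, Finset.mem_univ, true_and] at hK hKn
      have hne : K.card ≠ n := fun h => hKn ⟨hK, h⟩
      have hlt : n < K.card := lt_of_le_of_ne (hcond_card K hK.2.1) (Ne.symm hne)
      apply hIII
      rw [List.length_map, Finset.length_toList]
      exact hlt)]
    have hterm : ∀ K ∈ (Finset.univ : Finset (Finset (Fin P.length × Fin Q.length))).filter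
          (fun K => ((∀ ij ∈ K, (Q.get ij.2).1.2 = (P.get ij.1).1.1) ∧
            (∀ i, ∃ j, (i, j) ∈ K) ∧ (∀ j, ∃ i, (i, j) ∈ K)) ∧ K.card = n),
        H (K.toList.map fun ij =>
          (((Q.get ij.2).1.1, (P.get ij.1).1.2), (P.get ij.1).2 * (Q.get ij.2).2)) = H P := by
      intro K hK
      simp only [Finset.mem_filter, Finset.mem_univ, true_and] at hK
      obtain ⟨⟨hmatch, hs1, hs2⟩, hcard⟩ := hK
      have him : K.image Prod.fst = Finset.univ :=
        Finset.eq_univ_of_forall fun i =>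
          (hs1 i).elim fun j hj => Finset.mem_image.2 ⟨(i, j), hj, rfl⟩
      have hinj1 : Set.InjOn Prod.fst (K : Set (Fin P.length × Fin Q.length)) := by
        rw [← Finset.card_image_iff, him, Finset.card_univ, Fintype.card_fin, hcard]; exact hPlen
      have hstep1 : (K.toList.map fun ij =>
            (((Q.get ij.2).1.1, (P.get ij.1).1.2), (P.get ij.1).2 * (Q.get ij.2).2))
          = (K.toList.map fun ij => Xf ij.1).map (fun x => ((x, x), (1 : B))) := by
        rw [List.map_map]
        apply List.map_congr_left
        intro ij hij
        have hmem : ij ∈ K := by rwa [Finset.mem_toList] at hij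
        have h4 := hmatch ij hmem
        simp only [hPget, hQget] at h4
        simp only [hPget, hQget, Function.comp_apply, one_mul]
        rw [h4]
      rw [hstep1]
      refine Hlist ?_
      calc ((K.toList.map fun ij => Xf ij.1 : List X) : Multiset X)
          = Multiset.map (fun ij => Xf ij.1) K.val := by
            rw [← Multiset.map_coe, Finset.coe_toList]
        _ = Multiset.map Xf (Multiset.map Prod.fst K.val) := by rw [Multiset.map_map]; rfl
        _ = Multiset.map Xf Finset.univ.val := by
            rw [← Finset.image_val_of_injOn hinj1, him]
        _ = (S : Multiset X) := hXmap
        _ = ((S : Multiset X).toList : Multiset X) := (Multiset.coe_toList _).symm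
    rw [Finset.sum_congr rfl hterm, Finset.sum_const]
    congr 1
    -- count the graphs
    have hc : Fintype.card (Fin P.length) = Fintype.card (Fin Q.length) := by
      rw [Fintype.card_fin, Fintype.card_fin, hPlen, hQlen]
    have hpred : ∀ K : Finset (Fin P.length × Fin Q.length),
        (((∀ ij ∈ K, (Q.get ij.2).1.2 = (P.get ij.1).1.1) ∧
            (∀ i, ∃ j, (i, j) ∈ K) ∧ (∀ j, ∃ i, (i, j) ∈ K)) ∧ K.card = n) ↔
        (((∀ ij ∈ K, Yf ij.2 = Xf ij.1) ∧
            (∀ i, ∃ j, (i, j) ∈ K) ∧ (∀ j, ∃ i, (i, j) ∈ K)) ∧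
          K.card = Fintype.card (Fin P.length)) := by
      intro K
      have h7 : ∀ ij : Fin P.length × Fin Q.length,
          ((Q.get ij.2).1.2 = (P.get ij.1).1.1) ↔ (Yf ij.2 = Xf ij.1) := by
        intro ij; rw [hPget, hQget]
      have h8 : (K.card = n) ↔ (K.card = Fintype.card (Fin P.length)) := by
        rw [Fintype.card_fin]
        exact ⟨fun h => h.trans hPlen.symm, fun h => h.trans hPlen⟩
      constructor
      · rintro ⟨⟨h1, h2, h3⟩, h4⟩
        exact ⟨⟨fun ij hij => (h7 ij).1 (h1 ij hij), h2, h3⟩, h8.1 h4⟩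
      · rintro ⟨⟨h1, h2, h3⟩, h4⟩
        exact ⟨⟨fun ij hij => (h7 ij).2 (h1 ij hij), h2, h3⟩, h8.2 h4⟩
    have h6 := card_interEquiv Xf Yf
    have h7 : (∏ x : X, (Fintype.card {i // Xf i = x}).factorial) = symDeg S := by
      rw [symDeg]
      exact Finset.prod_congr rfl fun x _ => by rw [card_fiber, hXmap]
    rw [hXmap, hYmap, h7] at h6
    refine (card_graphs' Xf Yf hc _ ?_).trans h6
    intro K
    rw [Finset.mem_filter]
    simp only [Finset.mem_univ, true_and]
    exact hpred K
  -- ### Part 2 : orthogonal idempotents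
  have part2 : ∀ S ∈ (Finset.univ : Finset (Sym X n)).filter
        (fun S : Sym X n => (S : Multiset X).toFinset = Finset.univ),
      ∀ T ∈ (Finset.univ : Finset (Sym X n)).filter
        (fun S : Sym X n => (S : Multiset X).toFinset = Finset.univ),
      (algebraMap ℚ B ((symDeg S : ℚ)⁻¹) • H (symMaze S)) *
          (algebraMap ℚ B ((symDeg T : ℚ)⁻¹) • H (symMaze T)) =
        if S = T then algebraMap ℚ B ((symDeg S : ℚ)⁻¹) • H (symMaze S) else 0 := by
    intro S _ T _
    have hd : (symDeg S : ℚ) ≠ 0 := by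
      rw [symDeg]
      push_cast
      exact Finset.prod_ne_zero_iff.2 fun x _ => by
        exact_mod_cast Nat.cast_ne_zero.2 (Nat.factorial_ne_zero _)
    rw [hsmul, hsmul]
    have hshuffle : ∀ (r r' : ℚ) (w w' : E),
        (ψ r * w) * (ψ r' * w') = ψ (r * r') * (w * w') := by
      intro r r' w w'
      calc (ψ r * w) * (ψ r' * w') = ψ r * ((w * ψ r') * w') := by
            rw [mul_assoc, mul_assoc]
        _ = ψ r * ((ψ r' * w) * w') := by rw [hcentral]
        _ = ψ r * (ψ r' * (w * w')) := by rw [mul_assoc]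
        _ = ψ (r * r') * (w * w') := by rw [map_mul, mul_assoc]
    rw [hshuffle, part2core S T]
    by_cases hST : S = T
    · subst hST
      rw [if_pos rfl, if_pos rfl]
      have h9 : (symDeg S • H (symMaze (B := B) S) : E) = ψ (symDeg S : ℚ) * H (symMaze S) := by
        rw [nsmul_eq_mul, ← map_natCast ψ (symDeg S)]
      rw [h9, ← mul_assoc, ← map_mul]
      congr 2
      field_simp
    · have hST2 : ¬((S : Multiset X) = (T : Multiset X)) := fun h => hST (Subtype.ext h)
      rw [if_neg hST, if_neg hST2, zero_smul, mul_zero]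

  refine ⟨?_, part2⟩
  -- ### Part 1 : decomposition of the identity maze
  have hl₀nd : (Finset.univ : Finset X).toList.Nodup := Finset.nodup_toList _
  have hl₀mem : ∀ x : X, x ∈ (Finset.univ : Finset X).toList := fun x =>
    Finset.mem_toList.2 (Finset.mem_univ x)
  set l₀ : List X := (Finset.univ : Finset X).toList with hl₀def
  set mg : (Fin l₀.length → ℕ) → Multiset X :=
    fun g => Multiset.bind Finset.univ.val fun i => Multiset.replicate (g i) (l₀.get i) with hmgdef
  set Gset : Finset (Fin l₀.length → ℕ) :=
    ((Finset.range (n + 1)).biUnion fun m => Finset.Nat.antidiagonalTuple l₀.length m).filter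
      (fun g => ∀ i, g i ≠ 0) with hGdef
  set u : (Fin l₀.length → ℕ) → E :=
    fun g => H ((mg g).toList.map fun x => ((x, x), (1 : B))) with hudef
  have hcard_mg : ∀ g : Fin l₀.length → ℕ, Multiset.card (mg g) = ∑ i, g i := by
    intro g
    rw [hmgdef]
    dsimp only
    rw [Multiset.card_bind]
    have h4 : (Multiset.map (Multiset.card ∘ fun i => Multiset.replicate (g i) (l₀.get i))
        Finset.univ.val) = Multiset.map g Finset.univ.val :=
      Multiset.map_congr rfl fun b _ => by simp [Multiset.card_replicate]
    rw [h4]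
    rfl
  have hcount : ∀ (g : Fin l₀.length → ℕ) (i : Fin l₀.length),
      Multiset.count (l₀.get i) (mg g) = g i := by
    intro g i
    rw [hmgdef]
    dsimp only
    rw [Multiset.count_bind]
    have h4 : (Multiset.map (fun b => Multiset.count (l₀.get i)
          (Multiset.replicate (g b) (l₀.get b))) Finset.univ.val)
        = Multiset.map (fun b => if i = b then g b else 0) Finset.univ.val := by
      refine Multiset.map_congr rfl fun b _ => ?_
      rw [Multiset.count_replicate]
      by_cases h : i = b
      · subst h; simp
      · rw [if_neg (fun hh => h ((hl₀nd.get_inj_iff.1 hh).symm)), if_neg h]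
    rw [h4]
    have h5 : (Multiset.map (fun b => if i = b then g b else 0) Finset.univ.val).sum
        = ∑ b, if i = b then g b else 0 := rfl
    rw [h5, Finset.sum_ite_eq]
    simp
  -- the main polynomial identity, for every rational q
  have main : ∀ q : ℚ, ψ (q ^ n) * H (idMaze X B) =
      ∑ g ∈ Gset, ψ ((∏ i : Fin l₀.length, pc (g i)).eval q) * u g := by
    intro q
    have hVq := hV (algebraMap ℚ B q) (idMaze X B)
    rw [hIV ((idMaze X B).map fun p => (p.1, algebraMap ℚ B q * p.2))] at hVq
    have hL : ψ (q ^ n) * H (idMaze X B) = (algebraMap ℚ B q) ^ n • H (idMaze X B) := by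
      rw [Algebra.smul_def, ← map_pow]
      rfl
    rw [hL, ← hVq]
    set l₁ : Maze X B := (idMaze X B).map fun p => (p.1, algebraMap ℚ B q * p.2) with hl₁def
    have hlen : l₁.length = l₀.length := by
      rw [hl₁def, List.length_map, idMaze, List.length_map, ← hl₀def]
    have hget2 : ∀ i : Fin l₁.length, (l₁.get i).2 = algebraMap ℚ B q := by
      intro i
      simp [hl₁def, idMaze, List.get_eq_getElem, List.getElem_map]
    have hget1 : ∀ i : Fin l₁.length, (l₁.get i).1 =
        (l₀.get (Fin.cast hlen i), l₀.get (Fin.cast hlen i)) := by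
      intro i
      simp [hl₁def, idMaze, List.get_eq_getElem, List.getElem_map, hl₀def]
    refine Finset.sum_nbij' (fun g => g ∘ Fin.cast hlen.symm) (fun g => g ∘ Fin.cast hlen)
      ?_ ?_ (fun g _ => rfl) (fun g _ => rfl) ?_
    · intro g hg
      simp only [Finset.mem_filter, Finset.mem_biUnion, Finset.mem_range,
        Finset.Nat.mem_antidiagonalTuple] at hg
      obtain ⟨⟨m, hm, hsum⟩, hne⟩ := hg
      simp only [hGdef, Finset.mem_filter, Finset.mem_biUnion, Finset.mem_range,
        Finset.Nat.mem_antidiagonalTuple]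
      refine ⟨⟨m, hm, ?_⟩, fun i => hne _⟩
      rw [← hsum]
      exact (Fintype.sum_equiv (finCongr hlen) _ _ (fun i => rfl)).symm
    · intro g hg
      simp only [hGdef, Finset.mem_filter, Finset.mem_biUnion, Finset.mem_range,
        Finset.Nat.mem_antidiagonalTuple] at hg
      obtain ⟨⟨m, hm, hsum⟩, hne⟩ := hg
      simp only [Finset.mem_filter, Finset.mem_biUnion, Finset.mem_range,
        Finset.Nat.mem_antidiagonalTuple]
      refine ⟨⟨m, hm, ?_⟩, fun i => hne _⟩
      rw [← hsum]
      exact (Fintype.sum_equiv (finCongr hlen.symm) _ _ (fun i => rfl)).symm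
    · intro g hg
      have hbc : (∏ i : Fin l₁.length, bc (l₁.get i).2 (g i))
          = algebraMap ℚ B ((∏ i : Fin l₀.length, pc ((g ∘ Fin.cast hlen.symm) i)).eval q) := by
        rw [Polynomial.eval_prod, map_prod]
        refine Fintype.prod_equiv (finCongr hlen) _ _ fun i => ?_
        rw [hget2 i, bc_apply]
        rfl
      have hHL : ((List.finRange l₁.length).flatMap fun i =>
            List.replicate (g i) ((l₁.get i).1, (1 : B)))
          = ((List.finRange l₁.length).flatMap fun i =>
              List.replicate (g i) (l₀.get (Fin.cast hlen i))).map (fun x => ((x, x), (1 : B))) := by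
        rw [List.map_flatMap]
        congr 1
        funext i
        rw [List.map_replicate, hget1 i]
      have hHcoe : (((List.finRange l₁.length).flatMap fun i =>
            List.replicate (g i) (l₀.get (Fin.cast hlen i))) : Multiset X)
          = mg (g ∘ Fin.cast hlen.symm) := by
        rw [← Multiset.coe_bind]
        simp only [Multiset.coe_replicate]
        rw [hmgdef]
        have h1 : (↑(List.finRange l₁.length) : Multiset (Fin l₁.length)) = Finset.univ.val := by
          rw [Fin.univ_def]
        rw [h1]
        have h2 : (Finset.univ.val : Multiset (Fin l₁.length)) =
            Multiset.map (⇑(finCongr hlen.symm)) Finset.univ.val := by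
          have h2' := congrArg Finset.val (Finset.map_univ_equiv (finCongr hlen.symm))
          rw [Finset.map_val] at h2'
          exact h2'.symm
        rw [h2, Multiset.bind_map]
        rfl
      rw [hbc, hsmul, hHL]
      congr 1
      rw [hudef]
      exact Hlist (hHcoe.trans (Multiset.coe_toList _).symm)
  -- degree bounds
  have hdegle : ∀ g ∈ Gset, (∏ i : Fin l₀.length, pc (g i)).natDegree ≤ n := by
    intro g hg
    simp only [hGdef, Finset.mem_filter, Finset.mem_biUnion, Finset.mem_range,
      Finset.Nat.mem_antidiagonalTuple] at hg
    obtain ⟨⟨m, hm, hsum⟩, -⟩ := hg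
    rw [Polynomial.natDegree_prod _ _ (fun i _ => pc_ne_zero (g i)),
      Finset.sum_congr rfl fun i _ => pc_natDegree _, hsum]
    omega
  -- the coefficients all vanish
  set v : Fin (n + 1) → E := fun k =>
    (if (k : ℕ) = n then H (idMaze X B) else 0) -
      ∑ g ∈ Gset, ψ ((∏ i : Fin l₀.length, pc (g i)).coeff k) * u g with hvdef
  have hvand : ∀ q : ℚ, ∑ k : Fin (n + 1), ψ (q ^ (k : ℕ)) * v k = 0 := by
    intro q
    have hexp : ∀ k : Fin (n + 1), ψ (q ^ (k : ℕ)) * v k =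
        (if (k : ℕ) = n then ψ (q ^ n) * H (idMaze X B) else 0) -
          ∑ g ∈ Gset, ψ ((∏ i : Fin l₀.length, pc (g i)).coeff k * q ^ (k : ℕ)) * u g := by
      intro k
      rw [hvdef]
      dsimp only
      rw [mul_sub, Finset.mul_sum]
      congr 1
      · split_ifs with h
        · rw [h]
        · rw [mul_zero]
      · refine Finset.sum_congr rfl fun g _ => ?_
        rw [← mul_assoc, ← map_mul, mul_comm (q ^ (k : ℕ))]
    rw [Finset.sum_congr rfl (fun k _ => hexp k), Finset.sum_sub_distrib]
    have h1 : ∑ k : Fin (n + 1), (if (k : ℕ) = n then ψ (q ^ n) * H (idMaze X B) else 0)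
        = ψ (q ^ n) * H (idMaze X B) := by
      rw [Finset.sum_eq_single (⟨n, Nat.lt_succ_self n⟩ : Fin (n + 1))]
      · simp
      · intro k _ hk
        exact if_neg (fun h => hk (Fin.ext h))
      · intro h
        exact absurd (Finset.mem_univ _) h
    have h2 : ∑ k : Fin (n + 1), ∑ g ∈ Gset,
          ψ ((∏ i : Fin l₀.length, pc (g i)).coeff k * q ^ (k : ℕ)) * u g
        = ∑ g ∈ Gset, ψ ((∏ i : Fin l₀.length, pc (g i)).eval q) * u g := by
      rw [Finset.sum_comm]
      refine Finset.sum_congr rfl fun g hg => ?_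
      rw [← Finset.sum_mul, ← map_sum]
      congr 2
      rw [Polynomial.eval_eq_sum_range' (Nat.lt_succ_of_le (hdegle g hg)) q,
        ← Fin.sum_univ_eq_sum_range]
    rw [h1, h2, main q, sub_self]
  have hvzero := vand_zero ψ (n + 1) v hvand ⟨n, Nat.lt_succ_self n⟩
  have hdecomp : H (idMaze X B) =
      ∑ g ∈ Gset, ψ ((∏ i : Fin l₀.length, pc (g i)).coeff n) * u g := by
    rw [hvdef] at hvzero
    dsimp only at hvzero
    rw [if_pos rfl, sub_eq_zero] at hvzero
    exact hvzero
  -- restrict the sum to tuples of total weight exactly n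
  set Gn : Finset (Fin l₀.length → ℕ) :=
    (Finset.Nat.antidiagonalTuple l₀.length n).filter (fun g => ∀ i, g i ≠ 0) with hGndef
  have hGnsub : Gn ⊆ Gset := by
    intro g hg
    simp only [hGndef, hGdef, Finset.mem_filter, Finset.mem_biUnion, Finset.mem_range] at hg ⊢
    exact ⟨⟨n, Nat.lt_succ_self n, hg.1⟩, hg.2⟩
  have hstep : ∑ g ∈ Gset, ψ ((∏ i : Fin l₀.length, pc (g i)).coeff n) * u g
      = ∑ g ∈ Gn, ψ (∏ i : Fin l₀.length, ((g i).factorial : ℚ)⁻¹) * u g := by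
    rw [← Finset.sum_subset hGnsub (by
      intro g hgs hgn
      simp only [hGdef, Finset.mem_filter, Finset.mem_biUnion, Finset.mem_range,
        Finset.Nat.mem_antidiagonalTuple] at hgs
      obtain ⟨⟨m, hm, hsum⟩, hne⟩ := hgs
      have hmn : m ≠ n := by
        intro h
        subst h
        apply hgn
        simp only [hGndef, Finset.mem_filter, Finset.Nat.mem_antidiagonalTuple]
        exact ⟨hsum, hne⟩
      have hlt : (∏ i : Fin l₀.length, pc (g i)).natDegree < n := by
        rw [Polynomial.natDegree_prod _ _ (fun i _ => pc_ne_zero (g i)),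
          Finset.sum_congr rfl fun i _ => pc_natDegree _, hsum]
        omega
      rw [Polynomial.coeff_eq_zero_of_natDegree_lt hlt, map_zero, zero_mul])]
    refine Finset.sum_congr rfl fun g hg => ?_
    simp only [hGndef, Finset.mem_filter, Finset.Nat.mem_antidiagonalTuple] at hg
    have hnd : (∏ i : Fin l₀.length, pc (g i)).natDegree = n := by
      rw [Polynomial.natDegree_prod _ _ (fun i _ => pc_ne_zero (g i)),
        Finset.sum_congr rfl fun i _ => pc_natDegree _]
      exact hg.1
    rw [← hnd, Polynomial.coeff_natDegree, Polynomial.leadingCoeff_prod]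
    congr 2
    exact Finset.prod_congr rfl fun i _ => pc_leadingCoeff _
  rw [hdecomp, hstep]
  -- reindex: weight-`n` tuples with nonzero entries ↔ fully supported multisets of size `n`
  have hmgcard : ∀ g ∈ Gn, Multiset.card (mg g) = n := by
    intro g hg
    simp only [hGndef, Finset.mem_filter, Finset.Nat.mem_antidiagonalTuple] at hg
    rw [hcard_mg]
    exact hg.1
  refine Finset.sum_bij' (fun g hg => (Sym.mk (mg g) (hmgcard g hg) : Sym X n))
    (fun S _ => fun i => Multiset.count (l₀.get i) (S : Multiset X)) ?_ ?_ ?_ ?_ ?_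
  · intro g hg
    simp only [hGndef, Finset.mem_filter, Finset.Nat.mem_antidiagonalTuple] at hg
    simp only [Finset.mem_filter, Finset.mem_univ, true_and]
    apply Finset.eq_univ_of_forall
    intro x
    rw [Multiset.mem_toFinset]
    obtain ⟨i, hi⟩ := List.mem_iff_get.1 (hl₀mem x)
    have hi' : l₀.get i = x := hi
    have h6 : Multiset.count (l₀.get i) (mg g) = g i := hcount g i
    have h7 : 0 < Multiset.count (l₀.get i) (mg g) := by
      rw [h6]
      have := hg.2 i
      omega
    have h8 := Multiset.count_pos.1 h7
    show x ∈ mg g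
    rwa [hi'] at h8
  · intro S hS
    simp only [Finset.mem_filter, Finset.mem_univ, true_and] at hS
    simp only [hGndef, Finset.mem_filter, Finset.Nat.mem_antidiagonalTuple]
    constructor
    · have h7 : ∑ i : Fin l₀.length, Multiset.count (l₀.get i) (S : Multiset X)
          = ∑ x : X, Multiset.count x (S : Multiset X) := by
        refine Fintype.sum_bijective (fun i => l₀.get i) ?_ _ _ (fun i => rfl)
        rw [Fintype.bijective_iff_injective_and_card]
        constructor
        · intro i j hij
          exact hl₀nd.get_inj_iff.1 hij
        · rw [Fintype.card_fin, hl₀def, Finset.length_toList, Finset.card_univ]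
      rw [h7]
      have h8 := Multiset.toFinset_sum_count_eq (S : Multiset X)
      rw [hS] at h8
      rw [h8]
      exact S.prop
    · intro i
      have h9 : l₀.get i ∈ (S : Multiset X) := by
        rw [← Multiset.mem_toFinset, hS]
        exact Finset.mem_univ _
      rw [← Multiset.count_pos] at h9
      omega
  · intro g hg
    funext i
    exact hcount g i
  · intro S hS
    apply Subtype.ext
    dsimp only
    apply Multiset.ext.2
    intro a
    obtain ⟨i, hi⟩ := List.mem_iff_get.1 (hl₀mem a)
    have hi' : l₀.get i = a := hi
    rw [← hi']
    exact hcount _ i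
  · intro g hg
    simp only [hGndef, Finset.mem_filter, Finset.Nat.mem_antidiagonalTuple] at hg
    rw [hsmul]
    have hsd : ∀ (hc : Multiset.card (mg g) = n),
        ((symDeg (Sym.mk (mg g) hc : Sym X n) : ℚ))⁻¹
        = ∏ i : Fin l₀.length, ((g i).factorial : ℚ)⁻¹ := by
      intro hc
      rw [symDeg]
      have h10 : (∏ x : X, (Multiset.count x (mg g)).factorial)
          = ∏ i : Fin l₀.length, (g i).factorial := by
        refine (Fintype.prod_bijective (fun i => l₀.get i) ?_ _ _ (fun i => by rw [hcount])).symm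
        rw [Fintype.bijective_iff_injective_and_card]
        constructor
        · intro i j hij
          exact hl₀nd.get_inj_iff.1 hij
        · rw [Fintype.card_fin, hl₀def, Finset.length_toList, Finset.card_univ]
      show ((∏ x : X, (Multiset.count x (mg g)).factorial : ℕ) : ℚ)⁻¹
        = ∏ i : Fin l₀.length, ((g i).factorial : ℚ)⁻¹
      rw [h10]
      push_cast
      rw [← Finset.prod_inv_distrib]
    rw [hsd _]
    rfl



end LabySplit
end
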